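/- arXiv:1405.1638 — 10 statements merged into one kernel-verified Lean document; each statement's English description precedes it below -/
import Mathlib

section
/- If f is a real polynomial that is weakly Hurwitz stable (non-vanishing on the open right half-plane {z : Re z > 0}), then every coefficient of f is non-negative or every coefficient of f is non-positive. -/
open Polynomial

private lemma coeff_mul_nonneg' {p q : ℝ[X]} (hp : ∀ n, 0 ≤ p.coeff n)
    (hq : ∀ n, 0 ≤ q.coeff n) (n : ℕ) : 0 ≤ (p * q).coeff n := by
  rw [coeff_mul]
  exact Finset.sum_nonneg fun x _ => mul_nonneg (hp _) (hq _)

private lemma sign_step' {p g : ℝ[X]} (hp : ∀ n, 0 ≤ p.coeff n)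
    (hg : (∀ n, 0 ≤ g.coeff n) ∨ (∀ n, g.coeff n ≤ 0)) :
    (∀ n, 0 ≤ (p * g).coeff n) ∨ (∀ n, (p * g).coeff n ≤ 0) := by
  rcases hg with hg | hg
  · exact Or.inl (coeff_mul_nonneg' hp hg)
  · refine Or.inr fun n => ?_
    have h := coeff_mul_nonneg' hp (q := -g) (fun m => by simpa using hg m) n
    simp only [mul_neg, coeff_neg] at h
    linarith

private lemma quad_coeff_nonneg {a b : ℝ} (ha : a ≤ 0) (hb : 0 ≤ b) :
    ∀ n, 0 ≤ (X ^ 2 - C a * X + C b : ℝ[X]).coeff n := by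
  intro n
  match n with
  | 0 => simp [coeff_add, coeff_sub]; linarith
  | 1 => simp [coeff_add, coeff_sub]; linarith
  | 2 => simp [coeff_add, coeff_sub, coeff_X_pow, coeff_C]
  | (m + 3) =>
    simp [coeff_add, coeff_sub, coeff_X_pow, coeff_C, coeff_X]

private lemma quad_natDegree (a b : ℝ) :
    (X ^ 2 - C a * X + C b : ℝ[X]).natDegree = 2 := by
  compute_degree!

private lemma hurwitz_key : ∀ N (f : ℝ[X]), f.natDegree ≤ N →
    (∀ z : ℂ, 0 < z.re → aeval z f ≠ 0) →
    (∀ n, 0 ≤ f.coeff n) ∨ (∀ n, f.coeff n ≤ 0) := by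
  intro N
  induction N with
  | zero =>
    intro f hdeg _
    rcases le_total 0 (f.coeff 0) with h | h
    · refine Or.inl fun n => ?_
      rcases Nat.eq_zero_or_pos n with rfl | hn
      · exact h
      · rw [coeff_eq_zero_of_natDegree_lt (lt_of_le_of_lt hdeg hn)]
    · refine Or.inr fun n => ?_
      rcases Nat.eq_zero_or_pos n with rfl | hn
      · exact h
      · rw [coeff_eq_zero_of_natDegree_lt (lt_of_le_of_lt hdeg hn)]
  | succ N ih =>
    intro f hdeg hstable
    rcases hdeg.lt_or_eq with hlt | hdeg'
    · exact ih f (Nat.lt_succ_iff.mp hlt) hstable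
    have hf0 : f ≠ 0 := by
      intro h
      exact hstable 1 (by norm_num) (by simp [h])
    have hdpos : 0 < (f.map (algebraMap ℝ ℂ)).degree := by
      rw [degree_map]
      exact natDegree_pos_iff_degree_pos.mp (by omega)
    obtain ⟨z, hz⟩ := Complex.exists_root hdpos
    have hz' : aeval z f = 0 := by rwa [aeval_def, ← eval_map]
    have hre : z.re ≤ 0 := by
      by_contra h
      exact hstable z (lt_of_not_ge h) hz'
    rcases eq_or_ne z.im 0 with him | him
    · -- real root
      have hzr : z = (z.re : ℂ) := Complex.ext rfl (by simp [him])
      have hroot : f.IsRoot z.re := by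
        have h2 : aeval ((z.re : ℝ) : ℂ) f = algebraMap ℝ ℂ (f.eval z.re) :=
          aeval_algebraMap_apply_eq_algebraMap_eval z.re f
        rw [← hzr, hz'] at h2
        exact (map_eq_zero_iff _ (algebraMap ℝ ℂ).injective).mp h2.symm
      obtain ⟨g, hg⟩ := (dvd_iff_isRoot).mpr hroot
      have hqcoeff : ∀ n, 0 ≤ (X - C z.re).coeff n := by
        intro n
        match n with
        | 0 => simp [coeff_sub]; linarith
        | 1 => simp [coeff_sub]
        | (m+2) => simp [coeff_sub, coeff_X, coeff_C]
      have hg0 : g ≠ 0 := by rintro rfl; simp [hg] at hf0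
      have hgdeg : g.natDegree ≤ N := by
        have h3 := natDegree_mul (p := X - C z.re) (X_sub_C_ne_zero z.re) hg0
        rw [← hg, natDegree_X_sub_C] at h3
        omega
      have hgstable : ∀ w : ℂ, 0 < w.re → aeval w g ≠ 0 := by
        intro w hw hw0
        exact hstable w hw (by rw [hg, map_mul, hw0, mul_zero])
      rw [hg]
      exact sign_step' hqcoeff (ih g hgdeg hgstable)
    · -- nonreal root, quadratic factor
      obtain ⟨g, hg⟩ := f.quadratic_dvd_of_aeval_eq_zero_im_ne_zero hz' him
      set q : ℝ[X] := X ^ 2 - C (2 * z.re) * X + C (‖z‖ ^ 2) with hq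
      have hqcoeff : ∀ n, 0 ≤ q.coeff n :=
        quad_coeff_nonneg (by linarith) (by positivity)
      have hqdeg : q.natDegree = 2 := quad_natDegree _ _
      have hq0 : q ≠ 0 := fun h => by simp [h] at hqdeg
      have hg0 : g ≠ 0 := by rintro rfl; simp [hg] at hf0
      have hgdeg : g.natDegree ≤ N := by
        have h3 := natDegree_mul hq0 hg0
        rw [← hg, hqdeg] at h3
        omega
      have hqz : ∀ w : ℂ, 0 < w.re → aeval w q ≠ 0 := by
        intro w hw
        have h1 := Complex.add_conj z
        have h2 := Complex.mul_conj' z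
        have key : aeval w q = (w - z) * (w - (starRingEnd ℂ) z) := by
          simp only [hq, map_add, map_sub, map_mul, map_pow, aeval_X, aeval_C,
            Complex.coe_algebraMap]
          push_cast at h1 h2 ⊢
          linear_combination w * h1 - h2
        rw [key]
        apply mul_ne_zero
        · intro h
          rw [sub_eq_zero.mp h] at hw; linarith
        · intro h
          have h4 : w.re = z.re := by rw [sub_eq_zero.mp h]; simp
          linarith
      have hgstable : ∀ w : ℂ, 0 < w.re → aeval w g ≠ 0 := by
        intro w hw hw0
        exact hstable w hw (by rw [hg, map_mul, hw0, mul_zero])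
      rw [hg]
      exact sign_step' hqcoeff (ih g hgdeg hgstable)

theorem stmt_2 (f : ℝ[X])
    (hstable : ∀ z : ℂ, 0 < z.re → aeval z f ≠ 0) :
    (∀ n, 0 ≤ f.coeff n) ∨ (∀ n, f.coeff n ≤ 0) := by
  exact hurwitz_key f.natDegree f le_rfl hstable
end

section
/- Let f(x) = x(x+2). Then the polynomial f² + f·f' + 3x(f·f'' − (f')²) equals x⁴ − 2x² − 8x, and this polynomial is not weakly Hurwitz stable; in particular, the claim that a·f² + b·f·f' + c·x(f·f'' − (f')²) is weakly Hurwitz stable for all a, b, c > 0 whenever f has only real negative zeros is false. -/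
open Polynomial

theorem stmt_3 (f : ℝ[X]) (hf : f = X * (X + C 2)) :
    (f ^ 2 + f * derivative f
        + C 3 * X * (f * derivative (derivative f) - (derivative f) ^ 2)
      = X ^ 4 - C 2 * X ^ 2 - C 8 * X) ∧
    ¬ (∀ z : ℂ, 0 < z.re → aeval z (X ^ 4 - C 2 * X ^ 2 - C 8 * X : ℝ[X]) ≠ 0) ∧
    ¬ (∀ g : ℝ[X], g ≠ 0 →
        (∀ z : ℂ, aeval z g = 0 → ∃ r : ℝ, r < 0 ∧ z = (r : ℂ)) →
        ∀ a b c : ℝ, 0 < a → 0 < b → 0 < c →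
          ∀ z : ℂ, 0 < z.re →
            aeval z (C a * g ^ 2 + C b * (g * derivative g)
              + C c * X * (g * derivative (derivative g) - (derivative g) ^ 2)) ≠ 0) := by
  refine ⟨?_, ?_, ?_⟩
  · subst hf
    simp only [derivative_mul, derivative_add, derivative_X, derivative_C, map_ofNat,
      derivative_one, derivative_ofNat, derivative_zero, map_zero]
    ring
  · intro H
    have hcont : ContinuousOn (fun x : ℝ => x ^ 4 - 2 * x ^ 2 - 8 * x) (Set.Icc 2 3) := by
      fun_prop
    have h2 : (fun x : ℝ => x ^ 4 - 2 * x ^ 2 - 8 * x) 2 ≤ 0 := by norm_num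
    have h3 : (0 : ℝ) ≤ (fun x : ℝ => x ^ 4 - 2 * x ^ 2 - 8 * x) 3 := by norm_num
    obtain ⟨r, hr, hr0⟩ := intermediate_value_Icc (by norm_num : (2:ℝ) ≤ 3) hcont
      (Set.mem_Icc.mpr ⟨h2, h3⟩)
    have hr0' : r ^ 4 - 2 * r ^ 2 - 8 * r = 0 := hr0
    have hrpos : (0:ℝ) < r := lt_of_lt_of_le (by norm_num) hr.1
    apply H (r : ℂ) (by simpa using hrpos)
    have : aeval (r : ℂ) (X ^ 4 - C 2 * X ^ 2 - C 8 * X : ℝ[X])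
        = ((r ^ 4 - 2 * r ^ 2 - 8 * r : ℝ) : ℂ) := by
      simp
    rw [this, hr0']
    norm_num
  · intro H
    have h := H (X ^ 2 + C 2 * X + C 1) ?_ ?_ 1 1 3 one_pos one_pos (by norm_num)
      (1 + Real.sqrt 2 * Complex.I) ?_
    · apply h
      have hs2 : ((Real.sqrt 2 : ℝ) : ℂ) ^ 2 = 2 := by
        norm_cast
        rw [Real.sq_sqrt] ; norm_num
      have hI : Complex.I ^ 2 = -1 := Complex.I_sq
      simp only [derivative_add, derivative_mul, derivative_pow, derivative_X, derivative_C,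
        derivative_one, derivative_ofNat, map_add, map_mul, map_sub, map_pow, aeval_X, aeval_C,
        map_one, map_zero, map_ofNat]
      push_cast
      set z : ℂ := 1 + Real.sqrt 2 * Complex.I with hz
      linear_combination ((z+1)^2 * Complex.I^2) * hs2 + (2*(z+1)^2) * hI
    · intro hzero
      have := congrArg (eval 0) hzero
      simp at this
    · intro z hz
      refine ⟨-1, by norm_num, ?_⟩
      have h1 : (z + 1) ^ 2 = 0 := by
        simp at hz
        linear_combination hz
      have h2 := pow_eq_zero_iff (n := 2) (by norm_num) |>.mp h1
      push_cast
      linear_combination h2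
    · simp
end

section
/- Let B_k denote the univariate Bell polynomials defined by B_0(x) = 1 and B_{k+1}(x) = x(B_k(x) + B_k'(x)). Then for every k ∈ ℕ, the Turán expression (B_{k+1}(x))² − B_{k+2}(x)·B_k(x) is weakly Hurwitz stable, i.e., non-zero for all complex x with Re x > 0. -/
open Polynomial

noncomputable def prS (s : Multiset ℝ) : ℝ[X] := (s.map (fun r => X + C r)).prod

lemma prS_monic (s : Multiset ℝ) : (prS s).Monic :=
  monic_multiset_prod_of_monic s _ (fun r _ => monic_X_add_C r)

lemma prS_zero : prS 0 = 1 := by simp [prS]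

lemma prS_cons (r : ℝ) (s : Multiset ℝ) : prS (r ::ₘ s) = (X + C r) * prS s := by
  simp [prS, Multiset.map_cons, Multiset.prod_cons]

lemma aeval_prS (x : ℂ) (s : Multiset ℝ) :
    aeval x (prS s) = (s.map (fun (r:ℝ) => x + (r:ℂ))).prod := by
  induction s using Multiset.induction_on with
  | empty => simp [prS_zero]
  | cons r t ih => simp [prS_cons, map_mul, ih]

lemma aeval_der_prS (x : ℂ) (s : Multiset ℝ) (hs : ∀ r ∈ s, x + (r:ℂ) ≠ 0) :
    aeval x (derivative (prS s))
      = aeval x (prS s) * (s.map (fun (r:ℝ) => (x + (r:ℂ))⁻¹)).sum := by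
  induction s using Multiset.induction_on with
  | empty => simp [prS_zero]
  | cons r t ih =>
    obtain ⟨h1, h2⟩ := Multiset.forall_mem_cons.mp hs
    have ih' := ih h2
    have hd : derivative (prS (r ::ₘ t)) = prS t + (X + C r) * derivative (prS t) := by
      rw [prS_cons, derivative_mul]; simp
    rw [hd, prS_cons]
    simp only [map_add, map_mul, aeval_X, aeval_C, Multiset.map_cons, Multiset.sum_cons, ih', Complex.coe_algebraMap]
    have : (x + (r:ℂ)) * (x + (r:ℂ))⁻¹ = 1 := mul_inv_cancel₀ h1
    field_simp

lemma aeval_der2_prS (x : ℂ) (s : Multiset ℝ) (hs : ∀ r ∈ s, x + (r:ℂ) ≠ 0) :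
    aeval x (derivative (derivative (prS s)))
      = aeval x (prS s) *
        (((s.map (fun (r:ℝ) => (x + (r:ℂ))⁻¹)).sum)^2 - (s.map (fun (r:ℝ) => ((x + (r:ℂ))^2)⁻¹)).sum) := by
  induction s using Multiset.induction_on with
  | empty => simp [prS_zero]
  | cons r t ih =>
    obtain ⟨h1, h2⟩ := Multiset.forall_mem_cons.mp hs
    have ih' := ih h2
    have ih1 := aeval_der_prS x t h2
    have hd : derivative (derivative (prS (r ::ₘ t)))
        = 2 * derivative (prS t) + (X + C r) * derivative (derivative (prS t)) := by
      rw [prS_cons]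
      simp only [derivative_mul, derivative_add, derivative_X, derivative_C, derivative_one, derivative_zero, zero_mul, zero_add]
      ring
    rw [hd, prS_cons]
    simp only [map_add, map_mul, aeval_X, aeval_C, Multiset.map_cons, Multiset.sum_cons,
      ih', ih1, map_ofNat, Complex.coe_algebraMap]
    have hu : (x + (r:ℂ)) * (x + (r:ℂ))⁻¹ = 1 := mul_inv_cancel₀ h1
    set A := aeval x (prS t)
    set S1 := (Multiset.map (fun (r:ℝ) => (x + (r:ℂ))⁻¹) t).sum
    set S2 := (Multiset.map (fun (r:ℝ) => ((x + (r:ℂ))^2)⁻¹) t).sum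
    have h2' : ((x + (r:ℂ))^2)⁻¹ = (x + (r:ℂ))⁻¹ * (x + (r:ℂ))⁻¹ := by
      rw [sq, mul_inv]
    rw [h2']
    field_simp
    ring

lemma sum_im_sign (b : ℝ) (hb : b ≠ 0) (m : Multiset ℂ)
    (h : ∀ t ∈ m, t.im * b ≤ 0 ∧ (t.im = 0 → t = 0)) :
    m.sum.im * b ≤ 0 ∧ (m.sum.im = 0 → m.sum = 0) := by
  induction m using Multiset.induction_on with
  | empty => simp
  | cons t m ih =>
    obtain ⟨⟨h1, h2⟩, h3⟩ := Multiset.forall_mem_cons.mp h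
    obtain ⟨ih1, ih2⟩ := ih h3
    rw [Multiset.sum_cons]
    constructor
    · rw [Complex.add_im, add_mul]; linarith
    · intro h0
      rw [Complex.add_im] at h0
      have hsum : t.im * b + m.sum.im * b = 0 := by
        rw [← add_mul, h0, zero_mul]
      have e1 : t.im * b = 0 ∧ m.sum.im * b = 0 := by
        constructor <;> linarith
      have ht : t.im = 0 := by
        rcases mul_eq_zero.mp e1.1 with h | h
        · exact h
        · exact absurd h hb
      have hm : m.sum.im = 0 := by
        rcases mul_eq_zero.mp e1.2 with h | h
        · exact h
        · exact absurd h hb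
      rw [h2 ht, ih2 hm, add_zero]

lemma sum_re_nonneg (m : Multiset ℂ) (h : ∀ t ∈ m, 0 ≤ t.re ∧ t.im = 0) :
    0 ≤ m.sum.re ∧ m.sum.im = 0 := by
  induction m using Multiset.induction_on with
  | empty => simp
  | cons t m ih =>
    obtain ⟨⟨h1, h2⟩, h3⟩ := Multiset.forall_mem_cons.mp h
    obtain ⟨ih1, ih2⟩ := ih h3
    rw [Multiset.sum_cons, Complex.add_re, Complex.add_im, h2, ih2]
    constructor
    · linarith
    · ring

lemma step_split (s : Multiset ℝ) (hs : ∀ r ∈ s, 0 ≤ r) :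
    ∃ s' : Multiset ℝ, (∀ r ∈ s', 0 ≤ r) ∧
      X * (prS s + derivative (prS s)) = prS s' := by
  set p : ℝ[X] := prS s with hp
  set q : ℝ[X] := X * (p + derivative p) with hq
  have hpm : p.Monic := prS_monic s
  have hqm : q.Monic := by
    refine monic_X.mul (hpm.add_of_left ?_)
    exact degree_derivative_lt hpm.ne_zero
  set qc : ℂ[X] := q.map (algebraMap ℝ ℂ) with hqcdef
  have hqcm : qc.Monic := hqm.map _
  have hsplit : qc = (qc.roots.map fun a => X - C a).prod :=
    (IsAlgClosed.splits qc).eq_prod_roots_of_monic hqcm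
  have hroot : ∀ z ∈ qc.roots, z.im = 0 ∧ z.re ≤ 0 := by
    intro z hz
    have hz0 : aeval z q = 0 := by
      have h1 := isRoot_of_mem_roots hz
      rwa [IsRoot.def, eval_map_algebraMap] at h1
    by_cases hzz : z = 0
    · subst hzz; simp
    rw [hq, map_mul, aeval_X, map_add] at hz0
    have h0 : aeval z p + aeval z (derivative p) = 0 := by
      rcases mul_eq_zero.mp hz0 with h | h
      · exact absurd h hzz
      · exact h
    by_cases hA : aeval z p = 0
    · rw [hp, aeval_prS] at hA
      rw [Multiset.prod_eq_zero_iff] at hA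
      obtain ⟨r, hr, hr0⟩ := Multiset.mem_map.mp hA
      have hzr : z = -(r:ℂ) := eq_neg_of_add_eq_zero_left hr0
      have him : z.im = 0 := by rw [hzr]; simp
      refine ⟨him, ?_⟩
      have : z.re = -r := by rw [hzr]; simp
      rw [this]; linarith [hs r hr]
    · have hne : ∀ r ∈ s, z + (r:ℂ) ≠ 0 := by
        intro r hr hc
        apply hA
        rw [hp, aeval_prS, Multiset.prod_eq_zero_iff]
        exact Multiset.mem_map.mpr ⟨r, hr, hc⟩
      have hS : aeval z (derivative p) =
          aeval z p * (s.map (fun (r:ℝ) => (z + (r:ℂ))⁻¹)).sum := by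
        rw [hp]; exact aeval_der_prS z s hne
      set S1 := (s.map (fun (r:ℝ) => (z + (r:ℂ))⁻¹)).sum with hS1
      have hkey : (1:ℂ) + S1 = 0 := by
        have h2 : aeval z p * (1 + S1) = 0 := by
          rw [mul_add, mul_one, ← hS]; exact h0
        rcases mul_eq_zero.mp h2 with h | h
        · exact absurd h hA
        · exact h
      have him : z.im = 0 := by
        by_contra him
        have hterm : ∀ t ∈ s.map (fun (r:ℝ) => (z + (r:ℂ))⁻¹),
            t.im * z.im ≤ 0 ∧ (t.im = 0 → t = 0) := by
          intro t ht
          obtain ⟨r, hr, rfl⟩ := Multiset.mem_map.mp ht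
          have hnz : z + (r:ℂ) ≠ 0 := hne r hr
          have hns : Complex.normSq (z + (r:ℂ)) ≠ 0 := by
            simpa [Complex.normSq_eq_zero] using hnz
          have hie : ((z + (r:ℂ))⁻¹).im = -z.im / Complex.normSq (z + (r:ℂ)) := by
            rw [Complex.inv_im]; simp
          constructor
          · rw [hie]
            have hns' : 0 < Complex.normSq (z + (r:ℂ)) :=
              lt_of_le_of_ne (Complex.normSq_nonneg _) (Ne.symm hns)
            rw [div_mul_eq_mul_div, neg_mul]
            apply div_nonpos_of_nonpos_of_nonneg
            · simp [mul_self_nonneg]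
            · exact le_of_lt hns'
          · intro h1
            rw [hie, _root_.div_eq_zero_iff] at h1
            rcases h1 with h1 | h1
            · exact absurd (neg_eq_zero.mp h1) him
            · exact absurd h1 hns
        obtain ⟨_, h2⟩ := sum_im_sign z.im him _ hterm
        have hS1im : S1.im = 0 := by
          have : S1 = -1 := by linear_combination hkey
          rw [this]; simp
        have : S1 = 0 := h2 hS1im
        rw [this, add_zero] at hkey
        exact one_ne_zero hkey
      refine ⟨him, ?_⟩
      by_contra hre
      push_neg at hre
      have hzre : z = ((z.re : ℝ) : ℂ) := by
        apply Complex.ext <;> simp [him]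
      have hterm : ∀ t ∈ s.map (fun (r:ℝ) => (z + (r:ℂ))⁻¹), 0 ≤ t.re ∧ t.im = 0 := by
        intro t ht
        obtain ⟨r, hr, rfl⟩ := Multiset.mem_map.mp ht
        have : z + (r:ℂ) = ((z.re + r : ℝ) : ℂ) := by
          apply Complex.ext <;> simp [him]
        rw [this, ← Complex.ofReal_inv]
        constructor
        · rw [Complex.ofReal_re]
          have : 0 < z.re + r := by linarith [hs r hr]
          positivity
        · simp
      obtain ⟨h1, _⟩ := sum_re_nonneg _ hterm
      have : ((1:ℂ) + S1).re = 1 + S1.re := by simp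
      rw [hkey] at this
      simp at this
      linarith
  refine ⟨qc.roots.map (fun z => -z.re), ?_, ?_⟩
  · intro r hr
    obtain ⟨z, hz, rfl⟩ := Multiset.mem_map.mp hr
    linarith [(hroot z hz).2]
  · apply map_injective (algebraMap ℝ ℂ) (algebraMap ℝ ℂ).injective
    rw [prS, Polynomial.map_multiset_prod, Multiset.map_map, Multiset.map_map]
    have : ∀ z ∈ qc.roots,
        (Polynomial.map (algebraMap ℝ ℂ)) ((fun r => X + C r) (-z.re)) = X - C z := by
      intro z hz
      obtain ⟨him, _⟩ := hroot z hz
      have hz' : ((z.re : ℝ) : ℂ) = z := by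
        apply Complex.ext <;> simp [him]
      rw [Polynomial.map_add, map_X, map_C]
      have hc : (algebraMap ℝ ℂ) (-z.re) = -z := by
        apply Complex.ext <;> simp [him]
      rw [hc, map_neg, sub_eq_add_neg]
    have h2 : Multiset.map ((Polynomial.map (algebraMap ℝ ℂ) ∘ fun r => X + C r) ∘ fun z => -z.re)
          qc.roots = Multiset.map (fun a => X - C a) qc.roots :=
      Multiset.map_congr rfl this
    rw [h2, ← hqcdef]
    exact hsplit

lemma sum_split (x : ℂ) (s : Multiset ℝ) (hne : ∀ r ∈ s, x + (r:ℂ) ≠ 0) :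
    (s.map (fun (r:ℝ) => (x + (r:ℂ))⁻¹)).sum
      - x * (s.map (fun (r:ℝ) => ((x + (r:ℂ))^2)⁻¹)).sum
      = (s.map (fun (r:ℝ) => (r:ℂ) * ((x + (r:ℂ))^2)⁻¹)).sum := by
  induction s using Multiset.induction_on with
  | empty => simp
  | cons r t ih =>
    obtain ⟨h1, h2⟩ := Multiset.forall_mem_cons.mp hne
    have ih' := ih h2
    simp only [Multiset.map_cons, Multiset.sum_cons]
    have hsq : (x + (r:ℂ))^2 ≠ 0 := pow_ne_zero _ h1
    have hterm : (x + (r:ℂ))⁻¹ - x * ((x + (r:ℂ))^2)⁻¹ = (r:ℂ) * ((x + (r:ℂ))^2)⁻¹ := by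
      field_simp
      ring
    linear_combination ih' + hterm

lemma bell_split (B : ℕ → ℝ[X]) (hB0 : B 0 = 1)
    (hBrec : ∀ k, B (k + 1) = X * (B k + derivative (B k))) :
    ∀ k, ∃ s : Multiset ℝ, (∀ r ∈ s, 0 ≤ r) ∧ B k = prS s := by
  intro k
  induction k with
  | zero => exact ⟨0, by simp, by rw [hB0, prS_zero]⟩
  | succ n ih =>
    obtain ⟨s, hs, hb⟩ := ih
    rw [hBrec n, hb]
    exact step_split s hs

theorem stmt_4 (B : ℕ → ℝ[X]) (hB0 : B 0 = 1)
    (hBrec : ∀ k, B (k + 1) = X * (B k + derivative (B k))) :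
    ∀ k : ℕ, ∀ x : ℂ, 0 < x.re →
      (aeval x (B (k + 1))) ^ 2 - aeval x (B (k + 2)) * aeval x (B k) ≠ 0 := by
  intro k x hx
  obtain ⟨s, hs, hBk⟩ := bell_split B hB0 hBrec k
  have hne : ∀ r ∈ s, x + (r:ℂ) ≠ 0 := by
    intro r hr h
    have h' := congrArg Complex.re h
    simp at h'
    linarith [hs r hr]
  set A := aeval x (prS s) with hA_def
  set S1 := (s.map (fun (r:ℝ) => (x + (r:ℂ))⁻¹)).sum with hS1_def
  set S2 := (s.map (fun (r:ℝ) => ((x + (r:ℂ))^2)⁻¹)).sum with hS2_def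
  set E := (s.map (fun (r:ℝ) => (r:ℂ) * ((x + (r:ℂ))^2)⁻¹)).sum with hE_def
  have hA : A ≠ 0 := by
    rw [hA_def, aeval_prS]
    intro h
    rw [Multiset.prod_eq_zero_iff] at h
    obtain ⟨r, hr, h0⟩ := Multiset.mem_map.mp h
    exact hne r hr h0
  have hP0 : aeval x (B k) = A := by rw [hBk]
  have hP1 : aeval x (derivative (B k)) = A * S1 := by
    rw [hBk]; exact aeval_der_prS x s hne
  have hP2 : aeval x (derivative (derivative (B k))) = A * (S1^2 - S2) := by
    rw [hBk]; exact aeval_der2_prS x s hne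
  have hBk1 : aeval x (B (k+1)) = x * (A + A * S1) := by
    rw [hBrec k]
    simp only [map_mul, map_add, aeval_X, hP0, hP1]
  have hd1 : aeval x (derivative (B (k+1)))
      = (A + A*S1) + x * (A*S1 + A*(S1^2 - S2)) := by
    rw [hBrec k, derivative_mul, derivative_X, one_mul, derivative_add]
    simp only [map_add, map_mul, aeval_X, hP0, hP1, hP2]
  have hBk2 : aeval x (B (k+2))
      = x * (x * (A + A*S1) + ((A + A*S1) + x * (A*S1 + A*(S1^2 - S2)))) := by
    rw [hBrec (k+1)]
    simp only [map_mul, map_add, aeval_X, hBk1, hd1]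
  rw [hBk1, hBk2, hP0]
  have hkey : (x * (A + A*S1))^2
      - x * (x*(A+A*S1) + ((A+A*S1) + x*(A*S1 + A*(S1^2 - S2)))) * A
      = -(x * A^2 * (1 + (S1 - x * S2))) := by ring
  rw [hkey, sum_split x s hne, ← hE_def]
  have hx0 : x ≠ 0 := by
    intro h; rw [h] at hx; simp at hx
  have h1E : (1:ℂ) + E ≠ 0 := by
    by_cases him : x.im = 0
    · have hterm : ∀ t ∈ s.map (fun (r:ℝ) => (r:ℂ) * ((x + (r:ℂ))^2)⁻¹),
          0 ≤ t.re ∧ t.im = 0 := by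
        intro t ht
        obtain ⟨r, hr, rfl⟩ := Multiset.mem_map.mp ht
        have hxr : x + (r:ℂ) = ((x.re + r : ℝ):ℂ) := by
          apply Complex.ext <;> simp [him]
        have heq : (r:ℂ) * ((x + (r:ℂ))^2)⁻¹ = ((r * (((x.re + r)^2)⁻¹) : ℝ) : ℂ) := by
          rw [hxr]; push_cast; ring
        rw [heq]
        refine ⟨?_, Complex.ofReal_im _⟩
        rw [Complex.ofReal_re]
        have h0 : 0 ≤ r := hs r hr
        positivity
      obtain ⟨h1, h2⟩ := sum_re_nonneg _ hterm
      intro hcon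
      have h' := congrArg Complex.re hcon
      simp at h'
      rw [← hE_def] at h1
      linarith
    · have hterm : ∀ t ∈ s.map (fun (r:ℝ) => (r:ℂ) * ((x + (r:ℂ))^2)⁻¹),
          t.im * x.im ≤ 0 ∧ (t.im = 0 → t = 0) := by
        intro t ht
        obtain ⟨r, hr, rfl⟩ := Multiset.mem_map.mp ht
        set w := (x + (r:ℂ))^2 with hw
        have hwnz : w ≠ 0 := pow_ne_zero _ (hne r hr)
        have hns : Complex.normSq w ≠ 0 := by
          simpa [Complex.normSq_eq_zero] using hwnz
        have hns' : 0 < Complex.normSq w :=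
          lt_of_le_of_ne (Complex.normSq_nonneg _) (Ne.symm hns)
        have h0 : 0 ≤ r := hs r hr
        have h0' : 0 < x.re + r := by linarith
        have hwim : w.im = 2 * (x.re + r) * x.im := by
          rw [hw, sq, Complex.mul_im]; simp; ring
        have htim : ((r:ℂ) * w⁻¹).im = r * (-(w.im) / Complex.normSq w) := by
          rw [Complex.mul_im, Complex.inv_im]; simp
        constructor
        · rw [htim, hwim]
          have heq : r * (-(2 * (x.re + r) * x.im) / Complex.normSq w) * x.im
              = -((r * (2 * (x.re + r)) * x.im^2) / Complex.normSq w) := by ring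
          rw [heq]
          rw [neg_nonpos]
          apply div_nonneg _ (le_of_lt hns')
          positivity
        · intro hti
          rw [htim, hwim] at hti
          have hr0 : r = 0 := by
            rcases mul_eq_zero.mp hti with h' | h'
            · exact h'
            · exfalso
              rw [_root_.div_eq_zero_iff] at h'
              rcases h' with h'' | h''
              · have h3 := neg_eq_zero.mp h''
                exact (mul_ne_zero (mul_ne_zero two_ne_zero (ne_of_gt h0')) him) h3
              · exact hns h''
          rw [hr0]; simp
      obtain ⟨_, h2⟩ := sum_im_sign x.im him _ hterm
      intro hcon
      have hEim : E.im = 0 := by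
        have hE1 : E = -1 := by linear_combination hcon
        rw [hE1]; simp
      rw [← hE_def] at h2
      have hE0 := h2 hEim
      rw [hE0, add_zero] at hcon
      exact one_ne_zero hcon
  intro h
  apply h1E
  have h' := neg_eq_zero.mp h
  rcases mul_eq_zero.mp h' with h'' | h''
  · rcases mul_eq_zero.mp h'' with h3 | h3
    · exact absurd h3 hx0
    · exact absurd h3 (pow_ne_zero 2 hA)
  · exact h''
end

section
/- Let {P_k} be a sequence of real polynomials with deg P_k = k, P_0 a non-zero constant, satisfying P_{k+1}(x) = a(x+b)(P_k'(x) + c_k P_k(x)) for all k, where a ≠ 0, b ≥ 0, and 0 < c_k ≤ c_{k+1} for all k. Then for every k, the Turán expression (P_{k+1}(x))² − P_{k+2}(x)·P_k(x) is non-zero for all complex x with Re x > −b. -/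
open Polynomial

section Stmt5Aux

open Complex

private lemma poly_nonneg (s t u d : ℝ) (hs : 0 ≤ s) (ht : 0 ≤ t) (hu : 0 ≤ u) (hd : 0 ≤ d) :
    0 ≤ u*(t - d*u)^2
      + (u*t^2 + u^2*t^2*d^2
      + s*t^3 + s*u*t + s*u*t^2*d + s*u*t^3*d^2 + s*u^2*d + 3*s*u^2*t*d^2
      + 2*s^2*t^2 + 2*s^2*t^3*d + 2*s^2*u*t*d + 4*s^2*u*t^2*d^2 + 3*s^2*u^2*d^2
      + s^3*t + 5*s^3*t^2*d + s^3*t^3*d^2 + 2*s^3*u*d + 6*s^3*u*t*d^2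
      + 4*s^4*t*d + 3*s^4*t^2*d^2 + 3*s^4*u*d^2
      + s^5*d + 3*s^5*t*d^2 + s^6*d^2) := by
  rw [← Real.sq_sqrt hs, ← Real.sq_sqrt ht, ← Real.sq_sqrt hu, ← Real.sq_sqrt hd]
  positivity

private lemma key_re_nonneg (z : ℂ) (t d : ℝ) (hz : 0 < z.re) (ht : 0 ≤ t) (hd : 0 ≤ d) :
    0 ≤ ((z + ((d * Complex.normSq z : ℝ) : ℂ)) * ((t : ℂ) + (d : ℂ) * z * (z + (t:ℂ)))
        * (starRingEnd ℂ (z + (t:ℂ)))^2).re := by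
  have h : ((z + ((d * Complex.normSq z : ℝ) : ℂ)) * ((t : ℂ) + (d : ℂ) * z * (z + (t:ℂ)))
        * (starRingEnd ℂ (z + (t:ℂ)))^2).re
      = z.im^2*(t - d*z.im^2)^2
      + (z.im^2*t^2 + (z.im^2)^2*t^2*d^2
      + z.re*t^3 + z.re*z.im^2*t + z.re*z.im^2*t^2*d + z.re*z.im^2*t^3*d^2
        + z.re*(z.im^2)^2*d + 3*z.re*(z.im^2)^2*t*d^2
      + 2*z.re^2*t^2 + 2*z.re^2*t^3*d + 2*z.re^2*z.im^2*t*d + 4*z.re^2*z.im^2*t^2*d^2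
        + 3*z.re^2*(z.im^2)^2*d^2
      + z.re^3*t + 5*z.re^3*t^2*d + z.re^3*t^3*d^2 + 2*z.re^3*z.im^2*d + 6*z.re^3*z.im^2*t*d^2
      + 4*z.re^4*t*d + 3*z.re^4*t^2*d^2 + 3*z.re^4*z.im^2*d^2
      + z.re^5*d + 3*z.re^5*t*d^2 + z.re^6*d^2) := by
    simp only [Complex.mul_re, Complex.mul_im, Complex.add_re, Complex.add_im, Complex.ofReal_re,
      Complex.ofReal_im, Complex.conj_re, Complex.conj_im, Complex.normSq_apply, pow_two]
    ring
  rw [h]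
  exact poly_nonneg z.re t (z.im^2) d hz.le ht (sq_nonneg _) hd

private lemma const_re_pos (z : ℂ) (d : ℝ) (hz : 0 < z.re) (hd : 0 ≤ d) :
    0 < ((z + ((d * Complex.normSq z : ℝ) : ℂ)) * (1 + (d:ℂ) * z)).re := by
  have h : ((z + ((d * Complex.normSq z : ℝ) : ℂ)) * (1 + (d:ℂ) * z)).re
      = z.re * ((1 + d*z.re)^2 + d^2*z.im^2) := by
    simp only [Complex.mul_re, Complex.mul_im, Complex.add_re, Complex.add_im, Complex.ofReal_re,
      Complex.ofReal_im, Complex.one_re, Complex.one_im, Complex.normSq_apply]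
    ring
  rw [h]
  have h2 : (0:ℝ) < (1 + d*z.re)^2 + d^2*z.im^2 := by
    nlinarith [mul_nonneg hd hz.le, sq_nonneg (d*z.im)]
  exact mul_pos hz h2

private lemma msum_re (M : Multiset ℂ) : M.sum.re = (M.map Complex.re).sum := by
  induction M using Multiset.induction_on with
  | empty => simp
  | cons a s ih => simp [ih]

private lemma msum_im (M : Multiset ℂ) : M.sum.im = (M.map Complex.im).sum := by
  induction M using Multiset.induction_on with
  | empty => simp
  | cons a s ih => simp [ih]

private lemma msum_sub {α : Type*} (M : Multiset α) (f g : α → ℂ) :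
    (M.map (fun r => f r - g r)).sum = (M.map f).sum - (M.map g).sum := by
  induction M using Multiset.induction_on with
  | empty => simp
  | cons a s ih => simp [ih]; ring

private lemma aeval_prod (x : ℂ) (M : Multiset ℝ) :
    aeval x ((M.map (fun r : ℝ => X - C r)).prod) = (M.map (fun r : ℝ => x - (r:ℂ))).prod := by
  induction M using Multiset.induction_on with
  | empty => simp
  | cons r s ih => simp [ih]

private lemma map_prod_lin (M : Multiset ℝ) :
    ((M.map (fun r : ℝ => X - C r)).prod).map (algebraMap ℝ ℂ)
      = (M.map (fun r : ℝ => X - C ((r:ℂ)))).prod := by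
  induction M using Multiset.induction_on with
  | empty => simp
  | cons r s ih => simp [Polynomial.map_mul, ih]

private lemma aeval_derivs (x : ℂ) (M : Multiset ℝ) (hne : ∀ r ∈ M, x - (r:ℂ) ≠ 0) :
    aeval x (derivative ((M.map (fun r : ℝ => X - C r)).prod))
      = aeval x ((M.map (fun r : ℝ => X - C r)).prod) * (M.map (fun r : ℝ => (x - (r:ℂ))⁻¹)).sum ∧
    aeval x (derivative (derivative ((M.map (fun r : ℝ => X - C r)).prod)))
      = aeval x ((M.map (fun r : ℝ => X - C r)).prod) *
          ((M.map (fun r : ℝ => (x - (r:ℂ))⁻¹)).sum ^ 2 - (M.map (fun r : ℝ => ((x - (r:ℂ))⁻¹)^2)).sum) := by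
  induction M using Multiset.induction_on with
  | empty => simp
  | cons r s ih =>
    have hr : x - (r:ℂ) ≠ 0 := hne r (Multiset.mem_cons_self _ _)
    obtain ⟨ih1, ih2⟩ := ih (fun r' hr' => hne _ (Multiset.mem_cons_of_mem hr'))
    have hD1 : derivative (((r ::ₘ s).map (fun r : ℝ => X - C r)).prod)
        = ((s.map (fun r : ℝ => X - C r)).prod)
          + (X - C r) * derivative ((s.map (fun r : ℝ => X - C r)).prod) := by
      rw [Multiset.map_cons, Multiset.prod_cons, derivative_mul]
      simp
    have hD2 : derivative (derivative (((r ::ₘ s).map (fun r : ℝ => X - C r)).prod))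
        = 2 * derivative ((s.map (fun r : ℝ => X - C r)).prod)
          + (X - C r) * derivative (derivative ((s.map (fun r : ℝ => X - C r)).prod)) := by
      rw [hD1, derivative_add, derivative_mul]
      simp
      ring
    constructor
    · rw [hD1, Multiset.map_cons, Multiset.prod_cons, Multiset.map_cons, Multiset.sum_cons]
      simp only [map_add, map_mul, map_sub, aeval_X, aeval_C, Complex.coe_algebraMap, ih1]
      field_simp
    · rw [hD2, Multiset.map_cons, Multiset.prod_cons, Multiset.map_cons, Multiset.sum_cons,
        Multiset.map_cons, Multiset.sum_cons]
      simp only [map_add, map_mul, map_sub, map_ofNat, aeval_X, aeval_C, Complex.coe_algebraMap,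
        ih1, ih2]
      field_simp
      ring

private lemma per_term_nonneg (z x : ℂ) (b r d : ℝ) (hzre : 0 < z.re) (hz : z = x + (b:ℂ))
    (hr : r ≤ -b) (hd : 0 ≤ d) (hxr : x - (r:ℂ) ≠ 0) :
    0 ≤ ((z + ((d * Complex.normSq z : ℝ) : ℂ)) *
        ((1 + (d:ℂ)*z) * (x - (r:ℂ))⁻¹ - z * ((x - (r:ℂ))⁻¹)^2)).re := by
  set t : ℝ := -b - r with htdef
  have ht : 0 ≤ t := by simp [htdef]; linarith
  have hζ : x - (r:ℂ) = z + (t:ℂ) := by rw [hz]; push_cast [htdef]; ring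
  rw [hζ]
  have hζ0 : z + (t:ℂ) ≠ 0 := hζ ▸ hxr
  have key := key_re_nonneg z t d hzre ht hd
  have e : (1 + (d:ℂ)*z) * (z + (t:ℂ))⁻¹ - z * ((z + (t:ℂ))⁻¹)^2
      = ((t:ℂ) + (d:ℂ)*z*(z + (t:ℂ))) * ((z + (t:ℂ))⁻¹)^2 := by
    field_simp
    ring
  rw [e]
  have e2 : ((z + (t:ℂ))⁻¹)^2
      = (starRingEnd ℂ (z + (t:ℂ)))^2 * (((Complex.normSq (z + (t:ℂ)))⁻¹ : ℝ) : ℂ)^2 := by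
    rw [Complex.inv_def, mul_pow]
  rw [e2]
  have e3 : (z + ((d * Complex.normSq z : ℝ) : ℂ)) *
      (((t:ℂ) + (d:ℂ)*z*(z + (t:ℂ))) *
        ((starRingEnd ℂ (z + (t:ℂ)))^2 * (((Complex.normSq (z + (t:ℂ)))⁻¹ : ℝ) : ℂ)^2))
      = ((((Complex.normSq (z + (t:ℂ)))⁻¹)^2 : ℝ) : ℂ) *
        ((z + ((d * Complex.normSq z : ℝ) : ℂ)) * ((t:ℂ) + (d:ℂ)*z*(z + (t:ℂ)))
          * (starRingEnd ℂ (z + (t:ℂ)))^2) := by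
    push_cast
    ring
  rw [e3]
  have e4 : ∀ (s : ℝ) (w : ℂ), ((s:ℂ) * w).re = s * w.re := by
    intro s w
    simp [Complex.mul_re]
  rw [e4]
  have : (0:ℝ) ≤ ((Complex.normSq (z + (t:ℂ)))⁻¹)^2 := by positivity
  exact mul_nonneg this key

end Stmt5Aux

private lemma exists_split (P : ℕ → ℝ[X]) (a b : ℝ) (c : ℕ → ℝ) (ha : a ≠ 0)
    (hc : ∀ k, 0 < c k) (hdeg : ∀ k, (P k).natDegree = k)
    (hP0 : ∃ r : ℝ, r ≠ 0 ∧ P 0 = C r)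
    (hrec : ∀ k, P (k + 1) = C a * ((X + C b) * (derivative (P k) + C (c k) * P k))) :
    ∀ k, ∃ (A : ℝ) (M : Multiset ℝ), A ≠ 0 ∧ (∀ r ∈ M, r ≤ -b) ∧
      P k = C A * (M.map (fun r : ℝ => X - C r)).prod := by
  intro k
  induction k with
  | zero =>
    obtain ⟨r, hr, h⟩ := hP0
    exact ⟨r, 0, hr, by simp, by simp [h]⟩
  | succ k ih =>
    obtain ⟨A, M, hA, hM, hQ⟩ := ih
    set R : ℝ[X] := derivative (P k) + C (c k) * P k with hRdef
    have hPk1 : P (k+1) = C a * ((X + C b) * R) := hrec k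
    have hR0 : R ≠ 0 := by
      intro h
      have hdg := hdeg (k+1)
      rw [hPk1, h] at hdg
      simp at hdg
    have hnv : ∀ w : ℂ, (w.im ≠ 0 ∨ -b < w.re) → aeval w R ≠ 0 := by
      intro w hw
      have hne : ∀ r ∈ M, w - (r:ℂ) ≠ 0 := by
        intro r hr h
        have h1 : w = (r:ℂ) := sub_eq_zero.mp h
        rcases hw with h2 | h2
        · exact h2 (by rw [h1]; simp)
        · have h3 : w.re = r := by rw [h1]; simp
          have := hM r hr
          rw [h3] at h2
          linarith
      have hprod := aeval_prod w M
      obtain ⟨hd1, _⟩ := aeval_derivs w M hne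
      have hq0 : (M.map (fun r : ℝ => w - (r:ℂ))).prod ≠ 0 := by
        apply Multiset.prod_ne_zero
        intro h0
        rw [Multiset.mem_map] at h0
        obtain ⟨r, hr, h⟩ := h0
        exact hne r hr h
      have hqR : aeval w R = ((A:ℂ) * (M.map (fun r : ℝ => w - (r:ℂ))).prod) *
          ((M.map (fun r : ℝ => (w - (r:ℂ))⁻¹)).sum + (c k : ℂ)) := by
        rw [hRdef, hQ, derivative_C_mul]
        simp only [map_add, map_mul, aeval_C, Complex.coe_algebraMap]
        rw [hd1, hprod]
        ring
      have hS : (M.map (fun r : ℝ => (w - (r:ℂ))⁻¹)).sum + (c k : ℂ) ≠ 0 := by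
        rcases eq_or_ne w.im 0 with him | him
        · have hre : -b < w.re := hw.resolve_left (by simp [him])
          intro h0
          have h1 : ((M.map (fun r : ℝ => (w - (r:ℂ))⁻¹)).sum + (c k : ℂ)).re = 0 := by
            rw [h0]; simp
          rw [Complex.add_re, Complex.ofReal_re, msum_re, Multiset.map_map] at h1
          have h2 : (0:ℝ) ≤ (M.map (Complex.re ∘ fun r : ℝ => (w - (r:ℂ))⁻¹)).sum := by
            apply Multiset.sum_nonneg
            intro v hv
            rw [Multiset.mem_map] at hv
            obtain ⟨r, hr, rfl⟩ := hv
            simp only [Function.comp_apply, Complex.inv_re]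
            apply div_nonneg _ (Complex.normSq_nonneg _)
            have : (w - (r:ℂ)).re = w.re - r := by simp
            rw [this]
            have := hM r hr
            linarith
          have := hc k
          linarith
        · by_cases hM0 : M = 0
          · simp only [hM0, Multiset.map_zero, Multiset.sum_zero, zero_add]
            exact_mod_cast (hc k).ne'
          · intro h0
            have h1 : ((M.map (fun r : ℝ => (w - (r:ℂ))⁻¹)).sum + (c k : ℂ)).im = 0 := by
              rw [h0]; simp
            rw [Complex.add_im, Complex.ofReal_im, add_zero, msum_im,
              Multiset.map_map] at h1
            have heq : (M.map (Complex.im ∘ fun r : ℝ => (w - (r:ℂ))⁻¹))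
                = (M.map (fun r : ℝ => -w.im * (Complex.normSq (w - (r:ℂ)))⁻¹)) := by
              apply Multiset.map_congr rfl
              intro r hr
              simp only [Function.comp_apply, Complex.inv_im]
              have : (w - (r:ℂ)).im = w.im := by simp
              rw [this, neg_div, div_eq_mul_inv]
              ring
            rw [heq, Multiset.sum_map_mul_left] at h1
            obtain ⟨r₀, M', rfl⟩ : ∃ r₀ M', M = r₀ ::ₘ M' := by
              rcases Multiset.exists_mem_of_ne_zero hM0 with ⟨r₀, hr₀⟩
              exact ⟨r₀, _, (Multiset.cons_erase hr₀).symm⟩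
            rw [Multiset.map_cons, Multiset.sum_cons] at h1
            have hpos : (0:ℝ) < (Complex.normSq (w - (r₀:ℂ)))⁻¹ +
                (M'.map (fun r : ℝ => (Complex.normSq (w - (r:ℂ)))⁻¹)).sum := by
              have p1 : (0:ℝ) < (Complex.normSq (w - (r₀:ℂ)))⁻¹ := by
                rw [inv_pos]
                exact Complex.normSq_pos.mpr (hne r₀ (Multiset.mem_cons_self _ _))
              have p2 : (0:ℝ) ≤ (M'.map (fun r : ℝ => (Complex.normSq (w - (r:ℂ)))⁻¹)).sum := by
                apply Multiset.sum_nonneg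
                intro v hv
                rw [Multiset.mem_map] at hv
                obtain ⟨r, hr, rfl⟩ := hv
                exact inv_nonneg.mpr (Complex.normSq_nonneg _)
              linarith
            rcases lt_or_gt_of_ne him with h | h
            · nlinarith
            · nlinarith
      rw [hqR]
      exact mul_ne_zero (mul_ne_zero (by exact_mod_cast hA) hq0) hS
    -- split over ℂ and descend
    set Rc : ℂ[X] := R.map (algebraMap ℝ ℂ) with hRcdef
    have hRc0 : Rc ≠ 0 := by
      rw [hRcdef, Ne, Polynomial.map_eq_zero_iff (algebraMap ℝ ℂ).injective]
      exact hR0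
    have hsplit : Rc = C Rc.leadingCoeff * (Rc.roots.map (fun w => X - C w)).prod :=
      Splits.eq_prod_roots (IsAlgClosed.splits Rc)
    have hroots : ∀ w ∈ Rc.roots, w.im = 0 ∧ w.re ≤ -b := by
      intro w hw
      have hwr : aeval w R = 0 := by
        have h1 := (Polynomial.mem_roots hRc0).mp hw
        rw [aeval_def, ← Polynomial.eval_map]
        exact h1
      by_contra hcon
      push_neg at hcon
      rcases eq_or_ne w.im 0 with him | him
      · exact hnv w (Or.inr (hcon him)) hwr
      · exact hnv w (Or.inl him) hwr
    obtain ⟨M₁, hM₁⟩ : ∃ M₁ : Multiset ℝ, M₁ = Rc.roots.map Complex.re := ⟨_, rfl⟩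
    have hrootsmap : M₁.map (fun r : ℝ => (r:ℂ)) = Rc.roots := by
      rw [hM₁, Multiset.map_map]
      have h1 : Rc.roots.map ((fun r : ℝ => (r:ℂ)) ∘ Complex.re) = Rc.roots.map id :=
        Multiset.map_congr rfl (fun w hw => Complex.ext (by simp) (by simp [(hroots w hw).1]))
      rw [h1, Multiset.map_id]
    have hlc2 : Rc.leadingCoeff = algebraMap ℝ ℂ R.leadingCoeff := by
      rw [hRcdef, Polynomial.leadingCoeff_map]
    have hRsplit : R = C R.leadingCoeff * (M₁.map (fun r : ℝ => X - C r)).prod := by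
      apply Polynomial.map_injective (algebraMap ℝ ℂ) (algebraMap ℝ ℂ).injective
      rw [Polynomial.map_mul, Polynomial.map_C, map_prod_lin, ← hRcdef, ← hlc2]
      have e5 : (M₁.map (fun r : ℝ => X - C ((r:ℂ)))).prod
          = ((M₁.map (fun r : ℝ => (r:ℂ))).map (fun w : ℂ => X - C w)).prod := by
        rw [Multiset.map_map]
        rfl
      rw [e5, hrootsmap]
      exact hsplit
    obtain ⟨L, hL0, hRL⟩ : ∃ L : ℝ, L ≠ 0 ∧ R = C L * (M₁.map (fun r : ℝ => X - C r)).prod :=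
      ⟨R.leadingCoeff, leadingCoeff_ne_zero.mpr hR0, hRsplit⟩
    refine ⟨a * L, (-b) ::ₘ M₁, mul_ne_zero ha hL0, ?_, ?_⟩
    · intro r hr
      rcases Multiset.mem_cons.mp hr with h | h
      · simp [h]
      · rw [hM₁] at h
        rw [Multiset.mem_map] at h
        obtain ⟨w, hw, rfl⟩ := h
        exact (hroots w hw).2
    · rw [hPk1, hRL, Multiset.map_cons, Multiset.prod_cons, C_mul]
      have hXb : (X : ℝ[X]) + C b = X - C (-b) := by
        rw [map_neg, sub_neg_eq_add]
      rw [hXb]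
      ring

theorem stmt_5 (P : ℕ → ℝ[X]) (a b : ℝ) (c : ℕ → ℝ)
    (ha : a ≠ 0) (hb : 0 ≤ b)
    (hc : ∀ k, 0 < c k) (hcmono : ∀ k, c k ≤ c (k + 1))
    (hdeg : ∀ k, (P k).natDegree = k)
    (hP0 : ∃ r : ℝ, r ≠ 0 ∧ P 0 = C r)
    (hrec : ∀ k, P (k + 1) = C a * ((X + C b) * (derivative (P k) + C (c k) * P k))) :
    ∀ k : ℕ, ∀ x : ℂ, -b < x.re →
      (aeval x (P (k + 1))) ^ 2 - aeval x (P (k + 2)) * aeval x (P k) ≠ 0 := by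
  intro k x hx
  obtain ⟨A, M, hA, hM, hQ⟩ := exists_split P a b c ha hc hdeg hP0 hrec k
  set z : ℂ := x + (b:ℂ) with hzdef
  have hzre : 0 < z.re := by
    rw [hzdef]
    simp only [Complex.add_re, Complex.ofReal_re]
    linarith
  have hz0 : z ≠ 0 := by
    intro h
    rw [h] at hzre
    simp at hzre
  have hne : ∀ r ∈ M, x - (r:ℂ) ≠ 0 := by
    intro r hr h
    have h1 : x = (r:ℂ) := sub_eq_zero.mp h
    have h2 : x.re = r := by rw [h1]; simp
    have := hM r hr
    rw [h2] at hx
    linarith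
  set S : ℂ := (M.map (fun r : ℝ => (x - (r:ℂ))⁻¹)).sum with hSdef
  set S₂ : ℂ := (M.map (fun r : ℝ => ((x - (r:ℂ))⁻¹)^2)).sum with hS₂def
  obtain ⟨hd1, hd2⟩ := aeval_derivs x M hne
  have hPr := aeval_prod x M
  have hq : aeval x (P k) = (A:ℂ) * (M.map (fun r : ℝ => x - (r:ℂ))).prod := by
    rw [hQ]
    simp only [map_mul, aeval_C, Complex.coe_algebraMap]
    rw [hPr]
  have hq0 : aeval x (P k) ≠ 0 := by
    rw [hq]
    apply mul_ne_zero (by exact_mod_cast hA)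
    apply Multiset.prod_ne_zero
    intro h0
    rw [Multiset.mem_map] at h0
    obtain ⟨r, hr, h⟩ := h0
    exact hne r hr h
  have hq1 : aeval x (derivative (P k)) = aeval x (P k) * S := by
    calc aeval x (derivative (P k)) = (A:ℂ) * aeval x (derivative ((M.map (fun r : ℝ => X - C r)).prod)) := by
          rw [hQ, derivative_C_mul]
          simp only [map_mul, aeval_C, Complex.coe_algebraMap]
      _ = (A:ℂ) * (aeval x ((M.map (fun r : ℝ => X - C r)).prod) * S) := by rw [hd1, hSdef]
      _ = aeval x (P k) * S := by rw [hq, hPr]; ring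
  have hq2 : aeval x (derivative (derivative (P k))) = aeval x (P k) * (S^2 - S₂) := by
    calc aeval x (derivative (derivative (P k)))
        = (A:ℂ) * aeval x (derivative (derivative ((M.map (fun r : ℝ => X - C r)).prod))) := by
          rw [hQ, derivative_C_mul, derivative_C_mul]
          simp only [map_mul, aeval_C, Complex.coe_algebraMap]
      _ = (A:ℂ) * (aeval x ((M.map (fun r : ℝ => X - C r)).prod) * (S^2 - S₂)) := by
          rw [hd2, hSdef, hS₂def]
      _ = aeval x (P k) * (S^2 - S₂) := by rw [hq, hPr]; ring
  have hp1 : aeval x (P (k+1)) = (a:ℂ) * (z * (aeval x (P k) * (S + (c k : ℂ)))) := by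
    rw [hrec k]
    simp only [map_mul, map_add, aeval_C, aeval_X, Complex.coe_algebraMap]
    rw [hq1, hzdef]
    ring
  have hder1 : derivative (P (k+1)) = C a * ((derivative (P k) + C (c k) * P k)
      + (X + C b) * (derivative (derivative (P k)) + C (c k) * derivative (P k))) := by
    rw [hrec k, derivative_C_mul, derivative_mul]
    simp only [derivative_add, derivative_X, derivative_C, derivative_C_mul, add_zero]
    ring
  have hp1' : aeval x (derivative (P (k+1)))
      = (a:ℂ) * ((aeval x (P k) * S + (c k : ℂ) * aeval x (P k))
        + z * (aeval x (P k) * (S^2 - S₂) + (c k : ℂ) * (aeval x (P k) * S))) := by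
    rw [hder1]
    simp only [map_mul, map_add, aeval_C, aeval_X, Complex.coe_algebraMap]
    rw [hq1, hq2, hzdef]
  have hp2 : aeval x (P (k+2)) = (a:ℂ) * (z * (aeval x (derivative (P (k+1)))
      + (c (k+1) : ℂ) * aeval x (P (k+1)))) := by
    rw [hrec (k+1)]
    simp only [map_mul, map_add, aeval_C, aeval_X, Complex.coe_algebraMap]
    rw [hzdef]
  set d : ℝ := c (k+1) - c k with hddef
  have hd0 : 0 ≤ d := by
    rw [hddef]
    have := hcmono k
    linarith
  set G : ℂ := (1 + (d:ℂ) * z) * (S + (c k : ℂ)) - z * S₂ with hGdef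
  have hTeq : (aeval x (P (k + 1))) ^ 2 - aeval x (P (k + 2)) * aeval x (P k)
      = -((a:ℂ)^2 * (aeval x (P k))^2 * z * G) := by
    rw [hp2, hp1', hp1, hGdef, hddef]
    push_cast
    ring
  rw [hTeq, neg_ne_zero]
  have hG : G ≠ 0 := by
    set μ : ℂ := z + ((d * Complex.normSq z : ℝ) : ℂ) with hμdef
    have hGsum : μ * G = (c k : ℂ) * (μ * (1 + (d:ℂ)*z))
        + (M.map (fun r : ℝ => μ * ((1 + (d:ℂ)*z) * (x - (r:ℂ))⁻¹ - z * ((x - (r:ℂ))⁻¹)^2))).sum := by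
      have e0 : (M.map (fun r : ℝ => μ * ((1 + (d:ℂ)*z) * (x - (r:ℂ))⁻¹ - z * ((x - (r:ℂ))⁻¹)^2)))
          = (M.map (fun r : ℝ => (μ * (1 + (d:ℂ)*z)) * (x - (r:ℂ))⁻¹ - (μ * z) * ((x - (r:ℂ))⁻¹)^2)) := by
        apply Multiset.map_congr rfl
        intro r _
        ring
      rw [e0, msum_sub, Multiset.sum_map_mul_left, Multiset.sum_map_mul_left,
        ← hSdef, ← hS₂def, hGdef]
      ring
    have hre : 0 < (μ * G).re := by
      rw [hGsum, Complex.add_re]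
      have h1 : ((c k : ℂ) * (μ * (1 + (d:ℂ)*z))).re = c k * (μ * (1 + (d:ℂ)*z)).re := by
        have : ((c k : ℂ)) = (((c k : ℝ)) : ℂ) := rfl
        rw [this]
        simp [Complex.mul_re]
      have h2 : 0 ≤ ((M.map (fun r : ℝ => μ * ((1 + (d:ℂ)*z) * (x - (r:ℂ))⁻¹
          - z * ((x - (r:ℂ))⁻¹)^2))).sum).re := by
        rw [msum_re, Multiset.map_map]
        apply Multiset.sum_nonneg
        intro v hv
        rw [Multiset.mem_map] at hv
        obtain ⟨r, hr, rfl⟩ := hv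
        exact per_term_nonneg z x b r d hzre hzdef (hM r hr) hd0 (hne r hr)
      have h3 := const_re_pos z d hzre hd0
      rw [h1]
      have h4 : 0 < c k * (μ * (1 + (d:ℂ)*z)).re := mul_pos (hc k) (by rw [hμdef] at *; exact h3)
      linarith
    intro h
    rw [h, mul_zero] at hre
    simp at hre
  exact mul_ne_zero (mul_ne_zero (mul_ne_zero (pow_ne_zero 2 (by exact_mod_cast ha))
    (pow_ne_zero 2 hq0)) hz0) hG
end

section
/- Let {P_k} be a sequence of real polynomials with deg P_k = k, P_0 a non-zero constant, satisfying P_{k+1}(x) = a(x+b)(P_k'(x) + c_k P_k(x)) with a ≠ 0, b ≥ 0, and 0 < c_k ≤ c_{k+1} for all k. Then for every k ≥ 1, all zeros of P_k are real, −b is a zero of P_k, and the remaining zeros are strictly less than −b; moreover the zeros of P_{k-1} strictly interlace those of P_k away from −b. -/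
open Polynomial


open Polynomial Finset

namespace Stmt6Aux

/-- From adjacent increase to full strict monotonicity on an initial segment. -/
lemma mono_of_adj {k : ℕ} {f : ℕ → ℝ} (h : ∀ i, i + 1 < k → f i < f (i + 1)) :
    ∀ j i, i < j → j < k → f i < f j := by
  intro j
  induction j with
  | zero => omega
  | succ n ih =>
    intro i hij hjk
    rcases Nat.lt_succ_iff_lt_or_eq.mp hij with h' | h'
    · exact (ih i h' (by omega)).trans (h n (by omega))
    · subst h'; exact h i (by omega)

/-- Evaluation of the derivative of a product of distinct linear factors at one of the roots. -/
lemma eval_derivative_prod (x : ℕ → ℝ) :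
    ∀ (s : Finset ℕ), ∀ m ∈ s,
      eval (x m) (derivative (∏ i ∈ s, (X - C (x i)))) = ∏ j ∈ s.erase m, (x m - x j) := by
  intro s
  induction s using Finset.induction_on with
  | empty => simp
  | @insert a s ha ih =>
    intro m hm
    rw [Finset.prod_insert ha, derivative_mul]
    simp only [derivative_sub, derivative_X, derivative_C, sub_zero, one_mul]
    rcases Finset.mem_insert.mp hm with rfl | hms
    · rw [Finset.erase_insert ha]
      simp [eval_prod]
    · have hne : m ≠ a := by rintro rfl; exact ha hms
      have h1 : eval (x m) (∏ i ∈ s, (X - C (x i))) = 0 := by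
        rw [eval_prod]
        exact Finset.prod_eq_zero hms (by simp)
      rw [erase_insert_of_ne hne.symm, Finset.prod_insert (by simp [ha]),
        eval_add, eval_mul, h1, ih m hms]
      simp

lemma prod_flip (s : Finset ℕ) (g : ℕ → ℝ) (u : ℝ) :
    ∏ j ∈ s, (u - g j) = (-1 : ℝ) ^ s.card * ∏ j ∈ s, (g j - u) := by
  rw [← Finset.prod_const, ← Finset.prod_mul_distrib]
  exact Finset.prod_congr rfl fun j _ => by ring

lemma ivt (p : ℝ[X]) (u v : ℝ) (huv : u < v) (h : eval u p * eval v p < 0) :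
    ∃ t, u < t ∧ t < v ∧ eval t p = 0 := by
  rcases mul_neg_iff.mp h with ⟨h1, h2⟩ | ⟨h1, h2⟩
  · have := intermediate_value_Ioo' huv.le (p.continuousOn (s := Set.Icc u v))
    have h0 : (0 : ℝ) ∈ Set.Ioo (eval v p) (eval u p) := ⟨h2, h1⟩
    obtain ⟨t, ht, ht0⟩ := this h0
    exact ⟨t, ht.1, ht.2, ht0⟩
  · have := intermediate_value_Ioo huv.le (p.continuousOn (s := Set.Icc u v))
    have h0 : (0 : ℝ) ∈ Set.Ioo (eval u p) (eval v p) := ⟨h1, h2⟩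
    obtain ⟨t, ht, ht0⟩ := this h0
    exact ⟨t, ht.1, ht.2, ht0⟩

lemma prod_X_sub_C_dvd (p : ℝ[X]) (hp : p ≠ 0) (T : Finset ℝ)
    (hT : ∀ t ∈ T, eval t p = 0) : (∏ t ∈ T, (X - C t)) ∣ p := by
  have hle : T.val ≤ p.roots := by
    rw [Multiset.le_iff_count]
    intro r
    by_cases hr : r ∈ T
    · have h1 : T.val.count r = 1 := Multiset.count_eq_one_of_mem T.nodup hr
      have h2 : r ∈ p.roots := by
        rw [mem_roots hp]
        exact hT r hr
      rw [h1]
      exact Multiset.one_le_count_iff_mem.mpr h2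
    · simp [Multiset.count_eq_zero_of_notMem (s := T.val) hr]
  have h2 := (Multiset.prod_X_sub_C_dvd_iff_le_roots hp T.val).mpr hle
  rwa [Finset.prod_eq_multiset_prod]

lemma linear_factor (S : ℝ[X]) (hS0 : S ≠ 0) (hS : S.natDegree = 1) :
    ∃ d y0 : ℝ, d ≠ 0 ∧ S = C d * (X - C y0) := by
  have h := eq_X_add_C_of_natDegree_le_one hS.le
  have hd : S.coeff 1 ≠ 0 := by
    have : S.leadingCoeff ≠ 0 := leadingCoeff_ne_zero.mpr hS0
    rwa [leadingCoeff, hS] at this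
  set d := S.coeff 1 with hdd
  set e := S.coeff 0 with hee
  refine ⟨d, -e / d, hd, ?_⟩
  have hde : d * (-e / d) = -e := by field_simp
  rw [h, mul_sub, ← C_mul, hde, map_neg, sub_neg_eq_add]

end Stmt6Aux

namespace Stmt6Aux2
open Stmt6Aux

def Rts (p : ℝ[X]) (b : ℝ) (k : ℕ) (x : ℕ → ℝ) : Prop :=
  (∀ i, i + 1 < k → x i < x (i + 1)) ∧ x (k - 1) = -b ∧
    ∃ L : ℝ, L ≠ 0 ∧ p = C L * ∏ i ∈ Finset.range k, (X - C (x i))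

lemma rts_root {p : ℝ[X]} {b : ℝ} {k : ℕ} {x : ℕ → ℝ} (h : Rts p b k x) {i : ℕ}
    (hi : i < k) : eval (x i) p = 0 := by
  obtain ⟨-, -, L, -, hfac⟩ := h
  rw [hfac, eval_mul, eval_prod, Finset.prod_eq_zero (Finset.mem_range.mpr hi) (by simp)]
  simp

lemma rts_mem {p : ℝ[X]} {b : ℝ} {k : ℕ} {x : ℕ → ℝ} (h : Rts p b k x) {r : ℝ}
    (hr : eval r p = 0) : ∃ i < k, r = x i := by
  obtain ⟨-, -, L, hL, hfac⟩ := h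
  rw [hfac, eval_mul, eval_prod, eval_C] at hr
  rcases mul_eq_zero.mp hr with h' | h'
  · exact absurd h' hL
  · obtain ⟨i, hi, hx⟩ := Finset.prod_eq_zero_iff.mp h'
    refine ⟨i, Finset.mem_range.mp hi, ?_⟩
    simpa [sub_eq_zero] using hx

lemma step (P : ℕ → ℝ[X]) (a b : ℝ) (c : ℕ → ℝ) (ha : a ≠ 0) (hc : ∀ k, 0 < c k)
    (hdeg : ∀ k, (P k).natDegree = k)
    (hrec : ∀ k, P (k + 1) = C a * ((X + C b) * (derivative (P k) + C (c k) * P k)))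
    (k : ℕ) (hk : 1 ≤ k) (x : ℕ → ℝ) (hx : Rts (P k) b k x) :
    ∃ x' : ℕ → ℝ, Rts (P (k + 1)) b (k + 1) x' ∧ (∀ i, i < k → x' i < x i) ∧
      (∀ i, i + 1 < k → x i < x' (i + 1)) := by
  obtain ⟨hadj, htop, L, hL, hfac⟩ := hx
  have hmono : ∀ j i, i < j → j < k → x i < x j := mono_of_adj hadj
  set Q : ℝ[X] := derivative (P k) + C (c k) * P k with hQdef
  have hPk1 : P (k + 1) = C a * ((X + C b) * Q) := hrec k
  have hQ0 : Q ≠ 0 := by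
    intro h
    have h2 := hdeg (k + 1)
    rw [hPk1, h, mul_zero, mul_zero, natDegree_zero] at h2
    omega
  have hdQ : Q.natDegree = k := by
    have h1 := hdeg (k + 1)
    rw [hPk1, natDegree_C_mul ha, natDegree_mul (X_add_C_ne_zero b) hQ0,
      natDegree_X_add_C] at h1
    omega
  have hroot : ∀ m, m < k → eval (x m) (P k) = 0 := fun m hm =>
    rts_root ⟨hadj, htop, L, hL, hfac⟩ hm
  have hQeval : ∀ m, m < k →
      eval (x m) Q = L * ∏ j ∈ (Finset.range k).erase m, (x m - x j) := by
    intro m hm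
    rw [hQdef, eval_add, eval_mul, hroot m hm, mul_zero, add_zero, hfac,
      derivative_C_mul, eval_mul, eval_C,
      eval_derivative_prod x (Finset.range k) m (Finset.mem_range.mpr hm)]
  have hW : ∀ m, m < k →
      0 < (-1 : ℝ) ^ (k - 1 - m) * ∏ j ∈ (Finset.range k).erase m, (x m - x j) := by
    intro m hm
    have hsplit : (Finset.range k).erase m = Finset.range m ∪ Finset.Ico (m + 1) k := by
      ext j
      simp only [Finset.mem_erase, Finset.mem_range, Finset.mem_union, Finset.mem_Ico]
      omega
    have hdisj : Disjoint (Finset.range m) (Finset.Ico (m + 1) k) := by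
      rw [Finset.disjoint_left]
      intro j hj hj'
      simp only [Finset.mem_range] at hj
      simp only [Finset.mem_Ico] at hj'
      omega
    have hA : 0 < ∏ j ∈ Finset.range m, (x m - x j) :=
      Finset.prod_pos fun j hj => sub_pos.mpr (hmono m j (Finset.mem_range.mp hj) hm)
    have hB : 0 < ∏ j ∈ Finset.Ico (m + 1) k, (x j - x m) :=
      Finset.prod_pos fun j hj => sub_pos.mpr
        (hmono j m (by simpa using (Finset.mem_Ico.mp hj).1) (Finset.mem_Ico.mp hj).2)
    have he : k - (m + 1) = k - 1 - m := by omega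
    rw [hsplit, Finset.prod_union hdisj, prod_flip (Finset.Ico (m + 1) k) x (x m),
      Nat.card_Ico, he]
    have h1 : (-1 : ℝ) ^ (k - 1 - m) *
        ((∏ j ∈ Finset.range m, (x m - x j)) *
          ((-1 : ℝ) ^ (k - 1 - m) * ∏ j ∈ Finset.Ico (m + 1) k, (x j - x m))) =
        ((-1 : ℝ) ^ (k - 1 - m)) ^ 2 *
          ((∏ j ∈ Finset.range m, (x m - x j)) *
            ∏ j ∈ Finset.Ico (m + 1) k, (x j - x m)) := by ring
    have h2 : ((-1 : ℝ) ^ (k - 1 - m)) ^ 2 = 1 := by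
      rw [← pow_mul, mul_comm, pow_mul, neg_one_sq, one_pow]
    rw [h1, h2, one_mul]
    exact mul_pos hA hB
  have hL2 : 0 < L ^ 2 := by positivity
  have hsgn : ∀ m, m < k → 0 < (-1 : ℝ) ^ (k - 1 - m) * (L * eval (x m) Q) := by
    intro m hm
    have h2 : (-1 : ℝ) ^ (k - 1 - m) *
        (L * (L * ∏ j ∈ (Finset.range k).erase m, (x m - x j))) =
        L ^ 2 * ((-1 : ℝ) ^ (k - 1 - m) * ∏ j ∈ (Finset.range k).erase m, (x m - x j)) := by
      ring
    rw [hQeval m hm, h2]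
    exact mul_pos hL2 (hW m hm)
  have hopp : ∀ m, m + 1 < k → eval (x m) Q * eval (x (m + 1)) Q < 0 := by
    intro m hm
    have e3 := mul_pos (hsgn m (by omega)) (hsgn (m + 1) hm)
    have hodd : (-1 : ℝ) ^ (k - 1 - m) * (-1 : ℝ) ^ (k - 1 - (m + 1)) = -1 := by
      rw [← pow_add]
      exact Odd.neg_one_pow ⟨k - 2 - m, by omega⟩
    have h4 : ((-1 : ℝ) ^ (k - 1 - m) * (L * eval (x m) Q)) *
        ((-1 : ℝ) ^ (k - 1 - (m + 1)) * (L * eval (x (m + 1)) Q)) =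
        ((-1 : ℝ) ^ (k - 1 - m) * (-1 : ℝ) ^ (k - 1 - (m + 1))) *
          (L ^ 2 * (eval (x m) Q * eval (x (m + 1)) Q)) := by ring
    rw [h4, hodd] at e3
    nlinarith [e3, hL2]
  have hexist : ∀ m, m + 1 < k → ∃ t, x m < t ∧ t < x (m + 1) ∧ eval t Q = 0 :=
    fun m hm => ivt Q (x m) (x (m + 1)) (hadj m hm) (hopp m hm)
  choose! f hf1 hf2 hf3 using hexist
  have hfadj : ∀ i, i + 1 < k - 1 → f i < f (i + 1) := fun i hi =>
    (hf2 i (by omega)).trans (hf1 (i + 1) (by omega))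
  have hfmono := mono_of_adj hfadj
  have hfinj : ∀ i ∈ Finset.range (k - 1), ∀ j ∈ Finset.range (k - 1), f i = f j → i = j := by
    intro i hi j hj hij
    by_contra hne
    rcases Nat.lt_or_ge i j with h' | h'
    · have := hfmono j i h' (Finset.mem_range.mp hj); linarith
    · have := hfmono i j (by omega) (Finset.mem_range.mp hi); linarith
  set T : Finset ℝ := (Finset.range (k - 1)).image f with hT
  have hTroot : ∀ t ∈ T, eval t Q = 0 := by
    intro t ht
    obtain ⟨m, hm, rfl⟩ := Finset.mem_image.mp ht
    exact hf3 m (by have := Finset.mem_range.mp hm; omega)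
  have hTcard : T.card = k - 1 := by
    rw [hT, Finset.card_image_of_injOn fun i hi j hj => hfinj i hi j hj, Finset.card_range]
  obtain ⟨S, hQS⟩ := prod_X_sub_C_dvd Q hQ0 T hTroot
  have hGmon : (∏ t ∈ T, (X - C t)).Monic :=
    monic_prod_of_monic _ _ fun t _ => monic_X_sub_C t
  have hS0 : S ≠ 0 := by rintro rfl; rw [mul_zero] at hQS; exact hQ0 hQS
  have hdegG : (∏ t ∈ T, (X - C t)).natDegree = k - 1 := by
    rw [natDegree_prod _ _ fun t _ => X_sub_C_ne_zero t]
    simp [natDegree_X_sub_C, hTcard]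
  have hdS : S.natDegree = 1 := by
    have h9 := hdQ
    rw [hQS, natDegree_mul hGmon.ne_zero hS0, hdegG] at h9
    omega
  obtain ⟨d, y0, hd, hSfac⟩ := linear_factor S hS0 hdS
  set y : ℕ → ℝ := fun m => if m = 0 then y0 else f (m - 1) with hy
  have hins : Finset.range k = insert 0 (Finset.Ico 1 k) := by
    ext j; simp only [Finset.mem_range, Finset.mem_insert, Finset.mem_Ico]; omega
  have hprodIco : ∏ m ∈ Finset.Ico 1 k, (X - C (y m)) = ∏ t ∈ T, (X - C t) := by
    rw [hT, Finset.prod_image hfinj, Finset.prod_Ico_eq_prod_range]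
    refine Finset.prod_congr rfl fun i _ => ?_
    simp [hy]
  have hQfac : Q = C d * ∏ m ∈ Finset.range k, (X - C (y m)) := by
    rw [hins, Finset.prod_insert (by simp), hprodIco]
    have hy0 : y 0 = y0 := by simp [hy]
    rw [hy0, hQS, hSfac]
    ring
  have hPlead : (P k).leadingCoeff = L := by
    rw [hfac, leadingCoeff_mul, leadingCoeff_C,
      (monic_prod_of_monic _ _ fun i _ => monic_X_sub_C (x i)).leadingCoeff, mul_one]
  have hcoefQ : Q.coeff k = c k * L := by
    rw [hQdef, coeff_add, coeff_C_mul]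
    have h5 : (derivative (P k)).coeff k = 0 := by
      apply coeff_eq_zero_of_natDegree_lt
      have h6 := natDegree_derivative_lt (p := P k) (by rw [hdeg k]; omega)
      rw [hdeg k] at h6
      omega
    have h6 : (P k).coeff k = L := by rw [← hPlead, leadingCoeff, hdeg k]
    rw [h5, zero_add, h6]
  have hdL : d = c k * L := by
    have h7 : Q.leadingCoeff = d := by
      rw [hQfac, leadingCoeff_mul, leadingCoeff_C,
        (monic_prod_of_monic _ _ fun m _ => monic_X_sub_C (y m)).leadingCoeff, mul_one]
    rw [← h7, leadingCoeff, hdQ, hcoefQ]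
  -- y0 < x 0
  have hyx0 : y0 < x 0 := by
    have e1 : eval (x 0) Q = L * ∏ j ∈ (Finset.range k).erase 0, (x 0 - x j) :=
      hQeval 0 (by omega)
    have herase0 : (Finset.range k).erase 0 = Finset.Ico 1 k := by
      ext j; simp only [Finset.mem_erase, Finset.mem_range, Finset.mem_Ico]; omega
    have e2 : eval (x 0) Q = d * ((x 0 - y0) * ∏ m ∈ Finset.Ico 1 k, (x 0 - y m)) := by
      rw [hQfac, eval_mul, eval_C, eval_prod, hins, Finset.prod_insert (by simp)]
      have hy0 : y 0 = y0 := by simp [hy]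
      simp only [eval_sub, eval_X, eval_C, hy0, eval_prod]
    have hBpos : 0 < ∏ j ∈ Finset.Ico 1 k, (x j - x 0) :=
      Finset.prod_pos fun j hj => sub_pos.mpr
        (hmono j 0 (by have := (Finset.mem_Ico.mp hj).1; omega) (Finset.mem_Ico.mp hj).2)
    have hCpos : 0 < ∏ m ∈ Finset.Ico 1 k, (y m - x 0) := by
      refine Finset.prod_pos fun m hm => sub_pos.mpr ?_
      obtain ⟨hm1, hm2⟩ := Finset.mem_Ico.mp hm
      have hym : y m = f (m - 1) := by simp [hy]; omega
      have h8 : x (m - 1) < f (m - 1) := hf1 (m - 1) (by omega)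
      have h9 : x 0 ≤ x (m - 1) := by
        rcases Nat.eq_or_lt_of_le (Nat.zero_le (m - 1)) with h' | h'
        · rw [← h']
        · exact (hmono (m - 1) 0 h' (by omega)).le
      rw [hym]; linarith
    rw [herase0, prod_flip (Finset.Ico 1 k) x (x 0)] at e1
    have e3 : ∏ m ∈ Finset.Ico 1 k, (x 0 - y m) =
        (-1 : ℝ) ^ (Finset.Ico 1 k).card * ∏ m ∈ Finset.Ico 1 k, (y m - x 0) :=
      prod_flip _ y (x 0)
    rw [e3] at e2
    set n := (Finset.Ico 1 k).card with hn
    set B := ∏ j ∈ Finset.Ico 1 k, (x j - x 0) with hB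
    set Cc := ∏ m ∈ Finset.Ico 1 k, (y m - x 0) with hCc
    have heq : L * B * (-1 : ℝ) ^ n = d * ((x 0 - y0) * Cc) * (-1 : ℝ) ^ n := by
      have := e1.symm.trans e2
      linear_combination this
    have hne : ((-1 : ℝ) ^ n) ≠ 0 := by
      intro h; exact absurd h (by positivity)
    have heq2 : L * B = d * ((x 0 - y0) * Cc) := mul_right_cancel₀ hne heq
    rw [hdL] at heq2
    have heq3 : B = c k * ((x 0 - y0) * Cc) := by
      apply mul_left_cancel₀ hL
      linear_combination heq2
    by_contra hcon
    push_neg at hcon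
    have h15 : c k * ((x 0 - y0) * Cc) ≤ 0 :=
      mul_nonpos_of_nonneg_of_nonpos (hc k).le
        (mul_nonpos_of_nonpos_of_nonneg (by linarith) hCpos.le)
    linarith
  have hy0lt : y 0 < x 0 := by simpa [hy] using hyx0
  have hylt : ∀ m, 1 ≤ m → m < k → x (m - 1) < y m ∧ y m < x m := by
    intro m h1 h2
    have hym : y m = f (m - 1) := by simp [hy]; omega
    rw [hym]
    have hme : m - 1 + 1 = m := by omega
    refine ⟨hf1 (m - 1) (by omega), ?_⟩
    have := hf2 (m - 1) (by omega)
    rwa [hme] at this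
  refine ⟨fun i => if i < k then y i else -b, ⟨?_, ?_, a * d, mul_ne_zero ha hd, ?_⟩, ?_, ?_⟩
  · -- adjacency
    intro i hi
    by_cases hik : i + 1 < k
    · simp only [if_pos (by omega : i < k), if_pos hik]
      rcases Nat.eq_zero_or_pos i with rfl | hipos
      · exact hy0lt.trans (by simpa using (hylt 1 le_rfl hik).1)
      · have h10 := (hylt i hipos (by omega)).2
        have h11 := (hylt (i + 1) (by omega) hik).1
        have : i + 1 - 1 = i := by omega
        rw [this] at h11
        linarith
    · have hik' : i + 1 = k := by omega
      simp only [if_pos (by omega : i < k), if_neg (by omega : ¬ i + 1 < k)]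
      have hxtop : x i = -b := by
        have h12 : i = k - 1 := by omega
        rw [h12, htop]
      rcases Nat.eq_zero_or_pos i with rfl | hipos
      · rw [← hxtop]; exact hy0lt
      · rw [← hxtop]; exact (hylt i hipos (by omega)).2
  · simp
  · -- factorization
    rw [hPk1, hQfac, Finset.prod_range_succ]
    have hcong : ∏ i ∈ Finset.range k, (X - C (if i < k then y i else -b)) =
        ∏ i ∈ Finset.range k, (X - C (y i)) :=
      Finset.prod_congr rfl fun i hi => by rw [if_pos (Finset.mem_range.mp hi)]
    have h20 : (fun i => if i < k then y i else -b) k = -b := by simp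
    rw [hcong, h20, map_neg, sub_neg_eq_add, C_mul]
    ring
  · -- chain 1
    intro i hik
    simp only [if_pos hik]
    rcases Nat.eq_zero_or_pos i with rfl | hipos
    · exact hy0lt
    · exact (hylt i hipos hik).2
  · -- chain 2
    intro i hi
    simp only [if_pos hi]
    have h13 := (hylt (i + 1) (by omega) hi).1
    have h14 : i + 1 - 1 = i := by omega
    rwa [h14] at h13



lemma base (P : ℕ → ℝ[X]) (a b : ℝ) (c : ℕ → ℝ) (ha : a ≠ 0) (hc : ∀ k, 0 < c k)
    (hP0 : ∃ r : ℝ, r ≠ 0 ∧ P 0 = C r)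
    (hrec : ∀ k, P (k + 1) = C a * ((X + C b) * (derivative (P k) + C (c k) * P k))) :
    Rts (P 1) b 1 (fun _ => -b) := by
  obtain ⟨r, hr, hP0'⟩ := hP0
  refine ⟨fun i hi => by omega, rfl, a * (c 0 * r),
    mul_ne_zero ha (mul_ne_zero (hc 0).ne' hr), ?_⟩
  rw [hrec 0, hP0', Finset.prod_range_one, map_neg, sub_neg_eq_add, derivative_C,
    zero_add, C_mul, C_mul]
  ring

lemma main (P : ℕ → ℝ[X]) (a b : ℝ) (c : ℕ → ℝ) (ha : a ≠ 0) (hc : ∀ k, 0 < c k)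
    (hdeg : ∀ k, (P k).natDegree = k)
    (hP0 : ∃ r : ℝ, r ≠ 0 ∧ P 0 = C r)
    (hrec : ∀ k, P (k + 1) = C a * ((X + C b) * (derivative (P k) + C (c k) * P k))) :
    ∀ n : ℕ, ∃ x : ℕ → ℝ, Rts (P (n + 1)) b (n + 1) x ∧
      (n = 0 ∨ ∃ w : ℕ → ℝ, Rts (P n) b n w ∧ (∀ i, i < n → x i < w i) ∧
        (∀ i, i + 1 < n → w i < x (i + 1))) := by
  intro n
  induction n with
  | zero => exact ⟨_, base P a b c ha hc hP0 hrec, Or.inl rfl⟩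
  | succ m ih =>
    obtain ⟨x, hx, -⟩ := ih
    obtain ⟨x', hx', hc1, hc2⟩ := step P a b c ha hc hdeg hrec (m + 1) (by omega) x hx
    exact ⟨x', hx', Or.inr ⟨x, hx, hc1, hc2⟩⟩

end Stmt6Aux2

open Stmt6Aux Stmt6Aux2 in
theorem stmt_6' (P : ℕ → ℝ[X]) (a b : ℝ) (c : ℕ → ℝ)
    (ha : a ≠ 0) (hb : 0 ≤ b)
    (hc : ∀ k, 0 < c k) (hcmono : ∀ k, c k ≤ c (k + 1))
    (hdeg : ∀ k, (P k).natDegree = k)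
    (hP0 : ∃ r : ℝ, r ≠ 0 ∧ P 0 = C r)
    (hrec : ∀ k, P (k + 1) = C a * ((X + C b) * (derivative (P k) + C (c k) * P k))) :
    ∀ k : ℕ, 1 ≤ k →
      (∀ z : ℂ, aeval z (P k) = 0 → z.im = 0) ∧
      eval (-b) (P k) = 0 ∧
      (∀ r : ℝ, eval r (P k) = 0 → r = -b ∨ r < -b) ∧
      (∀ r s : ℝ, r < s → s < -b →
        eval r (P k) = 0 → eval s (P k) = 0 →
        (∀ u : ℝ, eval u (P k) = 0 → ¬(r < u ∧ u < s)) →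
        ∃! t : ℝ, eval t (P (k - 1)) = 0 ∧ r < t ∧ t < s) := by
  intro k hk
  obtain ⟨n, rfl⟩ : ∃ n, k = n + 1 := ⟨k - 1, by omega⟩
  obtain ⟨x, hx, hrest⟩ := main P a b c ha hc hdeg hP0 hrec n
  obtain ⟨hadj, htop, L, hL, hfac⟩ := hx
  have hx' : Rts (P (n + 1)) b (n + 1) x := ⟨hadj, htop, L, hL, hfac⟩
  have hmono : ∀ j i, i < j → j < n + 1 → x i < x j := mono_of_adj hadj
  have htop' : x n = -b := htop
  refine ⟨?_, ?_, ?_, ?_⟩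
  · -- complex roots are real
    intro z hz
    rw [hfac] at hz
    simp only [map_mul, map_prod, map_sub, aeval_X, aeval_C] at hz
    rcases mul_eq_zero.mp hz with h' | h'
    · exact absurd h' (by simpa using (Complex.ofReal_ne_zero.mpr hL))
    · obtain ⟨i, hi, hzi⟩ := Finset.prod_eq_zero_iff.mp h'
      have : z = ((x i : ℝ) : ℂ) := by
        have := sub_eq_zero.mp hzi
        simpa using this
      rw [this]
      simp
  · -- -b is a root
    rw [hrec n]
    simp
  · -- all roots ≤ -b
    intro r hr
    obtain ⟨i, hi, rfl⟩ := rts_mem hx' hr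
    rcases Nat.lt_or_ge i n with h' | h'
    · right
      rw [← htop']
      exact hmono n i h' (by omega)
    · left
      have : i = n := by omega
      rw [this, htop']
  · -- interlacing
    intro r s hrs hsb hr hs hno
    obtain ⟨i, hi, rfl⟩ := rts_mem hx' hr
    obtain ⟨j, hj, rfl⟩ := rts_mem hx' hs
    have hij : i < j := by
      by_contra h'
      push_neg at h'
      have : x j ≤ x i := by
        rcases Nat.eq_or_lt_of_le h' with h'' | h''
        · rw [h'']
        · exact (hmono i j h'' hi).le
      linarith
    have hjn : j < n := by
      by_contra h'
      have hjeq : j = n := by omega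
      rw [hjeq, htop'] at hsb
      linarith
    have hji : j = i + 1 := by
      by_contra h'
      have hu : x i < x (i + 1) := hadj i (by omega)
      have hu2 : x (i + 1) < x j := hmono j (i + 1) (by omega) (by omega)
      exact hno (x (i + 1)) (rts_root hx' (by omega : i + 1 < n + 1)) ⟨hu, hu2⟩
    subst hji
    rcases hrest with rfl | ⟨w, hw, hcc1, hcc2⟩
    · omega
    · have hin : i + 1 < n := by omega
      refine ⟨w i, ⟨rts_root hw (by omega), hcc1 i (by omega), hcc2 i hin⟩, ?_⟩
      rintro t ⟨ht0, ht1, ht2⟩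
      obtain ⟨j', hj', rfl⟩ := rts_mem hw ht0
      rcases lt_trichotomy j' i with h' | rfl | h'
      · have h1 := hcc2 j' (by omega)
        have h2 : x (j' + 1) ≤ x i := by
          rcases Nat.eq_or_lt_of_le (by omega : j' + 1 ≤ i) with h'' | h''
          · rw [h'']
          · exact (hmono i (j' + 1) h'' (by omega)).le
        linarith
      · rfl
      · have h1 := hcc1 j' hj'
        have h2 : x (i + 1) ≤ x j' := by
          rcases Nat.eq_or_lt_of_le (by omega : i + 1 ≤ j') with h'' | h''
          · rw [← h'']
          · exact (hmono j' (i + 1) h'' (by omega)).le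
        linarith


theorem stmt_6 (P : ℕ → ℝ[X]) (a b : ℝ) (c : ℕ → ℝ)
    (ha : a ≠ 0) (hb : 0 ≤ b)
    (hc : ∀ k, 0 < c k) (hcmono : ∀ k, c k ≤ c (k + 1))
    (hdeg : ∀ k, (P k).natDegree = k)
    (hP0 : ∃ r : ℝ, r ≠ 0 ∧ P 0 = C r)
    (hrec : ∀ k, P (k + 1) = C a * ((X + C b) * (derivative (P k) + C (c k) * P k))) :
    ∀ k : ℕ, 1 ≤ k →
      -- all zeros of P k are real
      (∀ z : ℂ, aeval z (P k) = 0 → z.im = 0) ∧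
      -- −b is a zero of P k
      eval (-b) (P k) = 0 ∧
      -- all other zeros are strictly less than −b
      (∀ r : ℝ, eval r (P k) = 0 → r = -b ∨ r < -b) ∧
      -- zeros of P (k-1) strictly interlace those of P k away from −b:
      -- between any two consecutive zeros of P k below −b lies exactly one zero of P (k-1)
      (∀ r s : ℝ, r < s → s < -b →
        eval r (P k) = 0 → eval s (P k) = 0 →
        (∀ u : ℝ, eval u (P k) = 0 → ¬(r < u ∧ u < s)) →
        ∃! t : ℝ, eval t (P (k - 1)) = 0 ∧ r < t ∧ t < s) := by
  exact stmt_6' P a b c ha hb hc hcmono hdeg hP0 hrec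
end

section
/- Let Q be a real polynomial of degree n with only simple real zeros, all strictly less than −b, and let c > 0. Then the polynomial R(x) = (x+b)Q'(x) + (1 + c(x+b))Q(x) has only simple real zeros, all strictly less than −b, and the zeros of R strictly interlace those of Q together with −b. -/
open Polynomial
open Filter Real Set

lemma lemA {Q : ℝ[X]} (hQ0 : Q ≠ 0)
    (hQreal : ∀ z : ℂ, aeval z Q = 0 → z.im = 0)
    (hQsimple : ∀ r : ℝ, eval r Q = 0 → eval r (derivative Q) ≠ 0) :
    Multiset.card Q.roots = Q.natDegree ∧ Q.roots.Nodup := by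
  classical
  have hinj : Function.Injective (algebraMap ℝ ℂ) := fun x y h => by
    simpa using congrArg Complex.re h
  have hmap0 : Q.map (algebraMap ℝ ℂ) ≠ 0 := (Polynomial.map_ne_zero_iff hinj).mpr hQ0
  have hmult1 : ∀ r : ℝ, Q.rootMultiplicity r ≤ 1 := by
    intro r
    by_contra h
    push_neg at h
    rw [Polynomial.one_lt_rootMultiplicity_iff_isRoot hQ0] at h
    exact hQsimple r h.1 h.2
  have hext : (Q.map (algebraMap ℝ ℂ)).roots = Q.roots.map (algebraMap ℝ ℂ) := by
    ext z
    by_cases hz : eval z (Q.map (algebraMap ℝ ℂ)) = 0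
    · have him : z.im = 0 := hQreal z (by rwa [aeval_def, eval₂_eq_eval_map])
      have hz' : z = algebraMap ℝ ℂ z.re := by
        apply Complex.ext <;> simp [him]
      rw [hz', count_roots, Multiset.count_map_eq_count' _ _ hinj, count_roots,
        ← Polynomial.eq_rootMultiplicity_map hinj]
    · have h1 : Multiset.count z (Q.map (algebraMap ℝ ℂ)).roots = 0 := by
        rw [count_roots]
        exact Polynomial.rootMultiplicity_eq_zero hz
      have h2 : Multiset.count z (Q.roots.map (algebraMap ℝ ℂ)) = 0 := by
        rw [Multiset.count_eq_zero]
        intro hmem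
        obtain ⟨r, hr, rfl⟩ := Multiset.mem_map.mp hmem
        apply hz
        rw [eval_map, eval₂_at_apply]
        simpa using (Polynomial.isRoot_of_mem_roots hr)
      rw [h1, h2]
  constructor
  · have h3 : (Q.map (algebraMap ℝ ℂ)).natDegree = Multiset.card (Q.map (algebraMap ℝ ℂ)).roots :=
      (IsAlgClosed.splits _).natDegree_eq_card_roots
    rw [hext, Multiset.card_map] at h3
    rwa [natDegree_map, eq_comm] at h3
  · rw [Multiset.nodup_iff_count_le_one]
    intro r
    rw [count_roots]
    exact hmult1 r

lemma lemB {R : ℝ[X]} (hR0 : R ≠ 0) (A : Finset ℝ)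
    (hAroot : ∀ r ∈ A, eval r R = 0) (hcard : R.natDegree = A.card) :
    (∀ z : ℂ, aeval z R = 0 → z.im = 0) ∧ (∀ r : ℝ, eval r R = 0 → r ∈ A) ∧
    (∀ r : ℝ, eval r R = 0 → eval r (derivative R) ≠ 0) := by
  classical
  have hinj : Function.Injective (algebraMap ℝ ℂ) := fun x y h => by
    simpa using congrArg Complex.re h
  have hmap0 : R.map (algebraMap ℝ ℂ) ≠ 0 := (Polynomial.map_ne_zero_iff hinj).mpr hR0
  have hnd : (A.val.map (algebraMap ℝ ℂ)).Nodup := A.nodup.map hinj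
  have hle : (A.val.map (algebraMap ℝ ℂ)) ≤ (R.map (algebraMap ℝ ℂ)).roots := by
    rw [Multiset.le_iff_count]
    intro z
    by_cases hz : z ∈ A.val.map (algebraMap ℝ ℂ)
    · have h1 : Multiset.count z (A.val.map (algebraMap ℝ ℂ)) = 1 :=
        Multiset.count_eq_one_of_mem hnd hz
      obtain ⟨r, hrA, rfl⟩ := Multiset.mem_map.mp hz
      rw [h1, count_roots]
      rw [Nat.one_le_iff_ne_zero, ← Nat.pos_iff_ne_zero, Polynomial.rootMultiplicity_pos hmap0]
      rw [IsRoot, eval_map, eval₂_at_apply]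
      simp [hAroot r hrA]
    · rw [Multiset.count_eq_zero_of_notMem hz]
      exact Nat.zero_le _
  have hcard2 : Multiset.card (R.map (algebraMap ℝ ℂ)).roots ≤
      Multiset.card (A.val.map (algebraMap ℝ ℂ)) := by
    rw [Multiset.card_map]
    calc Multiset.card (R.map (algebraMap ℝ ℂ)).roots ≤ (R.map (algebraMap ℝ ℂ)).natDegree :=
          Polynomial.card_roots' _
      _ = R.natDegree := natDegree_map _
      _ = A.val.card := hcard
  have heq : (R.map (algebraMap ℝ ℂ)).roots = A.val.map (algebraMap ℝ ℂ) :=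
    (Multiset.eq_of_le_of_card_le hle hcard2).symm
  have hmem : ∀ z : ℂ, aeval z R = 0 → z ∈ A.val.map (algebraMap ℝ ℂ) := by
    intro z hz
    rw [← heq, mem_roots hmap0]
    rwa [IsRoot, eval_map, ← aeval_def]
  refine ⟨?_, ?_, ?_⟩
  · intro z hz
    obtain ⟨r, _, rfl⟩ := Multiset.mem_map.mp (hmem z hz)
    simp
  · intro r hr
    have : (algebraMap ℝ ℂ r) ∈ A.val.map (algebraMap ℝ ℂ) := by
      apply hmem
      rw [aeval_algebraMap_apply]
      simp [hr]
    obtain ⟨r', hr', he⟩ := Multiset.mem_map.mp this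
    rwa [← hinj he]
  · intro r hr hd
    have h1 : R.rootMultiplicity r = 1 := by
      rw [Polynomial.eq_rootMultiplicity_map hinj, ← count_roots, heq]
      apply Multiset.count_eq_one_of_mem hnd
      apply Multiset.mem_map_of_mem
      have : (algebraMap ℝ ℂ r) ∈ A.val.map (algebraMap ℝ ℂ) := by
        apply hmem
        rw [aeval_algebraMap_apply]
        simp [hr]
      obtain ⟨r', hr', he⟩ := Multiset.mem_map.mp this
      rwa [← hinj he]
    have h2 : 1 < R.rootMultiplicity r :=
      (Polynomial.one_lt_rootMultiplicity_iff_isRoot hR0).mpr ⟨hr, hd⟩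
    omega

lemma lemLim {P : ℝ[X]} {c : ℝ} (hc : 0 < c) :
    Tendsto (fun x => eval x P * Real.exp (c * x)) atBot (nhds (0:ℝ)) := by
  have h1 := Polynomial.tendsto_div_exp_atTop (P.comp (C (-(1/c)) * X))
  have h2 : Tendsto (fun x : ℝ => c * -x) atBot atTop :=
    Filter.Tendsto.const_mul_atTop hc tendsto_neg_atBot_atTop
  have h3 := h1.comp h2
  refine h3.congr (fun x => ?_)
  have hcne : c ≠ 0 := ne_of_gt hc
  have he : eval (c * -x) (P.comp (C (-(1/c)) * X)) = eval x P := by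
    rw [eval_comp]
    congr 1
    simp
    field_simp
  simp only [Function.comp]
  rw [he]
  rw [show c * -x = -(c * x) by ring, Real.exp_neg, div_inv_eq_mul]

lemma lemTail {P R : ℝ[X]} {c : ℝ} (hc : 0 < c)
    (hPR : ∀ x : ℝ, HasDerivAt (fun y => eval y P * Real.exp (c * y))
      (Real.exp (c * x) * eval x R) x)
    {m : ℝ} (hm : eval m P = 0) :
    ∃ ρ, ρ < m ∧ eval ρ R = 0 := by
  by_contra hno
  push_neg at hno
  set F : ℝ → ℝ := fun y => eval y P * Real.exp (c * y) with hF
  have hFc : Continuous F := (P.continuous).mul (Real.continuous_exp.comp (by continuity))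
  have hRc : Continuous fun x => eval x R := R.continuous
  have hIVT : ∀ a b : ℝ, a < b → b < m → eval a R * eval b R < 0 → False := by
    intro a b hab hbm hsign
    rcases mul_neg_iff.mp hsign with ⟨ha, hb⟩ | ⟨ha, hb⟩
    · obtain ⟨y, hy, hy0⟩ := intermediate_value_Ioo' (le_of_lt hab) hRc.continuousOn
        (show (0:ℝ) ∈ Ioo (eval b R) (eval a R) from ⟨hb, ha⟩)
      exact hno y (hy.2.trans hbm) hy0
    · obtain ⟨y, hy, hy0⟩ := intermediate_value_Ioo (le_of_lt hab) hRc.continuousOn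
        (show (0:ℝ) ∈ Ioo (eval a R) (eval b R) from ⟨ha, hb⟩)
      exact hno y (hy.2.trans hbm) hy0
  have hm1 : m - 1 < m := by linarith
  have hne := hno (m - 1) hm1
  have hFm : F m = 0 := by simp [hF, hm]
  have hlim := lemLim (P := P) hc
  rcases hne.lt_or_gt with hneg | hpos
  · -- eval (m-1) R < 0 : all eval x R < 0 for x < m, F strict anti
    have hsign : ∀ x < m, eval x R < 0 := by
      intro x hx
      rcases lt_trichotomy (eval x R) 0 with h | h | h
      · exact h
      · exact absurd h (hno x hx)
      · rcases lt_trichotomy x (m-1) with hxm | hxm | hxm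
        · exact absurd (hIVT x (m-1) hxm hm1 (by nlinarith)) not_false
        · rw [hxm] at h; linarith
        · exact absurd (hIVT (m-1) x hxm hx (by nlinarith)) not_false
    have hanti : StrictAntiOn F (Iic m) := by
      apply strictAntiOn_of_deriv_neg (convex_Iic m) hFc.continuousOn
      intro x hx
      rw [interior_Iic] at hx
      rw [(hPR x).deriv]
      exact mul_neg_of_pos_of_neg (Real.exp_pos _) (hsign x hx)
    have h1 : (0:ℝ) < F (m-1) := by
      have := hanti (mem_Iic.mpr (le_of_lt hm1)) (mem_Iic.mpr le_rfl) hm1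
      rw [hFm] at this; linarith
    have h2 : ∀ᶠ x in atBot, F (m-1) ≤ F x := by
      filter_upwards [eventually_le_atBot (m-1)] with x hx
      rcases eq_or_lt_of_le hx with h | h
      · rw [h]
      · exact le_of_lt (hanti (mem_Iic.mpr (by linarith)) (mem_Iic.mpr (le_of_lt hm1)) h)
    have := ge_of_tendsto hlim h2
    linarith
  · have hsign : ∀ x < m, 0 < eval x R := by
      intro x hx
      rcases lt_trichotomy (eval x R) 0 with h | h | h
      · rcases lt_trichotomy x (m-1) with hxm | hxm | hxm
        · exact absurd (hIVT x (m-1) hxm hm1 (by nlinarith)) not_false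
        · rw [hxm] at h; linarith
        · exact absurd (hIVT (m-1) x hxm hx (by nlinarith)) not_false
      · exact absurd h (hno x hx)
      · exact h
    have hmono : StrictMonoOn F (Iic m) := by
      apply strictMonoOn_of_deriv_pos (convex_Iic m) hFc.continuousOn
      intro x hx
      rw [interior_Iic] at hx
      rw [(hPR x).deriv]
      exact mul_pos (Real.exp_pos _) (hsign x hx)
    have h1 : F (m-1) < 0 := by
      have := hmono (mem_Iic.mpr (le_of_lt hm1)) (mem_Iic.mpr le_rfl) hm1
      rw [hFm] at this; linarith
    have h2 : ∀ᶠ x in atBot, F x ≤ F (m-1) := by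
      filter_upwards [eventually_le_atBot (m-1)] with x hx
      rcases eq_or_lt_of_le hx with h | h
      · rw [h]
      · exact le_of_lt (hmono (mem_Iic.mpr (by linarith)) (mem_Iic.mpr (le_of_lt hm1)) h)
    have := le_of_tendsto hlim h2
    linarith

theorem stmt_7 (n : ℕ) (b c : ℝ) (hc : 0 < c) (Q : ℝ[X])
    (hQdeg : Q.natDegree = n) (hQ0 : Q ≠ 0)
    -- Q has only real zeros
    (hQreal : ∀ z : ℂ, aeval z Q = 0 → z.im = 0)
    -- the zeros of Q are simple
    (hQsimple : ∀ r : ℝ, eval r Q = 0 → eval r (derivative Q) ≠ 0)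
    -- all zeros of Q are strictly less than −b
    (hQlt : ∀ r : ℝ, eval r Q = 0 → r < -b)
    (R : ℝ[X])
    (hR : R = (X + C b) * derivative Q + (1 + C c * (X + C b)) * Q) :
    -- R has only real zeros
    (∀ z : ℂ, aeval z R = 0 → z.im = 0) ∧
    -- the zeros of R are simple
    (∀ r : ℝ, eval r R = 0 → eval r (derivative R) ≠ 0) ∧
    -- all zeros of R are strictly less than −b
    (∀ r : ℝ, eval r R = 0 → r < -b) ∧
    -- the zeros of R strictly interlace those of Q together with −b:
    -- between consecutive points of {zeros of Q} ∪ {−b} there is exactly one zero of R,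
    (∀ s t : ℝ, s < t →
      (eval s Q = 0 ∨ s = -b) → (eval t Q = 0 ∨ t = -b) →
      (∀ u : ℝ, (eval u Q = 0 ∨ u = -b) → ¬(s < u ∧ u < t)) →
      ∃! r : ℝ, eval r R = 0 ∧ s < r ∧ r < t) ∧
    -- and between consecutive zeros of R there is exactly one point of {zeros of Q} ∪ {−b}
    (∀ s t : ℝ, s < t → eval s R = 0 → eval t R = 0 →
      (∀ u : ℝ, eval u R = 0 → ¬(s < u ∧ u < t)) →
      ∃! r : ℝ, (eval r Q = 0 ∨ r = -b) ∧ s < r ∧ r < t) := by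
  classical
  set P : ℝ[X] := (X + C b) * Q with hP
  have hXb0 : (X + C b : ℝ[X]) ≠ 0 := X_add_C_ne_zero b
  have hP0 : P ≠ 0 := mul_ne_zero hXb0 hQ0
  have hRP : R = derivative P + C c * P := by
    rw [hR, hP, derivative_mul]
    simp only [derivative_add, derivative_X, derivative_C, add_zero]
    ring
  have hevalP : ∀ x : ℝ, eval x P = (x + b) * eval x Q := by
    intro x; rw [hP]; simp
  have hSP : ∀ x : ℝ, eval x P = 0 ↔ (eval x Q = 0 ∨ x = -b) := by
    intro x
    rw [hevalP, mul_eq_zero]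
    constructor
    · rintro (h | h); · right; linarith
      · left; exact h
    · rintro (h | h); · right; exact h
      · left; linarith
  have hevalR : ∀ x : ℝ, eval x R = eval x (derivative P) + c * eval x P := by
    intro x; rw [hRP]; simp
  -- the derivative of F
  have hPR : ∀ x : ℝ, HasDerivAt (fun y => eval y P * Real.exp (c * y))
      (Real.exp (c * x) * eval x R) x := by
    intro x
    have h1 : HasDerivAt (fun y : ℝ => eval y P) (eval x (derivative P)) x := P.hasDerivAt x
    have h2 : HasDerivAt (fun y : ℝ => Real.exp (c * y)) (Real.exp (c * x) * (c * 1)) x :=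
      ((hasDerivAt_id x).const_mul c).exp
    have h3 := h1.mul h2
    have h4 : Real.exp (c * x) * eval x R = eval x (derivative P) * Real.exp (c * x) +
        eval x P * (Real.exp (c * x) * (c * 1)) := by rw [hevalR]; ring
    rw [h4]; exact h3
  -- Rolle
  have hgap : ∀ s t : ℝ, s < t → eval s P = 0 → eval t P = 0 →
      ∃ ρ, s < ρ ∧ ρ < t ∧ eval ρ R = 0 := by
    intro s t hst hs ht
    have hFc : Continuous fun y => eval y P * Real.exp (c * y) :=
      (P.continuous).mul (Real.continuous_exp.comp (by continuity))
    obtain ⟨ρ, hρI, hρ⟩ := exists_deriv_eq_zero hst hFc.continuousOn (by simp [hs, ht])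
    refine ⟨ρ, hρI.1, hρI.2, ?_⟩
    rw [(hPR ρ).deriv] at hρ
    rcases mul_eq_zero.mp hρ with h | h
    · exact absurd h (Real.exp_ne_zero _)
    · exact h
  -- roots of Q
  obtain ⟨hQcard, hQnodup⟩ := lemA hQ0 hQreal hQsimple
  have hQb : eval (-b) Q ≠ 0 := fun h => absurd (hQlt _ h) (lt_irrefl _)
  have hProots : P.roots = {-b} + Q.roots := by
    have hXb : (X + C b : ℝ[X]) = X - C (-b) := by rw [map_neg, sub_neg_eq_add]
    rw [hP, roots_mul hP0, hXb, roots_X_sub_C]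
  have hbQ : -b ∉ Q.roots := by
    intro h
    exact hQb (isRoot_of_mem_roots h)
  have hPnodup : P.roots.Nodup := by
    rw [hProots]
    rw [Multiset.nodup_add]
    refine ⟨Multiset.nodup_singleton _, hQnodup, ?_⟩
    rw [Multiset.singleton_disjoint]
    exact hbQ
  have hPcard : Multiset.card P.roots = n + 1 := by
    rw [hProots, Multiset.card_add, Multiset.card_singleton, hQcard, hQdeg, add_comm]
  -- the finset of zeros of P
  set S : Finset ℝ := P.roots.toFinset with hSdef
  have hSmem : ∀ x : ℝ, x ∈ S ↔ eval x P = 0 := by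
    intro x
    rw [hSdef, Multiset.mem_toFinset, mem_roots hP0, IsRoot]
  have hScard : S.card = n + 1 := by
    rw [hSdef, Multiset.toFinset_card_of_nodup hPnodup, hPcard]
  have hble : ∀ x ∈ S, x ≤ -b := by
    intro x hx
    rcases (hSP x).mp ((hSmem x).mp hx) with h | h
    · exact le_of_lt (hQlt x h)
    · exact le_of_eq h
  have hbS : -b ∈ S := (hSmem _).mpr ((hSP _).mpr (Or.inr rfl))
  have hSne : S.Nonempty := ⟨-b, hbS⟩
  set m : ℝ := S.min' hSne with hmdef
  have hmS : m ∈ S := S.min'_mem hSne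
  have hmle : ∀ x ∈ S, m ≤ x := fun x hx => S.min'_le x hx
  -- T' and the successor function N
  set T' : Finset ℝ := S.erase (-b) with hT'def
  have hT' : ∀ s ∈ T', s ∈ S ∧ s < -b := by
    intro s hs
    have h1 := Finset.mem_of_mem_erase hs
    have h2 := Finset.ne_of_mem_erase hs
    exact ⟨h1, lt_of_le_of_ne (hble s h1) h2⟩
  have hT'card : T'.card = n := by
    rw [hT'def, Finset.card_erase_of_mem hbS, hScard]
    omega
  have hNex : ∀ s ∈ T', ∃ t', t' ∈ S ∧ s < t' ∧ ∀ u ∈ S, s < u → t' ≤ u := by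
    intro s hs
    have hne2 : (S.filter (fun u => s < u)).Nonempty :=
      ⟨-b, Finset.mem_filter.mpr ⟨hbS, (hT' s hs).2⟩⟩
    refine ⟨(S.filter (fun u => s < u)).min' hne2, ?_, ?_, ?_⟩
    · exact Finset.mem_of_mem_filter _ (Finset.min'_mem _ hne2)
    · exact (Finset.mem_filter.mp (Finset.min'_mem _ hne2)).2
    · intro u huS hsu
      exact Finset.min'_le _ u (Finset.mem_filter.mpr ⟨huS, hsu⟩)
  choose! N hN1 hN2 hN3 using hNex
  have hNb : ∀ s ∈ T', N s ≤ -b := fun s hs => hN3 s hs (-b) hbS (hT' s hs).2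
  -- roots of R in the gaps
  have hch : ∀ s ∈ T', ∃ ρ, s < ρ ∧ ρ < N s ∧ eval ρ R = 0 := by
    intro s hs
    exact hgap s (N s) (hN2 s hs) ((hSmem s).mp (hT' s hs).1) ((hSmem _).mp (hN1 s hs))
  choose! f hf1 hf2 hf3 using hch
  -- tail root
  obtain ⟨ρ₀, hρ₀m, hρ₀R⟩ := lemTail hc hPR ((hSmem m).mp hmS)
  -- the root finset A of R
  set A : Finset ℝ := insert ρ₀ (T'.image f) with hAdef
  have hinjf : Set.InjOn f T' := by
    intro s1 h1 s2 h2 heq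
    by_contra hne
    rcases Ne.lt_or_gt hne with h | h
    · have := hN3 s1 h1 s2 (hT' s2 h2).1 h
      have := hf2 s1 h1
      have := hf1 s2 h2
      linarith [heq ▸ (by linarith : f s1 < f s2)]
    · have := hN3 s2 h2 s1 (hT' s1 h1).1 h
      have := hf2 s2 h2
      have := hf1 s1 h1
      linarith [heq ▸ (by linarith : f s2 < f s1)]
  have hρ₀not : ρ₀ ∉ T'.image f := by
    rw [Finset.mem_image]
    rintro ⟨s, hs, heq⟩
    have h1 := hmle s (hT' s hs).1
    have h2 := hf1 s hs
    linarith [heq ▸ (by linarith : ρ₀ < f s)]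
  have hAcard : A.card = n + 1 := by
    rw [hAdef, Finset.card_insert_of_notMem hρ₀not, Finset.card_image_of_injOn hinjf, hT'card]
  have hAroot : ∀ r ∈ A, eval r R = 0 := by
    intro r hr
    rcases Finset.mem_insert.mp hr with h | h
    · rw [h]; exact hρ₀R
    · obtain ⟨s, hs, rfl⟩ := Finset.mem_image.mp h
      exact hf3 s hs
  -- degree of R
  have hdegP : P.natDegree = n + 1 := by
    rw [hP, natDegree_mul hXb0 hQ0, natDegree_X_add_C, hQdeg, add_comm]
  have hcoeffR : R.coeff (n + 1) = c * P.coeff (n + 1) := by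
    rw [hRP, coeff_add, coeff_C_mul]
    have hd : (derivative P).natDegree < n + 1 := by
      rw [← hdegP]
      exact natDegree_derivative_lt (by rw [hdegP]; exact Nat.succ_ne_zero n)
    rw [coeff_eq_zero_of_natDegree_lt hd, zero_add]
  have hPlead : P.coeff (n + 1) ≠ 0 := by
    rw [← hdegP]
    exact fun h => hP0 (leadingCoeff_eq_zero.mp h)
  have hRcoeff : R.coeff (n + 1) ≠ 0 := by
    rw [hcoeffR]
    exact mul_ne_zero (ne_of_gt hc) hPlead
  have hR0 : R ≠ 0 := fun h => hRcoeff (by rw [h]; simp)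
  have hdegR : R.natDegree = n + 1 := by
    refine le_antisymm ?_ (le_natDegree_of_ne_zero hRcoeff)
    rw [hRP]
    refine (natDegree_add_le _ _).trans (max_le ?_ ?_)
    · have := natDegree_derivative_le P
      omega
    · exact (natDegree_C_mul_le _ _).trans (le_of_eq hdegP)
  -- completeness
  obtain ⟨hReal, hmemA, hSimple⟩ := lemB hR0 A hAroot (by rw [hdegR, hAcard])
  have hmb : m ≤ -b := hmle _ hbS
  have hA_lt : ∀ r ∈ A, r < -b := by
    intro r hr
    rcases Finset.mem_insert.mp hr with h | h
    · rw [h]; linarith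
    · obtain ⟨s, hs, rfl⟩ := Finset.mem_image.mp h
      exact lt_of_lt_of_le (hf2 s hs) (hNb s hs)
  -- characterization of roots in a gap
  have hchar : ∀ s t : ℝ, s < t → s ∈ S → t ∈ S →
      (∀ u ∈ S, ¬(s < u ∧ u < t)) →
      ∀ r', eval r' R = 0 → s < r' → r' < t → r' = f s := by
    intro s t hst hsS htS hno r' hr' h1 h2
    rcases Finset.mem_insert.mp (hmemA r' hr') with h | h
    · exfalso
      have := hmle s hsS
      rw [h] at h1
      linarith
    · obtain ⟨s1, hs1, rfl⟩ := Finset.mem_image.mp h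
      rcases lt_trichotomy s1 s with hlt | heq | hgt
      · have := hN3 s1 hs1 s hsS hlt
        have := hf2 s1 hs1
        linarith
      · rw [heq]
      · exact absurd ⟨hgt, lt_trans (hf1 s1 hs1) h2⟩ (hno s1 (hT' s1 hs1).1)
  -- no two roots of P strictly between consecutive roots of R
  refine ⟨hReal, hSimple, ?_, ?_, ?_⟩
  · intro r hr
    exact hA_lt r (hmemA r hr)
  · -- bullet 4
    intro s t hst hsQ htQ hnoQ
    have hsS : s ∈ S := (hSmem s).mpr ((hSP s).mpr hsQ)
    have htS : t ∈ S := (hSmem t).mpr ((hSP t).mpr htQ)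
    have hno' : ∀ u ∈ S, ¬(s < u ∧ u < t) := fun u hu =>
      hnoQ u ((hSP u).mp ((hSmem u).mp hu))
    obtain ⟨ρ, hρ1, hρ2, hρR⟩ := hgap s t hst ((hSmem s).mp hsS) ((hSmem t).mp htS)
    refine ⟨ρ, ⟨hρR, hρ1, hρ2⟩, ?_⟩
    rintro y ⟨hyR, hy1, hy2⟩
    rw [hchar s t hst hsS htS hno' y hyR hy1 hy2,
      hchar s t hst hsS htS hno' ρ hρR hρ1 hρ2]
  · -- bullet 5
    intro s t hst hsR htR hno
    have hsA := hmemA s hsR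
    have htA := hmemA t htR
    -- t has the form f s2
    have htform : ∃ s2 ∈ T', t = f s2 := by
      rcases Finset.mem_insert.mp htA with h | h
      · exfalso
        rcases Finset.mem_insert.mp hsA with h' | h'
        · rw [h] at hst; rw [h'] at hst; exact lt_irrefl _ hst
        · obtain ⟨s1, hs1, rfl⟩ := Finset.mem_image.mp h'
          have := hmle s1 (hT' s1 hs1).1
          have := hf1 s1 hs1
          rw [h] at hst
          linarith
      · obtain ⟨s2, hs2, heq⟩ := Finset.mem_image.mp h
        exact ⟨s2, hs2, heq.symm⟩
    obtain ⟨s2, hs2, hts2⟩ := htform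
    -- existence of a P-root in (s,t)
    have hex : ∃ u, u ∈ S ∧ s < u ∧ u < t := by
      rcases Finset.mem_insert.mp hsA with h | h
      · refine ⟨m, hmS, ?_, ?_⟩
        · rw [h]; exact hρ₀m
        · calc m ≤ s2 := hmle s2 (hT' s2 hs2).1
            _ < f s2 := hf1 s2 hs2
            _ = t := hts2.symm
      · obtain ⟨s1, hs1, heq⟩ := Finset.mem_image.mp h
        refine ⟨N s1, hN1 s1 hs1, ?_, ?_⟩
        · rw [← heq]; exact hf2 s1 hs1
        · rcases lt_trichotomy s1 s2 with hlt | heqs | hgt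
          · calc N s1 ≤ s2 := hN3 s1 hs1 s2 (hT' s2 hs2).1 hlt
              _ < f s2 := hf1 s2 hs2
              _ = t := hts2.symm
          · exfalso
            rw [heqs] at heq
            rw [← heq, hts2] at hst
            exact lt_irrefl _ hst
          · exfalso
            have h1 := hN3 s2 hs2 s1 (hT' s1 hs1).1 hgt
            have h2 := hf2 s2 hs2
            have h3 := hf1 s1 hs1
            rw [← heq] at hst
            rw [hts2] at hst
            linarith
    obtain ⟨u, huS, hu1, hu2⟩ := hex
    -- no two P-roots in (s,t)
    have huniq : ∀ u1 u2 : ℝ, u1 ∈ S → u2 ∈ S → s < u1 → u1 < u2 → u2 < t → False := by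
      intro u1 u2 hu1S hu2S h1 h12 h2
      have hu1T' : u1 ∈ T' := by
        rw [hT'def, Finset.mem_erase]
        refine ⟨?_, hu1S⟩
        intro hbe
        have := hble u2 hu2S
        rw [hbe] at h12
        linarith
      have ha := hf1 u1 hu1T'
      have hb := hf2 u1 hu1T'
      have hcc := hN3 u1 hu1T' u2 hu2S h12
      exact hno (f u1) (hf3 u1 hu1T') ⟨by linarith, by linarith⟩
    refine ⟨u, ⟨(hSP u).mp ((hSmem u).mp huS), hu1, hu2⟩, ?_⟩
    rintro y ⟨hyQ, hy1, hy2⟩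
    have hyS : y ∈ S := (hSmem y).mpr ((hSP y).mpr hyQ)
    rcases lt_trichotomy y u with h | h | h
    · exact absurd (huniq y u hyS huS hy1 h hu2) not_false
    · exact h
    · exact absurd (huniq u y huS hyS hu1 h hy2) not_false
end

section
/- Let {P_k} be real polynomials with deg P_k = k, P_0 a non-zero constant, satisfying P_{k+1}(x) = c(−a·x·P_k(x) + b·P_k(x) + P_k'(x)) for all k, where a > 0 and b, c ∈ ℝ with c ≠ 0. Then for each k ≥ 1, P_k has k distinct real zeros, and the zeros of P_{k-1} strictly interlace those of P_k. -/
open Polynomial Filter Real Set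

-- Gaussian decay
lemma aux_decay (p : ℝ[X]) (a b : ℝ) (ha : 0 < a) :
    Tendsto (fun x => Real.exp (-(a/2)*x^2 + b*x) * eval x p) atTop (nhds 0) := by
  have h1 : Tendsto (fun x => eval x p / Real.exp x) atTop (nhds 0) :=
    Polynomial.tendsto_div_exp_atTop p
  have hlin : Tendsto (fun x : ℝ => -(a/2)*x + (b+1)) atTop atBot :=
    tendsto_atBot_add_const_right _ (b+1) (tendsto_id.const_mul_atTop_of_neg (by linarith))
  have h2 : Tendsto (fun x : ℝ => -(a/2)*x^2 + (b+1)*x) atTop atBot := by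
    have := (tendsto_id (α := ℝ)).atTop_mul_atBot₀ hlin
    refine this.congr' ?_
    filter_upwards [eventually_ge_atTop (0:ℝ)] with x _
    simp only [id_eq]; ring
  have h3 : Tendsto (fun x : ℝ => Real.exp (-(a/2)*x^2 + (b+1)*x)) atTop (nhds 0) :=
    Real.tendsto_exp_atBot.comp h2
  have h4 := h1.mul h3
  rw [mul_zero] at h4
  refine h4.congr (fun x => ?_)
  rw [div_mul_eq_mul_div, div_eq_iff (Real.exp_ne_zero x), mul_comm (Real.exp _), mul_assoc,
    ← Real.exp_add]
  ring_nf

lemma aux_decay_bot (p : ℝ[X]) (a b : ℝ) (ha : 0 < a) :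
    Tendsto (fun x => Real.exp (-(a/2)*x^2 + b*x) * eval x p) atBot (nhds 0) := by
  have h := (aux_decay (p.comp (-X)) a (-b) ha).comp tendsto_neg_atBot_atTop
  refine h.congr fun x => ?_
  simp only [Function.comp, eval_comp, eval_neg, eval_X]
  ring_nf

-- positive case
lemma aux_rayTop_pos (f f' : ℝ → ℝ) (hf : ∀ x, HasDerivAt f (f' x) x) (r : ℝ) (hr : f r = 0)
    (h0 : Tendsto f atTop (nhds 0)) (x0 : ℝ) (hx0 : r < x0) (hfx0 : 0 < f x0) :
    ∃ x, r < x ∧ f' x = 0 := by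
  have hcont : Continuous f := by
    refine continuous_iff_continuousAt.2 fun x => (hf x).continuousAt
  obtain ⟨M0, hM0⟩ : ∃ M, ∀ y ≥ M, |f y| < f x0 := by
    have := (h0.eventually (eventually_abs_sub_lt 0 hfx0)).exists_forall_of_atTop
    simpa using this
  set M := max M0 (x0 + 1) with hM
  have hM1 : ∀ y ≥ M, |f y| < f x0 := fun y hy => hM0 y (le_trans (le_max_left _ _) hy)
  have hx0M : x0 < M := lt_of_lt_of_le (by linarith) (le_max_right _ _)
  have hrM : r < M := hx0.trans hx0M
  obtain ⟨ξ, hξmem, hξmax⟩ := (isCompact_Icc (a := r) (b := M)).exists_isMaxOn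
    (Set.nonempty_Icc.2 hrM.le) (hcont.continuousOn)
  have hfξ : f x0 ≤ f ξ := hξmax ⟨hx0.le, hx0M.le⟩
  have hξr : ξ ≠ r := by
    intro h; rw [h, hr] at hfξ; linarith
  have hξM : ξ ≠ M := by
    intro h
    have := hM1 M le_rfl
    rw [← h] at this
    have := abs_lt.1 this
    linarith
  have hξIoo : ξ ∈ Ioo r M := ⟨lt_of_le_of_ne hξmem.1 (Ne.symm hξr), lt_of_le_of_ne hξmem.2 hξM⟩
  have hloc : IsLocalMax f ξ := hξmax.isLocalMax (Icc_mem_nhds hξIoo.1 hξIoo.2)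
  exact ⟨ξ, hξIoo.1, hloc.hasDerivAt_eq_zero (hf ξ)⟩

lemma aux_rayTop (f f' : ℝ → ℝ) (hf : ∀ x, HasDerivAt f (f' x) x) (r : ℝ) (hr : f r = 0)
    (h0 : Tendsto f atTop (nhds 0)) (x0 : ℝ) (hx0 : r < x0) (hfx0 : f x0 ≠ 0) :
    ∃ x, r < x ∧ f' x = 0 := by
  rcases hfx0.lt_or_gt with h | h
  · obtain ⟨x, hx1, hx2⟩ := aux_rayTop_pos (fun y => -(f y)) (fun y => -(f' y))
      (fun y => (hf y).neg) r (by simp [hr]) (by simpa using h0.neg) x0 hx0 (by simpa using h)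
    exact ⟨x, hx1, by linarith⟩
  · exact aux_rayTop_pos f f' hf r hr h0 x0 hx0 h

lemma aux_rayBot (f f' : ℝ → ℝ) (hf : ∀ x, HasDerivAt f (f' x) x) (r : ℝ) (hr : f r = 0)
    (h0 : Tendsto f atBot (nhds 0)) (x0 : ℝ) (hx0 : x0 < r) (hfx0 : f x0 ≠ 0) :
    ∃ x, x < r ∧ f' x = 0 := by
  have hf' : ∀ x : ℝ, HasDerivAt (fun y => f (-y)) (-(f' (-x))) x := by
    intro x
    exact ((hf (-x)).comp x (hasDerivAt_neg x)).congr_deriv (by ring)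
  obtain ⟨x, hx1, hx2⟩ := aux_rayTop _ _ hf' (-r) (by simpa using hr)
    (h0.comp tendsto_neg_atTop_atBot) (-x0) (by linarith) (by simpa using hfx0)
  exact ⟨-x, by linarith, by linarith [hx2]⟩

lemma aux_line_pos (f f' : ℝ → ℝ) (hf : ∀ x, HasDerivAt f (f' x) x)
    (hT : Tendsto f atTop (nhds 0)) (hB : Tendsto f atBot (nhds 0))
    (x0 : ℝ) (hfx0 : 0 < f x0) : ∃ x, f' x = 0 := by
  have hcont : Continuous f := continuous_iff_continuousAt.2 fun x => (hf x).continuousAt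
  obtain ⟨M0, hM0⟩ : ∃ M, ∀ y ≥ M, |f y| < f x0 := by
    have := (hT.eventually (eventually_abs_sub_lt 0 hfx0)).exists_forall_of_atTop
    simpa using this
  obtain ⟨m0, hm0⟩ : ∃ m, ∀ y ≤ m, |f y| < f x0 := by
    have := (hB.eventually (eventually_abs_sub_lt 0 hfx0)).exists_forall_of_atBot
    simpa using this
  set M := max M0 (x0 + 1) with hMdef
  set m := min m0 (x0 - 1) with hmdef
  have hM1 : ∀ y ≥ M, |f y| < f x0 := fun y hy => hM0 y (le_trans (le_max_left _ _) hy)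
  have hm1 : ∀ y ≤ m, |f y| < f x0 := fun y hy => hm0 y (le_trans hy (min_le_left _ _))
  have hx0M : x0 < M := lt_of_lt_of_le (by linarith) (le_max_right _ _)
  have hmx0 : m < x0 := lt_of_le_of_lt (min_le_right _ _) (by linarith)
  obtain ⟨ξ, hξmem, hξmax⟩ := (isCompact_Icc (a := m) (b := M)).exists_isMaxOn
    (Set.nonempty_Icc.2 (by linarith)) (hcont.continuousOn)
  have hfξ : f x0 ≤ f ξ := hξmax ⟨hmx0.le, hx0M.le⟩
  have hξm : ξ ≠ m := by
    intro h
    have := hm1 m le_rfl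
    rw [← h] at this; have := abs_lt.1 this; linarith
  have hξM : ξ ≠ M := by
    intro h
    have := hM1 M le_rfl
    rw [← h] at this; have := abs_lt.1 this; linarith
  have hξIoo : ξ ∈ Ioo m M := ⟨lt_of_le_of_ne hξmem.1 (Ne.symm hξm), lt_of_le_of_ne hξmem.2 hξM⟩
  have hloc : IsLocalMax f ξ := hξmax.isLocalMax (Icc_mem_nhds hξIoo.1 hξIoo.2)
  exact ⟨ξ, hloc.hasDerivAt_eq_zero (hf ξ)⟩

lemma aux_line (f f' : ℝ → ℝ) (hf : ∀ x, HasDerivAt f (f' x) x)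
    (hT : Tendsto f atTop (nhds 0)) (hB : Tendsto f atBot (nhds 0))
    (x0 : ℝ) (hfx0 : f x0 ≠ 0) : ∃ x, f' x = 0 := by
  rcases hfx0.lt_or_gt with h | h
  · obtain ⟨x, hx⟩ := aux_line_pos (fun y => -(f y)) (fun y => -(f' y))
      (fun y => (hf y).neg) (by simpa using hT.neg) (by simpa using hB.neg) x0 (by simpa using h)
    exact ⟨x, by linarith⟩
  · exact aux_line_pos f f' hf hT hB x0 h

lemma aux_deriv (p : ℝ[X]) (a b : ℝ) (x : ℝ) :
    HasDerivAt (fun y => Real.exp (-(a/2)*y^2 + b*y) * eval y p)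
      (Real.exp (-(a/2)*x^2 + b*x) * ((-a*x + b) * eval x p + eval x (derivative p))) x := by
  have h1 : HasDerivAt (fun y : ℝ => -(a/2)*y^2 + b*y) (-a*x + b) x := by
    have := ((hasDerivAt_pow 2 x).const_mul (-(a/2))).add ((hasDerivAt_id x).const_mul b)
    refine this.congr_deriv ?_
    simp; ring
  have h2 := (h1.exp).mul (p.hasDerivAt x)
  refine h2.congr_deriv ?_
  ring

lemma aux_step (a b c : ℝ) (ha : 0 < a) (hc : c ≠ 0) (p q : ℝ[X]) (k : ℕ)
    (hp : p ≠ 0) (hq : q.natDegree = k + 1)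
    (hrec : q = C c * (-(C a) * X * p + C b * p + derivative p))
    (hcard : p.roots.card = k) (hnd : p.roots.Nodup) :
    (q.roots.card = k + 1 ∧ q.roots.Nodup) ∧
    ∃ w : ℕ → ℝ,
      (∀ i ≤ k, eval (w i) q = 0 ∧ w i ∉ p.roots.toFinset ∧
        ((p.roots.toFinset.filter (· < w i)).card = i)) ∧
      (∀ x, eval x q = 0 → ∃ i ≤ k, x = w i) := by
  classical
  have hq0 : q ≠ 0 := by intro h; rw [h] at hq; simp at hq
  set R : Finset ℝ := p.roots.toFinset with hRdef
  have hR : R.card = k := (Multiset.toFinset_card_eq_card_iff_nodup.2 hnd).trans hcard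
  have hmemR : ∀ x : ℝ, x ∈ R ↔ eval x p = 0 := by
    intro x
    rw [hRdef, Multiset.mem_toFinset, mem_roots hp]
    rfl
  have heval : ∀ x : ℝ, eval x q = c * ((-a*x + b) * eval x p + eval x (derivative p)) := by
    intro x
    rw [hrec]
    simp only [eval_mul, eval_add, eval_neg, eval_C, eval_X]
    ring
  set g : ℝ → ℝ := fun y => Real.exp (-(a/2)*y^2 + b*y) * eval y p with hgdef
  set D : ℝ → ℝ := fun x =>
    Real.exp (-(a/2)*x^2 + b*x) * ((-a*x + b) * eval x p + eval x (derivative p)) with hDdef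
  have hg : ∀ x, HasDerivAt g (D x) x := fun x => aux_deriv p a b x
  have hgc : Continuous g := continuous_iff_continuousAt.2 fun x => (hg x).continuousAt
  have hD0 : ∀ x, D x = 0 → eval x q = 0 := by
    intro x hx
    rw [heval]
    rcases mul_eq_zero.1 hx with h | h
    · exact absurd h (Real.exp_ne_zero _)
    · rw [h, mul_zero]
  have hgzero : ∀ x : ℝ, eval x p = 0 → g x = 0 := by
    intro x hx; rw [hgdef]; simp [hx]
  have hgne : ∀ x : ℝ, eval x p ≠ 0 → g x ≠ 0 :=
    fun x hx => mul_ne_zero (Real.exp_ne_zero _) hx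
  have hT : Tendsto g atTop (nhds 0) := aux_decay p a b ha
  have hB : Tendsto g atBot (nhds 0) := aux_decay_bot p a b ha
  -- witnesses
  have hwit : ∀ i, i ≤ k → ∃ x, eval x q = 0 ∧ x ∉ R ∧ (R.filter (· < x)).card = i := by
    rcases Nat.eq_zero_or_pos k with hk0 | hkpos
    · subst hk0
      intro i hi
      have hi0 : i = 0 := Nat.le_zero.1 hi
      subst hi0
      have hRe : R = ∅ := Finset.card_eq_zero.1 hR
      have hx0 : eval 0 p ≠ 0 := by
        intro h
        have : (0:ℝ) ∈ R := (hmemR 0).2 h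
        rw [hRe] at this
        exact absurd this (Finset.notMem_empty _)
      obtain ⟨x, hx⟩ := aux_line g D hg hT hB 0 (hgne 0 hx0)
      exact ⟨x, hD0 x hx, by simp [hRe], by simp [hRe]⟩
    · set e := R.orderIsoOfFin hR with hedef
      have hmono : ∀ j1 j2 : Fin k, j1 ≤ j2 → (e j1 : ℝ) ≤ (e j2 : ℝ) :=
        fun j1 j2 h => Subtype.coe_le_coe.2 (e.monotone h)
      have hroot : ∀ j : Fin k, eval ((e j : ℝ)) p = 0 := fun j => (hmemR _).1 (e j).2
      have hsurjR : ∀ ρ ∈ R, ∃ j : Fin k, (e j : ℝ) = ρ := by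
        intro ρ hρ
        obtain ⟨j, hj⟩ := e.surjective ⟨ρ, hρ⟩
        exact ⟨j, by rw [hj]⟩
      -- counting helper
      have hNcard : ∀ (x : ℝ) (i : ℕ), ∀ hik : i ≤ k, (∀ j : Fin k, ((e j : ℝ) < x ↔ (j : ℕ) < i)) →
          (R.filter (· < x)).card = i := by
        intro x i hik hiff
        have himg : R.filter (· < x)
            = (Finset.univ.filter (fun j : Fin k => (j:ℕ) < i)).image (fun j => (e j : ℝ)) := by
          ext ρ
          simp only [Finset.mem_image, Finset.mem_filter, Finset.mem_univ, true_and]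
          constructor
          · rintro ⟨hρR, hρx⟩
            obtain ⟨j, hj⟩ := hsurjR ρ hρR
            exact ⟨j, (hiff j).1 (by rw [hj]; exact hρx), hj⟩
          · rintro ⟨j, hji, rfl⟩
            exact ⟨(e j).2, (hiff j).2 hji⟩
        have hinj : Function.Injective (fun j : Fin k => (e j : ℝ)) := by
          intro j1 j2 h
          exact e.injective (Subtype.ext h)
        rw [himg, Finset.card_image_of_injective _ hinj]
        have himg2 : Finset.univ.filter (fun j : Fin k => (j:ℕ) < i)
            = Finset.univ.image (Fin.castLE hik) := by
          ext j
          simp only [Finset.mem_image, Finset.mem_filter, Finset.mem_univ, true_and]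
          constructor
          · intro hj
            exact ⟨⟨(j:ℕ), hj⟩, rfl⟩
          · rintro ⟨j', rfl⟩
            exact j'.2
        rw [himg2, Finset.card_image_of_injective _ (Fin.castLE_injective hik),
          Finset.card_univ, Fintype.card_fin]
      intro i hi
      rcases Nat.eq_zero_or_pos i with hi0 | hipos
      · subst hi0
        set r : ℝ := (e ⟨0, hkpos⟩ : ℝ) with hrdef
        have hrmin : ∀ ρ ∈ R, r ≤ ρ := by
          intro ρ hρ
          obtain ⟨j, hj⟩ := hsurjR ρ hρ
          rw [← hj]
          exact hmono _ _ (Fin.mk_le_mk.2 (Nat.zero_le _))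
        have hx0 : eval (r - 1) p ≠ 0 := by
          intro h
          have := hrmin _ ((hmemR _).2 h)
          linarith
        obtain ⟨x, hxr, hxD⟩ := aux_rayBot g D hg r (hgzero r (hroot _)) hB (r - 1)
          (by linarith) (hgne _ hx0)
        refine ⟨x, hD0 x hxD, ?_, ?_⟩
        · intro hx
          have := hrmin x hx
          linarith
        · refine hNcard x 0 (Nat.zero_le _) fun j => ?_
          simp only [Nat.not_lt_zero, iff_false, not_lt]
          calc x ≤ r := hxr.le
          _ ≤ (e j : ℝ) := hrmin _ (e j).2
      · rcases eq_or_lt_of_le hi with hik | hilt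
        · -- i = k : top ray
          subst hik
          set r : ℝ := (e ⟨i - 1, by omega⟩ : ℝ) with hrdef
          have hrmax : ∀ ρ ∈ R, ρ ≤ r := by
            intro ρ hρ
            obtain ⟨j, hj⟩ := hsurjR ρ hρ
            rw [← hj]
            refine hmono _ _ (Fin.le_def.2 ?_)
            have := j.isLt
            simp only []
            omega
          have hx0 : eval (r + 1) p ≠ 0 := by
            intro h
            have := hrmax _ ((hmemR _).2 h)
            linarith
          obtain ⟨x, hxr, hxD⟩ := aux_rayTop g D hg r (hgzero r (hroot _)) hT (r + 1)
            (by linarith) (hgne _ hx0)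
          refine ⟨x, hD0 x hxD, ?_, ?_⟩
          · intro hx
            have := hrmax x hx
            linarith
          · refine hNcard x i le_rfl fun j => ?_
            have hjlt := j.isLt
            simp only [hjlt, iff_true]
            calc (e j : ℝ) ≤ r := hrmax _ (e j).2
            _ < x := hxr
        · -- middle case
          set r : ℝ := (e ⟨i - 1, by omega⟩ : ℝ) with hrdef
          set s : ℝ := (e ⟨i, hilt⟩ : ℝ) with hsdef
          have hrs : r < s := by
            refine lt_of_le_of_ne (hmono _ _ (Fin.le_def.2 (by simp only []; omega))) ?_
            intro h
            have := e.injective (Subtype.ext h)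
            rw [Fin.mk.injEq] at this
            omega
          obtain ⟨x, hxmem, hxD⟩ := exists_hasDerivAt_eq_zero hrs hgc.continuousOn
            (by rw [hgzero r (hroot _), hgzero s (hroot _)]) (fun x _ => hg x)
          have hiff : ∀ j : Fin k, ((e j : ℝ) < x ↔ (j : ℕ) < i) := by
            intro j
            constructor
            · intro hj
              by_contra hji
              have : s ≤ (e j : ℝ) := hmono _ _ (Fin.le_def.2 (by simp only []; omega))
              have := hxmem.2
              linarith
            · intro hj
              have : (e j : ℝ) ≤ r := hmono _ _ (Fin.le_def.2 (by simp only []; omega))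
              have := hxmem.1
              linarith
          refine ⟨x, hD0 x hxD, ?_, hNcard x i hi hiff⟩
          · intro hx
            obtain ⟨j, hj⟩ := hsurjR x hx
            rcases lt_or_ge ((j : ℕ)) i with h | h
            · have := (hiff j).2 h
              rw [hj] at this
              exact lt_irrefl _ this
            · have : s ≤ (e j : ℝ) := hmono _ _ (Fin.le_def.2 (by simp only []; omega))
              rw [hj] at this
              have := hxmem.2
              linarith
  -- assemble
  have hwit2 : ∀ i : ℕ, ∃ x, (i ≤ k → eval x q = 0 ∧ x ∉ R ∧ (R.filter (· < x)).card = i) := by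
    intro i
    by_cases h : i ≤ k
    · obtain ⟨x, hx⟩ := hwit i h
      exact ⟨x, fun _ => hx⟩
    · exact ⟨0, fun h' => absurd h' h⟩
  choose w hw using hwit2
  set S : Finset ℝ := q.roots.toFinset with hSdef
  have hmemS : ∀ x : ℝ, x ∈ S ↔ eval x q = 0 := by
    intro x
    rw [hSdef, Multiset.mem_toFinset, mem_roots hq0]
    rfl
  have hWsub : (Finset.range (k+1)).image w ⊆ S := by
    intro x hx
    obtain ⟨i, hi, rfl⟩ := Finset.mem_image.1 hx
    exact (hmemS _).2 (hw i (Nat.lt_succ_iff.1 (Finset.mem_range.1 hi))).1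
  have hWcard : ((Finset.range (k+1)).image w).card = k + 1 := by
    rw [Finset.card_image_of_injOn, Finset.card_range]
    intro i hi j hj hij
    have hi' := Nat.lt_succ_iff.1 (Finset.mem_range.1 hi)
    have hj' := Nat.lt_succ_iff.1 (Finset.mem_range.1 hj)
    have h1 := (hw i hi').2.2
    have h2 := (hw j hj').2.2
    rw [hij] at h1
    rw [h1] at h2
    exact h2
  have hScard_le : S.card ≤ k + 1 := by
    calc S.card ≤ Multiset.card q.roots := Multiset.toFinset_card_le _
    _ ≤ q.natDegree := q.card_roots'
    _ = k + 1 := hq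
  have hSeq : S = (Finset.range (k+1)).image w :=
    (Finset.eq_of_subset_of_card_le hWsub (by omega)).symm
  have hScard : S.card = k + 1 := by rw [hSeq, hWcard]
  have hrcard : Multiset.card q.roots = k + 1 := by
    have h1 : S.card ≤ Multiset.card q.roots := Multiset.toFinset_card_le _
    have h2 : Multiset.card q.roots ≤ k + 1 := le_of_le_of_eq q.card_roots' hq
    omega
  have hrnd : q.roots.Nodup :=
    Multiset.toFinset_card_eq_card_iff_nodup.1 (hScard.trans hrcard.symm)
  refine ⟨⟨hrcard, hrnd⟩, w, fun i hi => hw i hi, ?_⟩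
  intro x hx
  have : x ∈ S := (hmemS x).2 hx
  rw [hSeq] at this
  obtain ⟨i, hi, rfl⟩ := Finset.mem_image.1 this
  exact ⟨i, Nat.lt_succ_iff.1 (Finset.mem_range.1 hi), rfl⟩

theorem stmt_8 (P : ℕ → ℝ[X]) (a b c : ℝ) (ha : 0 < a) (hc : c ≠ 0)
    (hdeg : ∀ k, (P k).natDegree = k)
    (hP0 : ∃ r : ℝ, r ≠ 0 ∧ P 0 = C r)
    (hrec : ∀ k, P (k + 1) = C c * (-(C a) * X * P k + C b * P k + derivative (P k))) :
    ∀ k : ℕ, 1 ≤ k →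
      -- P k has k distinct real zeros
      ((P k).roots.card = k ∧ (P k).roots.Nodup) ∧
      -- between consecutive zeros of P k there is exactly one zero of P (k-1)
      (∀ r s : ℝ, r < s → eval r (P k) = 0 → eval s (P k) = 0 →
        (∀ u : ℝ, eval u (P k) = 0 → ¬(r < u ∧ u < s)) →
        ∃! t : ℝ, eval t (P (k - 1)) = 0 ∧ r < t ∧ t < s) ∧
      -- the extremal zeros of P k lie strictly outside those of P (k-1)
      (∀ t : ℝ, eval t (P (k - 1)) = 0 →
        (∃ r : ℝ, eval r (P k) = 0 ∧ r < t) ∧ (∃ s : ℝ, eval s (P k) = 0 ∧ t < s)) := by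
  classical
  have hPne : ∀ n, P n ≠ 0 := by
    intro n
    cases n with
    | zero =>
      obtain ⟨r₀, hr₀, h0⟩ := hP0
      rw [h0]
      intro h
      exact hr₀ (by simpa using (C_eq_zero.1 h))
    | succ n =>
      intro h
      have := hdeg (n+1)
      rw [h] at this
      simp at this
  have hA : ∀ n, (P n).roots.card = n ∧ (P n).roots.Nodup := by
    intro n
    induction n with
    | zero =>
      obtain ⟨r₀, hr₀, h0⟩ := hP0
      rw [h0]
      simp [roots_C]
    | succ n ih =>
      exact (aux_step a b c ha hc (P n) (P (n+1)) n (hPne n) (hdeg (n+1)) (hrec n) ih.1 ih.2).1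
  intro k hk
  obtain ⟨m, rfl⟩ : ∃ m, k = m + 1 := ⟨k - 1, (Nat.succ_pred_eq_of_pos hk).symm⟩
  obtain ⟨_, w, hw, hsurj⟩ := aux_step a b c ha hc (P m) (P (m+1)) m (hPne m) (hdeg (m+1))
    (hrec m) (hA m).1 (hA m).2
  set R : Finset ℝ := (P m).roots.toFinset with hRdef
  have hmemR : ∀ x : ℝ, x ∈ R ↔ eval x (P m) = 0 := by
    intro x
    rw [hRdef, Multiset.mem_toFinset, mem_roots (hPne m)]
    rfl
  have hRcard : R.card = m := (Multiset.toFinset_card_eq_card_iff_nodup.2 (hA m).2).trans (hA m).1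
  have hmono : ∀ x y : ℝ, x ≤ y → (R.filter (· < x)).card ≤ (R.filter (· < y)).card := by
    intro x y hxy
    refine Finset.card_le_card ?_
    intro ρ hρ
    obtain ⟨h1, h2⟩ := Finset.mem_filter.1 hρ
    exact Finset.mem_filter.2 ⟨h1, lt_of_lt_of_le h2 hxy⟩
  have hmono' : ∀ x y : ℝ, (R.filter (· < x)).card < (R.filter (· < y)).card → x < y := by
    intro x y h
    by_contra h'
    push_neg at h'
    exact absurd (hmono y x h') (by omega)
  have hstrict : ∀ t ∈ R, ∀ x : ℝ, t < x →
      (R.filter (· < t)).card < (R.filter (· < x)).card := by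
    intro t ht x htx
    have hsub : insert t (R.filter (· < t)) ⊆ R.filter (· < x) := by
      intro ρ hρ
      rcases Finset.mem_insert.1 hρ with rfl | hρ
      · exact Finset.mem_filter.2 ⟨ht, htx⟩
      · obtain ⟨h1, h2⟩ := Finset.mem_filter.1 hρ
        exact Finset.mem_filter.2 ⟨h1, h2.trans htx⟩
    have h1 := Finset.card_le_card hsub
    have hnm : t ∉ R.filter (· < t) := fun h => lt_irrefl t (Finset.mem_filter.1 h).2
    rwa [Finset.card_insert_of_notMem hnm, Nat.add_one, Nat.succ_le_iff] at h1
  have hbound : ∀ t ∈ R, (R.filter (· < t)).card + 1 ≤ m := by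
    intro t ht
    have hsub : R.filter (· < t) ⊆ R.erase t := by
      intro ρ hρ
      obtain ⟨h1, h2⟩ := Finset.mem_filter.1 hρ
      exact Finset.mem_erase.2 ⟨ne_of_lt h2, h1⟩
    have h1 := Finset.card_le_card hsub
    rw [Finset.card_erase_of_mem ht, hRcard] at h1
    have h2 : 0 < m := hRcard ▸ Finset.card_pos.2 ⟨t, ht⟩
    omega
  have hwroot : ∀ i ≤ m, eval (w i) (P (m+1)) = 0 := fun i hi => (hw i hi).1
  have hwnotR : ∀ i ≤ m, w i ∉ R := fun i hi => (hw i hi).2.1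
  have hwN : ∀ i ≤ m, (R.filter (· < w i)).card = i := fun i hi => (hw i hi).2.2
  refine ⟨hA (m+1), ?_, ?_⟩
  · -- clause 2
    intro r s hrs hr hs hcons
    simp only [Nat.add_sub_cancel]
    obtain ⟨i, hi, rfl⟩ := hsurj r hr
    obtain ⟨j, hj, rfl⟩ := hsurj s hs
    have hNi := hwN i hi
    have hNj := hwN j hj
    have hij : i < j := by
      have h1 := hmono _ _ hrs.le
      rw [hNi, hNj] at h1
      have h2 : i ≠ j := fun h => by rw [h] at hrs; exact lt_irrefl _ hrs
      omega
    have hji : j = i + 1 := by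
      by_contra h
      have hi1 : i + 1 ≤ m := by omega
      have h1 : w i < w (i+1) := by
        refine hmono' _ _ ?_
        rw [hNi, hwN _ hi1]
        omega
      have h2 : w (i+1) < w j := by
        refine hmono' _ _ ?_
        rw [hNj, hwN _ hi1]
        omega
      exact hcons _ (hwroot _ hi1) ⟨h1, h2⟩
    subst hji
    have hBA : R.filter (· < w i) ⊆ R.filter (· < w (i+1)) := by
      intro ρ hρ
      obtain ⟨h1, h2⟩ := Finset.mem_filter.1 hρ
      exact Finset.mem_filter.2 ⟨h1, h2.trans hrs⟩
    have hcardAB : (R.filter (· < w (i+1)) \ R.filter (· < w i)).card = 1 := by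
      rw [Finset.card_sdiff_of_subset hBA, hNi, hNj]
      omega
    obtain ⟨t, ht⟩ := Finset.card_eq_one.1 hcardAB
    have htmem : t ∈ R.filter (· < w (i+1)) \ R.filter (· < w i) := by
      rw [ht]; exact Finset.mem_singleton_self t
    obtain ⟨htA, htB⟩ := Finset.mem_sdiff.1 htmem
    obtain ⟨htR, hts⟩ := Finset.mem_filter.1 htA
    have htr : w i < t := by
      rcases lt_or_ge (w i) t with h | h
      · exact h
      · exfalso
        rcases eq_or_lt_of_le h with h' | h'
        · exact hwnotR i hi (h' ▸ htR)
        · exact htB (Finset.mem_filter.2 ⟨htR, h'⟩)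
    refine ⟨t, ⟨(hmemR t).1 htR, htr, hts⟩, ?_⟩
    rintro t' ⟨ht'root, ht'r, ht's⟩
    have ht'mem : t' ∈ R.filter (· < w (i+1)) \ R.filter (· < w i) :=
      Finset.mem_sdiff.2 ⟨Finset.mem_filter.2 ⟨(hmemR t').2 ht'root, ht's⟩,
        fun h => absurd (Finset.mem_filter.1 h).2 (not_lt.2 ht'r.le)⟩
    rw [ht] at ht'mem
    exact Finset.mem_singleton.1 ht'mem
  · -- clause 3
    intro t ht
    simp only [Nat.add_sub_cancel] at ht
    have htR : t ∈ R := (hmemR t).2 ht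
    have hb := hbound t htR
    constructor
    · refine ⟨w ((R.filter (· < t)).card), hwroot _ (by omega), ?_⟩
      rcases lt_or_ge (w ((R.filter (· < t)).card)) t with h | h
      · exact h
      · exfalso
        rcases eq_or_lt_of_le h with h' | h'
        · exact hwnotR _ (by omega) (h' ▸ htR)
        · have h2 := hstrict t htR _ h'
          rw [hwN _ (by omega)] at h2
          omega
    · refine ⟨w ((R.filter (· < t)).card + 1), hwroot _ hb, ?_⟩
      refine hmono' _ _ ?_
      rw [hwN _ hb]
      omega
end

section
/- Let {P_k} be real polynomials with deg P_k = k, P_0 a non-zero constant, satisfying P_{k+1}(x) = c(−a·x + b + D)P_k(x) with a > 0, b, c ∈ ℝ, c ≠ 0. For k ≥ 1 let M_k and m_k denote the largest and smallest (real) zero of P_k. Then for each k, the Turán expression (P_{k+1}(x))² − P_{k+2}(x)·P_k(x) is non-zero at every complex x with Re x > M_{k+1} or Re x < m_{k+1}. -/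
open Polynomial Filter Set



private lemma interior_max_lemma {f f' : ℝ → ℝ} (hd : ∀ x, HasDerivAt f (f' x) x)
    {L R z : ℝ} (hLz : L < z) (hzR : z < R) (hL : f L < f z) (hR : f R < f z) :
    ∃ w ∈ Set.Ioo L R, f' w = 0 := by
  have hcont : ContinuousOn f (Set.Icc L R) := fun x _ =>
    ((hd x).continuousAt).continuousWithinAt
  have hne : (Set.Icc L R).Nonempty := ⟨z, le_of_lt hLz, le_of_lt hzR⟩
  obtain ⟨w, hw, hmax⟩ := (isCompact_Icc).exists_isMaxOn hne hcont
  have hfwz : f z ≤ f w := hmax ⟨le_of_lt hLz, le_of_lt hzR⟩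
  have hwL : w ≠ L := fun h => absurd hfwz (by rw [h]; exact not_le.mpr hL)
  have hwR : w ≠ R := fun h => absurd hfwz (by rw [h]; exact not_le.mpr hR)
  have hwIoo : w ∈ Set.Ioo L R := ⟨lt_of_le_of_ne hw.1 (Ne.symm hwL), lt_of_le_of_ne hw.2 hwR⟩
  refine ⟨w, hwIoo, ?_⟩
  have hloc : IsLocalMax f w := hmax.isLocalMax (Icc_mem_nhds hwIoo.1 hwIoo.2)
  exact hloc.hasDerivAt_eq_zero (hd w)

private lemma interior_min_lemma {f f' : ℝ → ℝ} (hd : ∀ x, HasDerivAt f (f' x) x)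
    {L R z : ℝ} (hLz : L < z) (hzR : z < R) (hL : f z < f L) (hR : f z < f R) :
    ∃ w ∈ Set.Ioo L R, f' w = 0 := by
  obtain ⟨w, hw, hw0⟩ := interior_max_lemma (f := fun y => -f y) (f' := fun y => -f' y)
    (fun x => (hd x).neg) hLz hzR (by simpa) (by simpa)
  exact ⟨w, hw, by simpa using hw0⟩

private lemma rolle_top {f f' : ℝ → ℝ} (hd : ∀ x, HasDerivAt f (f' x) x)
    {s z : ℝ} (hsz : s < z) (hfs : f s = 0) (hfz : f z ≠ 0)
    (hlim : Tendsto f atTop (nhds 0)) : ∃ w, s < w ∧ f' w = 0 := by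
  rcases hfz.lt_or_gt with hneg | hpos
  · have hev : ∀ᶠ y in atTop, f z < f y := hlim.eventually (eventually_gt_nhds hneg)
    obtain ⟨R0, hR0⟩ := eventually_atTop.mp hev
    obtain ⟨w, hw, hw0⟩ := interior_min_lemma hd (L := s) (z := z) (R := max R0 (z+1)) hsz
      (lt_of_lt_of_le (by linarith) (le_max_right _ _))
      (by rw [hfs]; exact hneg) (hR0 _ (le_max_left _ _))
    exact ⟨w, hw.1, hw0⟩
  · have hev : ∀ᶠ y in atTop, f y < f z := hlim.eventually (eventually_lt_nhds hpos)
    obtain ⟨R0, hR0⟩ := eventually_atTop.mp hev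
    obtain ⟨w, hw, hw0⟩ := interior_max_lemma hd (L := s) (z := z) (R := max R0 (z+1)) hsz
      (lt_of_lt_of_le (by linarith) (le_max_right _ _))
      (by rw [hfs]; exact hpos) (hR0 _ (le_max_left _ _))
    exact ⟨w, hw.1, hw0⟩

private lemma rolle_bot {f f' : ℝ → ℝ} (hd : ∀ x, HasDerivAt f (f' x) x)
    {s z : ℝ} (hzs : z < s) (hfs : f s = 0) (hfz : f z ≠ 0)
    (hlim : Tendsto f atBot (nhds 0)) : ∃ w, w < s ∧ f' w = 0 := by
  have hd' : ∀ x : ℝ, HasDerivAt (fun y => f (-y)) (f' (-x) * (-1)) x := fun x =>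
    HasDerivAt.comp x (hd (-x)) (hasDerivAt_neg x)
  have hlim' : Tendsto (fun y => f (-y)) atTop (nhds 0) :=
    hlim.comp tendsto_neg_atTop_atBot
  obtain ⟨w, hw, hw0⟩ := rolle_top hd' (s := -s) (z := -z) (by linarith)
    (by simpa using hfs) (by simpa using hfz) hlim'
  refine ⟨-w, by linarith, ?_⟩
  have : f' (-w) * (-1) = 0 := hw0
  linarith [this]

private lemma rolle_both {f f' : ℝ → ℝ} (hd : ∀ x, HasDerivAt f (f' x) x)
    {z : ℝ} (hfz : f z ≠ 0)
    (htop : Tendsto f atTop (nhds 0)) (hbot : Tendsto f atBot (nhds 0)) :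
    ∃ w, f' w = 0 := by
  rcases hfz.lt_or_gt with hneg | hpos
  · have hev : ∀ᶠ y in atTop, f z < f y := htop.eventually (eventually_gt_nhds hneg)
    have hev' : ∀ᶠ y in atBot, f z < f y := hbot.eventually (eventually_gt_nhds hneg)
    obtain ⟨R0, hR0⟩ := eventually_atTop.mp hev
    obtain ⟨L0, hL0⟩ := eventually_atBot.mp hev'
    obtain ⟨w, _, hw0⟩ := interior_min_lemma hd (L := min L0 (z-1)) (z := z) (R := max R0 (z+1))
      (lt_of_le_of_lt (min_le_right _ _) (by linarith))
      (lt_of_lt_of_le (by linarith) (le_max_right _ _))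
      (hL0 _ (min_le_left _ _)) (hR0 _ (le_max_left _ _))
    exact ⟨w, hw0⟩
  · have hev : ∀ᶠ y in atTop, f y < f z := htop.eventually (eventually_lt_nhds hpos)
    have hev' : ∀ᶠ y in atBot, f y < f z := hbot.eventually (eventually_lt_nhds hpos)
    obtain ⟨R0, hR0⟩ := eventually_atTop.mp hev
    obtain ⟨L0, hL0⟩ := eventually_atBot.mp hev'
    obtain ⟨w, _, hw0⟩ := interior_max_lemma hd (L := min L0 (z-1)) (z := z) (R := max R0 (z+1))
      (lt_of_le_of_lt (min_le_right _ _) (by linarith))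
      (lt_of_lt_of_le (by linarith) (le_max_right _ _))
      (hL0 _ (min_le_left _ _)) (hR0 _ (le_max_left _ _))
    exact ⟨w, hw0⟩


private lemma hasDeriv_weighted (p : ℝ[X]) (a b : ℝ) (x : ℝ) :
    HasDerivAt (fun y => eval y p * Real.exp (-a/2 * y^2 + b*y))
      (eval x (-(C a) * X * p + C b * p + derivative p) * Real.exp (-a/2 * x^2 + b*x)) x := by
  have h1 : HasDerivAt (fun y => eval y p) (eval x (derivative p)) x := p.hasDerivAt x
  have h2 : HasDerivAt (fun y : ℝ => -a/2 * y^2 + b*y) (-a*x + b) x := by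
    have h := ((hasDerivAt_pow 2 x).const_mul (-a/2)).add ((hasDerivAt_id x).const_mul b)
    refine h.congr_deriv ?_
    ring
  have h3 := h2.exp
  have h4 := h1.mul h3
  refine h4.congr_deriv ?_
  simp [eval_mul, eval_add]
  ring

private lemma tendsto_weighted_top (p : ℝ[X]) (a b : ℝ) (ha : 0 < a) :
    Tendsto (fun y => eval y p * Real.exp (-a/2 * y^2 + b*y)) atTop (nhds 0) := by
  have hdiv := p.tendsto_div_exp_atTop
  have habs : Tendsto (fun y => |eval y p / Real.exp y|) atTop (nhds 0) := by
    have := hdiv.abs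
    simpa using this
  apply squeeze_zero_norm' _ habs
  filter_upwards [eventually_ge_atTop (max 1 (2*(b+1)/a))] with y hy
  have hy1 : (1:ℝ) ≤ y := le_trans (le_max_left _ _) hy
  have hy2 : 2*(b+1)/a ≤ y := le_trans (le_max_right _ _) hy
  have hexp : -a/2 * y^2 + b*y ≤ -y := by
    have h0 : 2*(b+1) ≤ a * y := by
      rw [div_le_iff₀ ha] at hy2; linarith
    nlinarith [sq_nonneg y]
  have hle : Real.exp (-a/2 * y^2 + b*y + y) ≤ 1 := by
    rw [Real.exp_le_one_iff]; linarith
  rw [Real.norm_eq_abs, abs_mul, abs_of_pos (Real.exp_pos _), abs_div, Real.abs_exp,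
    le_div_iff₀ (Real.exp_pos y), mul_assoc, ← Real.exp_add]
  calc |eval y p| * Real.exp (-a/2 * y^2 + b*y + y) ≤ |eval y p| * 1 :=
        mul_le_mul_of_nonneg_left hle (abs_nonneg _)
    _ = |eval y p| := mul_one _

private lemma tendsto_weighted_bot (p : ℝ[X]) (a b : ℝ) (ha : 0 < a) :
    Tendsto (fun y => eval y p * Real.exp (-a/2 * y^2 + b*y)) atBot (nhds 0) := by
  have h := tendsto_weighted_top (p.comp (-X)) a (-b) ha
  have h2 := h.comp tendsto_neg_atBot_atTop
  refine h2.congr fun y => ?_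
  simp only [Function.comp_apply, eval_comp, eval_neg, eval_X]
  ring_nf

section Main
variable {p : ℝ[X]} {a b : ℝ}

/-- big root bound -/
private lemma exists_bound (hp : p ≠ 0) : ∃ B : ℝ, ∀ y, B ≤ y → eval y p ≠ 0 := by
  obtain ⟨B, hB⟩ := Set.Finite.bddAbove (Polynomial.finite_setOf_isRoot hp)
  refine ⟨B + 1, fun y hy hroot => ?_⟩
  have : y ≤ B := hB hroot
  linarith

private lemma exists_bound_below (hp : p ≠ 0) : ∃ B : ℝ, ∀ y, y ≤ B → eval y p ≠ 0 := by
  obtain ⟨B, hB⟩ := Set.Finite.bddBelow (Polynomial.finite_setOf_isRoot hp)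
  refine ⟨B - 1, fun y hy hroot => ?_⟩
  have : B ≤ y := hB hroot
  linarith

/-- existence of root of q above any root of p -/
private lemma root_q_above (ha : 0 < a) (hp : p ≠ 0) {r : ℝ} (hr : eval r p = 0) :
    ∃ w, r < w ∧ eval w (-(C a) * X * p + C b * p + derivative p) = 0 := by
  obtain ⟨B, hB⟩ := exists_bound hp
  set z := max B (r + 1) with hz
  obtain ⟨w, hw, hw0⟩ := rolle_top (hasDeriv_weighted p a b)
    (s := r) (z := z) (lt_of_lt_of_le (by linarith) (le_max_right _ _))
    (by rw [hr, zero_mul]) (by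
      exact mul_ne_zero (hB z (le_max_left _ _)) (Real.exp_ne_zero _))
    (tendsto_weighted_top p a b ha)
  exact ⟨w, hw, by
    rcases mul_eq_zero.mp hw0 with h | h
    · exact h
    · exact absurd h (Real.exp_ne_zero _)⟩

private lemma root_q_below (ha : 0 < a) (hp : p ≠ 0) {r : ℝ} (hr : eval r p = 0) :
    ∃ w, w < r ∧ eval w (-(C a) * X * p + C b * p + derivative p) = 0 := by
  obtain ⟨B, hB⟩ := exists_bound_below hp
  set z := min B (r - 1) with hz
  obtain ⟨w, hw, hw0⟩ := rolle_bot (hasDeriv_weighted p a b)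
    (s := r) (z := z) (lt_of_le_of_lt (min_le_right _ _) (by linarith))
    (by rw [hr, zero_mul]) (by
      exact mul_ne_zero (hB z (min_le_left _ _)) (Real.exp_ne_zero _))
    (tendsto_weighted_bot p a b ha)
  exact ⟨w, hw, by
    rcases mul_eq_zero.mp hw0 with h | h
    · exact h
    · exact absurd h (Real.exp_ne_zero _)⟩

private lemma root_q_exists (ha : 0 < a) (hp : p ≠ 0) :
    ∃ w, eval w (-(C a) * X * p + C b * p + derivative p) = 0 := by
  obtain ⟨B, hB⟩ := exists_bound hp
  obtain ⟨w, hw0⟩ := rolle_both (hasDeriv_weighted p a b)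
    (z := B) (mul_ne_zero (hB B le_rfl) (Real.exp_ne_zero _))
    (tendsto_weighted_top p a b ha) (tendsto_weighted_bot p a b ha)
  exact ⟨w, by
    rcases mul_eq_zero.mp hw0 with h | h
    · exact h
    · exact absurd h (Real.exp_ne_zero _)⟩

private lemma mult_bound (hq : (-(C a) * X * p + C b * p + derivative p) ≠ 0) (r : ℝ) :
    p.rootMultiplicity r - 1 ≤ (-(C a) * X * p + C b * p + derivative p).rootMultiplicity r := by
  set m := p.rootMultiplicity r with hm
  have h1 : (X - C r) ^ (m - 1) ∣ derivative p := by
    by_cases hd : derivative p = 0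
    · rw [hd]; exact dvd_zero _
    · exact (le_rootMultiplicity_iff hd).mp (p.rootMultiplicity_sub_one_le_derivative_rootMultiplicity r)
  have h2 : (X - C r) ^ (m - 1) ∣ p :=
    dvd_trans (pow_dvd_pow _ (Nat.sub_le m 1)) (p.pow_rootMultiplicity_dvd r)
  have h3 : (X - C r) ^ (m - 1) ∣ (-(C a) * X * p + C b * p + derivative p) :=
    dvd_add (dvd_add (h2.mul_left _) (h2.mul_left _)) h1
  exact (le_rootMultiplicity_iff hq).mpr h3

/-- key counting lemma -/
private lemma card_roots_succ (ha : 0 < a) (hp : p ≠ 0)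
    (hq : (-(C a) * X * p + C b * p + derivative p) ≠ 0) :
    Multiset.card p.roots + 1 ≤
      Multiset.card (-(C a) * X * p + C b * p + derivative p).roots := by
  classical
  set q : ℝ[X] := -(C a) * X * p + C b * p + derivative p with hqdef
  set s : Finset ℝ := p.roots.toFinset with hs
  set t : Finset ℝ := q.roots.toFinset with ht
  -- step 1: s.card + 1 ≤ (t \ s).card
  have hst : s.card + 1 ≤ (t \ s).card := by
    rcases s.eq_empty_or_nonempty with hemp | hne
    · -- p has no real roots
      obtain ⟨w, hw⟩ := root_q_exists ha hp (b := b)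
      have hwt : w ∈ t \ s := by
        rw [Finset.mem_sdiff, hemp]
        exact ⟨Multiset.mem_toFinset.mpr ((mem_roots hq).mpr hw), Finset.notMem_empty w⟩
      calc s.card + 1 = 1 := by rw [hemp, Finset.card_empty]
        _ ≤ (t \ s).card := Finset.card_pos.mpr ⟨w, hwt⟩
    · -- s nonempty
      set u : Finset ℝ := s ∪ t with hu
      have hune : u.Nonempty := Finset.Nonempty.mono Finset.subset_union_left hne
      set α : ℝ := u.min' hune - 1 with hα
      set β : ℝ := u.max' hune + 1 with hβ
      have hαu : ∀ w ∈ u, α < w := fun w hw => by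
        have := u.min'_le w hw; simp only [hα]; linarith
      have hβu : ∀ w ∈ u, w < β := fun w hw => by
        have := u.le_max' w hw; simp only [hβ]; linarith
      have hsu : s ⊆ u := Finset.subset_union_left
      have htu : t ⊆ u := Finset.subset_union_right
      have hαs : α ∉ s := fun h => lt_irrefl α (hαu α (hsu h))
      have hβs : β ∉ s := fun h => lt_irrefl β (hβu β (hsu h))
      have hαβ : α < β := by
        obtain ⟨w, hw⟩ := hune
        exact lt_trans (hαu w hw) (hβu w hw)
      set s' : Finset ℝ := insert α (insert β s) with hs'
      have hcard' : s'.card = s.card + 2 := by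
        rw [hs', Finset.card_insert_of_notMem (by
            simp only [Finset.mem_insert]
            push_neg
            exact ⟨ne_of_lt hαβ, hαs⟩),
          Finset.card_insert_of_notMem hβs]
      -- root membership helpers
      have hroot_p : ∀ y ∈ s, eval y p = 0 := fun y hy => by
        have := Multiset.mem_toFinset.mp hy
        exact (isRoot_of_mem_roots this)
      have ht_mem : ∀ w, eval w q = 0 → w ∈ t := fun w hw =>
        Multiset.mem_toFinset.mpr ((mem_roots hq).mpr hw)
      have hinter : ∀ x ∈ s', ∀ y ∈ s', x < y → (∀ z ∈ s', z ∉ Set.Ioo x y) →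
          ∃ z ∈ t, x < z ∧ z < y := by
        intro x hx y hy hxy hgap
        simp only [hs', Finset.mem_insert] at hx hy
        rcases hx with rfl | rfl | hxs
        · -- x = α
          rcases hy with rfl | rfl | hys
          · exact absurd hxy (lt_irrefl _)
          · -- (α, β): impossible since s nonempty inside
            obtain ⟨σ, hσ⟩ := hne
            exact absurd ⟨hαu σ (hsu hσ), hβu σ (hsu hσ)⟩
              (hgap σ (by simp [hs', hσ]))
          · -- x = α, y ∈ s
            obtain ⟨w, hw, hw0⟩ := root_q_below ha hp (b := b) (hroot_p y hys)
            exact ⟨w, ht_mem w hw0, hαu w (htu (ht_mem w hw0)), hw⟩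
        · -- x = β
          have : y < β := by
            rcases hy with rfl | rfl | hys
            · exact absurd hxy (not_lt.mpr (le_of_lt hαβ))
            · exact absurd hxy (lt_irrefl _)
            · exact hβu y (hsu hys)
          exact absurd hxy (not_lt.mpr (le_of_lt this))
        · rcases hy with rfl | rfl | hys
          · exact absurd hxy (not_lt.mpr (le_of_lt (hαu x (hsu hxs))))
          · -- x ∈ s, y = β
            obtain ⟨w, hw, hw0⟩ := root_q_above ha hp (b := b) (hroot_p x hxs)
            exact ⟨w, ht_mem w hw0, hw, hβu w (htu (ht_mem w hw0))⟩
          · -- x, y ∈ s : classical Rolle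
            have hfx : eval x p * Real.exp (-a/2 * x^2 + b*x) = 0 := by
              rw [hroot_p x hxs, zero_mul]
            have hfy : eval y p * Real.exp (-a/2 * y^2 + b*y) = 0 := by
              rw [hroot_p y hys, zero_mul]
            obtain ⟨z, hz, hz0⟩ := exists_hasDerivAt_eq_zero hxy
              (fun w _ => ((hasDeriv_weighted p a b w).continuousAt).continuousWithinAt)
              (hfx.trans hfy.symm)
              (fun w _ => hasDeriv_weighted p a b w)
            have : eval z q = 0 := by
              rcases mul_eq_zero.mp hz0 with h | h
              · exact h
              · exact absurd h (Real.exp_ne_zero _)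
            exact ⟨z, ht_mem z this, hz.1, hz.2⟩
      have h1 := Finset.card_le_diff_of_interleaved hinter
      rw [hcard'] at h1
      have h2 : (t \ s').card ≤ (t \ s).card :=
        Finset.card_le_card (Finset.sdiff_subset_sdiff (le_refl t)
          (Finset.Subset.trans (Finset.subset_insert _ _) (Finset.subset_insert _ _)))
      omega
  -- step 2: counting with multiplicities
  calc Multiset.card p.roots + 1
      = (∑ x ∈ s, p.roots.count x) + 1 := by rw [hs, Multiset.toFinset_sum_count_eq]
    _ = (∑ x ∈ s, (p.roots.count x - 1 + 1)) + 1 := by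
        refine congrArg (· + 1) (Finset.sum_congr rfl fun x hx => ?_).symm
        exact tsub_add_cancel_of_le (Nat.succ_le_iff.2 (Multiset.count_pos.2
          (Multiset.mem_toFinset.1 hx)))
    _ = (∑ x ∈ s, (p.rootMultiplicity x - 1)) + (s.card + 1) := by
        simp only [Finset.sum_add_distrib, Finset.card_eq_sum_ones, count_roots]
        ring
    _ ≤ (∑ x ∈ s, q.rootMultiplicity x) + (t \ s).card :=
        add_le_add (Finset.sum_le_sum fun x _ => mult_bound hq x) hst
    _ ≤ (∑ x ∈ s, q.roots.count x) + (∑ x ∈ t \ s, q.roots.count x) := by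
        refine add_le_add (le_of_eq (Finset.sum_congr rfl fun x _ => by rw [count_roots])) ?_
        rw [Finset.card_eq_sum_ones]
        refine Finset.sum_le_sum fun x hx => Nat.succ_le_iff.2 ?_
        rw [Multiset.count_pos, ← Multiset.mem_toFinset]
        exact (Finset.mem_sdiff.1 hx).1
    _ = ∑ x ∈ s ∪ (t \ s), q.roots.count x :=
        (Finset.sum_union (Finset.disjoint_sdiff)).symm
    _ = ∑ x ∈ t ∪ s, q.roots.count x := by
        rw [Finset.union_comm t s, Finset.union_sdiff_self_eq_union]
    _ = ∑ x ∈ t, q.roots.count x := by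
        refine (Finset.sum_subset Finset.subset_union_left fun x _ hx => ?_).symm
        rwa [Multiset.count_eq_zero, ← Multiset.mem_toFinset]
    _ = Multiset.card q.roots := Multiset.toFinset_sum_count_eq _

end Main

private lemma msum_neg {T : Multiset ℝ} (h0 : T ≠ 0) (h : ∀ t ∈ T, t < 0) : T.sum < 0 := by
  induction T using Multiset.induction with
  | empty => exact absurd rfl h0
  | cons a T ih =>
    rw [Multiset.sum_cons]
    rcases eq_or_ne T 0 with rfl | hT
    · simpa using h a (Multiset.mem_cons_self a 0)
    · have h1 := h a (Multiset.mem_cons_self a T)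
      have h2 := ih hT (fun t ht => h t (Multiset.mem_cons_of_mem ht))
      linarith

private lemma msum_pos {T : Multiset ℝ} (h0 : T ≠ 0) (h : ∀ t ∈ T, 0 < t) : 0 < T.sum := by
  induction T using Multiset.induction with
  | empty => exact absurd rfl h0
  | cons a T ih =>
    rw [Multiset.sum_cons]
    rcases eq_or_ne T 0 with rfl | hT
    · simpa using h a (Multiset.mem_cons_self a 0)
    · have h1 := h a (Multiset.mem_cons_self a T)
      have h2 := ih hT (fun t ht => h t (Multiset.mem_cons_of_mem ht))
      linarith

private lemma msum_re_s9 (T : Multiset ℂ) : T.sum.re = (T.map Complex.re).sum := by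
  induction T using Multiset.induction with
  | empty => simp
  | cons a T ih => simp [Complex.add_re, ih]

private lemma msum_im_s9 (T : Multiset ℂ) : T.sum.im = (T.map Complex.im).sum := by
  induction T using Multiset.induction with
  | empty => simp
  | cons a T ih => simp [Complex.add_im, ih]

private lemma eval_prod_ne_zero (x : ℂ) (T : Multiset ℂ) (hx : ∀ r ∈ T, x ≠ r) :
    eval x ((T.map fun r => X - C r).prod) ≠ 0 := by
  rw [eval_multiset_prod]
  refine Multiset.prod_ne_zero fun h0 => ?_
  rw [Multiset.map_map, Multiset.mem_map] at h0
  obtain ⟨r, hr, hr0⟩ := h0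
  simp only [Function.comp_apply, eval_sub, eval_X, eval_C] at hr0
  exact hx r hr (by linear_combination hr0)

private lemma evalA (x : ℂ) : ∀ (T : Multiset ℂ), (∀ r ∈ T, x ≠ r) →
    eval x (derivative ((T.map fun r => X - C r).prod)) =
      eval x ((T.map fun r => X - C r).prod) * (T.map fun r => (x - r)⁻¹).sum := by
  intro T
  induction T using Multiset.induction with
  | empty => simp
  | cons s T ih =>
    intro h
    have hs : x - s ≠ 0 := sub_ne_zero.mpr (h s (Multiset.mem_cons_self ..))
    have hT := ih fun r hr => h r (Multiset.mem_cons_of_mem hr)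
    simp only [Multiset.map_cons, Multiset.prod_cons, Multiset.sum_cons, derivative_mul,
      derivative_sub, derivative_X, derivative_C, sub_zero, one_mul, eval_add, eval_mul,
      eval_sub, eval_X, eval_C]
    rw [hT]
    field_simp

private lemma evalB (x : ℂ) : ∀ (T : Multiset ℂ), (∀ r ∈ T, x ≠ r) →
    eval x (derivative (derivative ((T.map fun r => X - C r).prod))) =
      eval x ((T.map fun r => X - C r).prod) *
        (((T.map fun r => (x - r)⁻¹).sum)^2 - (T.map fun r => ((x - r)⁻¹)^2).sum) := by
  intro T
  induction T using Multiset.induction with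
  | empty => simp
  | cons s T ih =>
    intro h
    have hs : x - s ≠ 0 := sub_ne_zero.mpr (h s (Multiset.mem_cons_self ..))
    have h' : ∀ r ∈ T, x ≠ r := fun r hr => h r (Multiset.mem_cons_of_mem hr)
    have hT := ih h'
    have hA := evalA x T h'
    simp only [Multiset.map_cons, Multiset.prod_cons, Multiset.sum_cons, derivative_mul,
      derivative_add, derivative_sub, derivative_X, derivative_C, sub_zero, one_mul,
      eval_add, eval_mul, eval_sub, eval_X, eval_C]
    rw [hT, hA]
    field_simp
    ring

private lemma Q_add_ne {a : ℝ} (ha : 0 < a) (R : Multiset ℝ) (x : ℂ)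
    (hside : (∀ r ∈ R, r < x.re) ∨ (∀ r ∈ R, x.re < r)) :
    ((R.map fun r : ℝ => ((x - (r:ℂ))⁻¹)^2).sum + (a:ℂ)) ≠ 0 := by
  rcases eq_or_ne R 0 with rfl | hR
  · simpa using Complex.ofReal_ne_zero.mpr (ne_of_gt ha)
  have hxr : ∀ r ∈ R, x - (r:ℂ) ≠ 0 := by
    intro r hr h0
    have : x = (r:ℂ) := by linear_combination h0
    rcases hside with hside | hside
    · exact absurd (by rw [this, Complex.ofReal_re]) (ne_of_gt (hside r hr))
    · exact absurd (by rw [this, Complex.ofReal_re]) (ne_of_lt (hside r hr))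
  have him_eq : ∀ r ∈ R, (((x - (r:ℂ))⁻¹)^2).im =
      -2 * (x.re - r) * x.im / (Complex.normSq (x - (r:ℂ)))^2 := by
    intro r _
    have hre : (x - (r:ℂ)).re = x.re - r := by simp
    have him : (x - (r:ℂ)).im = x.im := by simp
    rw [pow_two, Complex.mul_im, Complex.inv_re, Complex.inv_im, hre, him]
    ring
  by_cases him : x.im = 0
  · -- real case: real part positive
    intro hcon
    have hrecon := congrArg Complex.re hcon
    rw [Complex.add_re, Complex.zero_re, Complex.ofReal_re, msum_re_s9, Multiset.map_map] at hrecon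
    have hnn : 0 ≤ (R.map (Complex.re ∘ fun r : ℝ => ((x - (r:ℂ))⁻¹)^2)).sum := by
      refine Multiset.sum_nonneg ?_
      intro y hy
      rw [Multiset.mem_map] at hy
      obtain ⟨r, hr, rfl⟩ := hy
      have hne : x.re - r ≠ 0 := by
        rcases hside with hside | hside
        · exact ne_of_gt (sub_pos.mpr (hside r hr))
        · exact ne_of_lt (sub_neg.mpr (hside r hr))
      have hz : x - (r:ℂ) = ((x.re - r : ℝ) : ℂ) := by
        apply Complex.ext <;> simp [him]
      simp only [Function.comp_apply, hz, ← Complex.ofReal_inv, ← Complex.ofReal_pow,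
        Complex.ofReal_re]
      positivity
    linarith
  · -- imaginary part nonzero
    intro hcon
    have himcon := congrArg Complex.im hcon
    rw [Complex.add_im, Complex.zero_im, Complex.ofReal_im, add_zero, msum_im_s9,
      Multiset.map_map] at himcon
    have hmul := congrArg (· * x.im) himcon
    simp only [zero_mul] at hmul
    rw [← Multiset.sum_map_mul_right] at hmul
    have hterm : ∀ r ∈ R,
        (Complex.im ∘ fun r : ℝ => ((x - (r:ℂ))⁻¹)^2) r * x.im =
        -2 * (x.re - r) * x.im^2 / (Complex.normSq (x - (r:ℂ)))^2 := by
      intro r hr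
      simp only [Function.comp_apply, him_eq r hr]
      ring
    rcases hside with hside | hside
    · have : (R.map fun r : ℝ =>
          (Complex.im ∘ fun r : ℝ => ((x - (r:ℂ))⁻¹)^2) r * x.im).sum < 0 := by
        refine msum_neg (by simpa using hR) ?_
        intro y hy
        rw [Multiset.mem_map] at hy
        obtain ⟨r, hr, rfl⟩ := hy
        rw [hterm r hr]
        have h1 : 0 < x.re - r := sub_pos.mpr (hside r hr)
        have h2 : 0 < Complex.normSq (x - (r:ℂ)) := Complex.normSq_pos.mpr (hxr r hr)
        have h3 : x.im ≠ 0 := him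
        have h4 : 0 < 2 * (x.re - r) * x.im^2 / (Complex.normSq (x - (r:ℂ)))^2 := by positivity
        have h5 : -2 * (x.re - r) * x.im^2 / (Complex.normSq (x - (r:ℂ)))^2 =
            -(2 * (x.re - r) * x.im^2 / (Complex.normSq (x - (r:ℂ)))^2) := by ring
        rw [h5]
        linarith
      rw [hmul] at this
      exact absurd rfl (ne_of_lt this)
    · have : 0 < (R.map fun r : ℝ =>
          (Complex.im ∘ fun r : ℝ => ((x - (r:ℂ))⁻¹)^2) r * x.im).sum := by
        refine msum_pos (by simpa using hR) ?_
        intro y hy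
        rw [Multiset.mem_map] at hy
        obtain ⟨r, hr, rfl⟩ := hy
        rw [hterm r hr]
        have h1 : x.re - r < 0 := sub_neg.mpr (hside r hr)
        have h2 : 0 < Complex.normSq (x - (r:ℂ)) := Complex.normSq_pos.mpr (hxr r hr)
        have h3 : x.im ≠ 0 := him
        have h1' : 0 < r - x.re := by linarith
        have h4 : 0 < 2 * (r - x.re) * x.im^2 / (Complex.normSq (x - (r:ℂ)))^2 := by positivity
        have h5 : -2 * (x.re - r) * x.im^2 / (Complex.normSq (x - (r:ℂ)))^2 =
            2 * (r - x.re) * x.im^2 / (Complex.normSq (x - (r:ℂ)))^2 := by ring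
        rw [h5]
        exact h4
      rw [hmul] at this
      exact absurd rfl (ne_of_gt this)

theorem stmt_9 (P : ℕ → ℝ[X]) (a b c : ℝ) (ha : 0 < a) (hc : c ≠ 0)
    (hdeg : ∀ k, (P k).natDegree = k)
    (hP0 : ∃ r : ℝ, r ≠ 0 ∧ P 0 = C r)
    (hrec : ∀ k, P (k + 1) = C c * (-(C a) * X * P k + C b * P k + derivative (P k)))
    (M m : ℕ → ℝ)
    (hM : ∀ k, 1 ≤ k → eval (M k) (P k) = 0 ∧ ∀ r : ℝ, eval r (P k) = 0 → r ≤ M k)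
    (hm : ∀ k, 1 ≤ k → eval (m k) (P k) = 0 ∧ ∀ r : ℝ, eval r (P k) = 0 → m k ≤ r) :
    ∀ k : ℕ, ∀ x : ℂ, (M (k + 1) < x.re ∨ x.re < m (k + 1)) →
      (aeval x (P (k + 1))) ^ 2 - aeval x (P (k + 2)) * aeval x (P k) ≠ 0 := by
  -- nonvanishing
  have hPne : ∀ k, P k ≠ 0 := by
    intro k
    cases k with
    | zero =>
      obtain ⟨r, hr, h0⟩ := hP0
      rw [h0]
      exact fun h => hr (C_eq_zero.mp h)
    | succ n =>
      intro h
      have := hdeg (n + 1)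
      rw [h, natDegree_zero] at this
      exact Nat.succ_ne_zero n this.symm
  -- all roots real (counted with multiplicity)
  have hcard : ∀ k, Multiset.card (P k).roots = k := by
    intro k
    induction k with
    | zero =>
      obtain ⟨r, hr, h0⟩ := hP0
      rw [h0, roots_C]
      rfl
    | succ n ih =>
      have hq : (-(C a) * X * P n + C b * P n + derivative (P n)) ≠ 0 := by
        intro h
        apply hPne (n + 1)
        rw [hrec n, h, mul_zero]
      have h1 : (P (n + 1)).roots = (-(C a) * X * P n + C b * P n + derivative (P n)).roots := by
        rw [hrec n]
        exact roots_C_mul _ hc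
      refine le_antisymm ?_ ?_
      · have hcr := (P (n + 1)).card_roots'
        rw [hdeg (n + 1)] at hcr
        exact hcr
      · rw [h1]
        calc n + 1 = Multiset.card (P n).roots + 1 := by rw [ih]
          _ ≤ _ := card_roots_succ ha (hPne n) hq
  -- roots of P k are separated by roots of P (k+1)
  have hup : ∀ k r, eval r (P k) = 0 → r < M (k + 1) := by
    intro k r hr
    obtain ⟨w, hw, hw0⟩ := root_q_above (b := b) ha (hPne k) hr
    have hwroot : eval w (P (k + 1)) = 0 := by
      rw [hrec k, eval_mul, hw0, mul_zero]
    exact lt_of_lt_of_le hw ((hM (k + 1) (Nat.succ_le_succ (Nat.zero_le k))).2 w hwroot)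
  have hdown : ∀ k r, eval r (P k) = 0 → m (k + 1) < r := by
    intro k r hr
    obtain ⟨w, hw, hw0⟩ := root_q_below (b := b) ha (hPne k) hr
    have hwroot : eval w (P (k + 1)) = 0 := by
      rw [hrec k, eval_mul, hw0, mul_zero]
    exact lt_of_le_of_lt ((hm (k + 1) (Nat.succ_le_succ (Nat.zero_le k))).2 w hwroot) hw
  -- main argument
  intro k x hx
  -- Turán identity
  have key : (P (k+1))^2 - (P (k+2)) * (P k) =
      C c ^ 2 * ((derivative (P k))^2 - (P k) * (derivative (derivative (P k)))
        + C a * (P k)^2) := by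
    rw [hrec (k+1), hrec k]
    simp only [derivative_mul, derivative_add, derivative_neg, derivative_C, derivative_X]
    ring
  have hkey := congrArg (aeval x) key
  simp only [map_sub, map_mul, map_pow, map_add, aeval_C] at hkey
  rw [hkey]
  -- factorization of P k over ℂ
  set p := P k with hp
  set R : Multiset ℝ := p.roots with hR
  have hsplits : p.Splits :=
    splits_iff_card_roots.mpr (by rw [← hR, hcard k, hdeg k])
  have hfac : p = C p.leadingCoeff * (R.map fun r => X - C r).prod :=
    hsplits.eq_prod_roots
  set T : Multiset ℂ := R.map (fun r : ℝ => (r : ℂ)) with hT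
  have hside : (∀ r ∈ R, r < x.re) ∨ (∀ r ∈ R, x.re < r) := by
    rcases hx with hx | hx
    · left
      intro r hr
      exact lt_trans (hup k r (isRoot_of_mem_roots hr)) hx
    · right
      intro r hr
      exact lt_trans hx (hdown k r (isRoot_of_mem_roots hr))
  have hxT : ∀ r ∈ T, x ≠ r := by
    intro r hrT
    rw [hT, Multiset.mem_map] at hrT
    obtain ⟨r0, hr0, rfl⟩ := hrT
    intro h
    rcases hside with hs | hs
    · exact absurd (by rw [h, Complex.ofReal_re]) (ne_of_gt (hs r0 hr0))
    · exact absurd (by rw [h, Complex.ofReal_re]) (ne_of_lt (hs r0 hr0))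
  -- map the factorization to ℂ
  have hmapfac : p.map (algebraMap ℝ ℂ) =
      C ((p.leadingCoeff : ℂ)) * (T.map fun r => X - C r).prod := by
    rw [hT, Multiset.map_map]
    conv_lhs => rw [hfac]
    simp only [Polynomial.map_mul, Polynomial.map_C, Polynomial.map_multiset_prod,
      Multiset.map_map, Function.comp_def, Polynomial.map_sub, Polynomial.map_X,
      Complex.coe_algebraMap]
  set Lc : ℂ := (p.leadingCoeff : ℂ) with hLc
  set Pi : ℂ[X] := (T.map fun r => X - C r).prod with hPi
  set V : ℂ := eval x Pi with hV
  set S : ℂ := (T.map fun r => (x - r)⁻¹).sum with hS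
  set Q : ℂ := (T.map fun r => ((x - r)⁻¹)^2).sum with hQ
  have haev : ∀ q : ℝ[X], aeval x q = eval x (q.map (algebraMap ℝ ℂ)) := fun q =>
    (eval_map _ _).symm
  have hd0 : aeval x p = Lc * V := by
    rw [haev, hmapfac, eval_mul, eval_C]
  have hd1 : aeval x (derivative p) = Lc * (V * S) := by
    rw [haev, ← derivative_map, hmapfac, derivative_mul, derivative_C, zero_mul, zero_add,
      eval_mul, eval_C, evalA x T hxT]
  have hd2 : aeval x (derivative (derivative p)) = Lc * (V * (S^2 - Q)) := by
    rw [haev, ← derivative_map, ← derivative_map, hmapfac, derivative_mul, derivative_C,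
      zero_mul, zero_add, derivative_mul, derivative_C, zero_mul, zero_add,
      eval_mul, eval_C, evalB x T hxT]
  rw [hd0, hd1, hd2]
  have heq : (algebraMap ℝ ℂ) c ^ 2 * ((Lc * (V * S))^2 - Lc * V * (Lc * (V * (S^2 - Q)))
      + (algebraMap ℝ ℂ) a * (Lc * V)^2) =
      ((c:ℂ)^2 * Lc^2 * V^2) * (Q + (a:ℂ)) := by
    simp only [Complex.coe_algebraMap]
    ring
  rw [heq]
  have hQne : Q + (a:ℂ) ≠ 0 := by
    rw [hQ, hT, Multiset.map_map]
    exact Q_add_ne ha R x hside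
  refine mul_ne_zero (mul_ne_zero (mul_ne_zero ?_ ?_) ?_) hQne
  · exact pow_ne_zero _ (Complex.ofReal_ne_zero.mpr hc)
  · exact pow_ne_zero _ (Complex.ofReal_ne_zero.mpr (leadingCoeff_ne_zero.mpr (hPne k)))
  · exact pow_ne_zero _ (eval_prod_ne_zero x T hxT)
end

section
/- Let H_k denote the k-th (physicists') Hermite polynomial, and let M_k be its largest zero. Then for each k ∈ ℕ, the Turán expression (H_{k+1}(x))² − H_{k+2}(x)·H_k(x) is non-zero at every complex x with |Re x| > M_{k+1}. -/
open Polynomial Complex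

set_option linter.unusedSectionVars false
namespace Stmt10

variable {H : ℕ → ℝ[X]}

section Alg
variable (hH0 : H 0 = 1) (hHrec : ∀ k, H (k + 1) = 2 * X * H k - derivative (H k))
include hH0 hHrec

lemma hH1 : H 1 = 2 * X := by
  rw [hHrec 0, hH0]; simp

lemma hderiv : ∀ k : ℕ, derivative (H (k + 1)) = ((2 * k + 2 : ℕ) : ℝ[X]) * H k := by
  intro k
  induction k with
  | zero =>
    rw [hH1 hH0 hHrec, hH0]
    simp
  | succ k ih =>
    rw [hHrec (k + 1), derivative_sub, derivative_mul, ih, derivative_mul]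
    rw [derivative_natCast_mul]
    simp only [derivative_ofNat, derivative_X, mul_one, zero_mul, zero_add]
    push_cast
    linear_combination (-2 * (k : ℝ[X]) - 2) * hHrec k

/-- Turán polynomial -/
noncomputable def T (H : ℕ → ℝ[X]) (k : ℕ) : ℝ[X] :=
  (H (k + 1)) ^ 2 - H (k + 2) * H k

lemma wronskian (k : ℕ) :
    T H k = derivative (H (k + 1)) * H k - derivative (H k) * H (k + 1) := by
  rw [T, hHrec (k + 1)]
  linear_combination (H (k + 1)) * hHrec k

lemma Trec (k : ℕ) :
    T H (k + 1) = ((2 * k + 2 : ℕ) : ℝ[X]) * T H k + 2 * (H (k + 1)) ^ 2 := by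
  rw [wronskian hH0 hHrec (k + 1), hderiv hH0 hHrec (k + 1), hderiv hH0 hHrec k, T]
  push_cast
  ring

lemma T0 : T H 0 = 2 := by
  have h2 : H 2 = 2 * X * (2 * X) - 2 := by
    rw [hHrec 1, hH1 hH0 hHrec]; simp
  rw [T, hH1 hH0 hHrec, h2, hH0]
  ring

lemma Tpos (k : ℕ) (t : ℝ) : 0 < eval t (T H k) := by
  induction k with
  | zero => rw [T0 hH0 hHrec]; simp
  | succ k ih =>
    rw [Trec hH0 hHrec]
    simp only [eval_add, eval_mul, eval_natCast, eval_pow, eval_ofNat]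
    have hc : (0:ℝ) < ((2 * k + 2 : ℕ) : ℝ) := by positivity
    nlinarith [sq_nonneg (eval t (H (k + 1))), ih]

lemma parity : ∀ k : ℕ, (H k).comp (-X) = (-1) ^ k * H k := by
  intro k
  induction k with
  | zero => rw [hH0]; simp
  | succ k ih =>
    have hd : (derivative (H k)).comp (-X) = -derivative ((H k).comp (-X)) := by
      rw [derivative_comp]
      simp
    rw [hHrec k, sub_comp, mul_comp, mul_comp, X_comp, ofNat_comp, hd, ih]
    rw [derivative_mul]
    simp only [derivative_pow, derivative_neg, derivative_one, mul_zero, zero_mul,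
      derivative_ofNat, neg_zero, mul_one]
    ring

lemma parity_eval (k : ℕ) (t : ℝ) : eval (-t) (H k) = (-1) ^ k * eval t (H k) := by
  have := congrArg (eval t) (parity hH0 hHrec k)
  simpa [eval_comp] using this

lemma Hdeg : ∀ k : ℕ, (H k).natDegree ≤ k ∧ (H k).coeff k = 2 ^ k := by
  intro k
  induction k with
  | zero => rw [hH0]; simp
  | succ k ih =>
    obtain ⟨hd, hc⟩ := ih
    constructor
    · rw [hHrec k]
      refine (natDegree_sub_le _ _).trans ?_
      simp only [sup_le_iff, max_le_iff]
      constructor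
      · refine (natDegree_mul_le).trans ?_
        have : (2 * X : ℝ[X]).natDegree ≤ 1 := by
          refine (natDegree_mul_le).trans ?_
          simp
        omega
      · have := natDegree_derivative_le (H k)
        omega
    · rw [hHrec k]
      rw [coeff_sub]
      have h1 : (2 * X * H k).coeff (k + 1) = 2 * (H k).coeff k := by
        rw [mul_assoc, (map_ofNat C 2).symm, coeff_C_mul, coeff_X_mul]
      have h2 : (derivative (H k)).coeff (k + 1) = 0 := by
        apply coeff_eq_zero_of_natDegree_lt
        have := natDegree_derivative_le (H k)
        omega
      rw [h1, h2, hc]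
      ring

lemma HnatDeg (k : ℕ) : (H k).natDegree = k := by
  obtain ⟨hd, hc⟩ := Hdeg hH0 hHrec k
  refine le_antisymm hd (le_natDegree_of_ne_zero ?_)
  rw [hc]; positivity

lemma Hne (k : ℕ) : H k ≠ 0 := by
  intro h
  have := (Hdeg hH0 hHrec k).2
  rw [h] at this
  simp at this
  exact absurd this.symm (by positivity)

lemma HleadingCoeff (k : ℕ) : (H k).leadingCoeff = 2 ^ k := by
  rw [leadingCoeff, HnatDeg hH0 hHrec, (Hdeg hH0 hHrec k).2]

open ComplexConjugate in
lemma aeval_rec (k : ℕ) (z : ℂ) :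
    aeval z (H (k + 2)) = 2 * z * aeval z (H (k + 1)) - ((2 * k + 2 : ℕ) : ℂ) * aeval z (H k) := by
  rw [hHrec (k + 1), hderiv hH0 hHrec k]
  simp only [map_sub, map_mul, map_natCast, aeval_X, map_ofNat]

open ComplexConjugate in
lemma imQ : ∀ k : ℕ, ∀ z : ℂ, 0 < z.im →
    0 < ((aeval z (H (k + 1))) * conj (aeval z (H k))).im := by
  intro k
  induction k with
  | zero =>
    intro z hz
    rw [hH1 hH0 hHrec, hH0]
    simp [Complex.mul_im, map_ofNat]
    nlinarith
  | succ k ih =>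
    intro z hz
    rw [aeval_rec hH0 hHrec k z]
    have hIH := ih z hz
    have hc : (0:ℝ) < ((2 * k + 2 : ℕ) : ℝ) := by positivity
    simp only [Complex.sub_im, Complex.sub_re, Complex.mul_im, Complex.mul_re,
      Complex.conj_re, Complex.conj_im, Complex.re_ofNat, Complex.im_ofNat,
      Complex.natCast_re, Complex.natCast_im] at hIH ⊢
    nlinarith [sq_nonneg ((aeval z (H (k+1))).re), sq_nonneg ((aeval z (H (k+1))).im)]

open ComplexConjugate in
lemma root_real (k : ℕ) (z : ℂ) (hz : z.im ≠ 0) : aeval z (H k) ≠ 0 := by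
  have key : ∀ w : ℂ, 0 < w.im → aeval w (H k) ≠ 0 := by
    intro w hw h0
    match k with
    | 0 => rw [hH0] at h0; simp at h0
    | k + 1 =>
      have := imQ hH0 hHrec k w hw
      rw [h0] at this
      simp at this
  rcases lt_or_gt_of_ne hz with h | h
  · intro h0
    have hconj : aeval (conj z) (H k) = 0 := by
      rw [Polynomial.aeval_conj, h0, map_zero]
    exact key (conj z) (by simpa using h) hconj
  · exact key z h

omit hH0 hHrec in
lemma evalP (p : ℝ[X]) (t : ℝ) :
    eval ((t : ℂ)) (p.map (algebraMap ℝ ℂ)) = ((eval t p : ℝ) : ℂ) := by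
  rw [eval_map, show ((t:ℂ)) = algebraMap ℝ ℂ t from rfl, eval₂_at_apply]
  rfl

omit hH0 hHrec in
lemma evalP' (p : ℝ[X]) (z : ℂ) (hz : z.im = 0) :
    eval z (p.map (algebraMap ℝ ℂ)) = ((eval z.re p : ℝ) : ℂ) := by
  have : z = ((z.re : ℝ) : ℂ) := by
    apply Complex.ext <;> simp [hz]
  rw [this]
  exact evalP p z.re

open ComplexConjugate in
lemma Tne (k : ℕ) (Mv : ℝ) (hroot : ∀ t : ℝ, eval t (H (k + 1)) = 0 → t ≤ Mv)
    (x : ℂ) (hx : Mv < x.re) : aeval x (T H k) ≠ 0 := by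
  classical
  by_cases him : x.im = 0
  · have : aeval x (T H k) = ((eval x.re (T H k) : ℝ) : ℂ) := by
      rw [aeval_def, ← eval_map, evalP' _ _ him]
    rw [this]
    exact_mod_cast (Tpos hH0 hHrec k x.re).ne'
  · -- complex case
    set n := k + 1 with hn
    set P : ℂ[X] := (H n).map (algebraMap ℝ ℂ) with hPdef
    set Pk : ℂ[X] := (H k).map (algebraMap ℝ ℂ) with hPkdef
    have hHnne := Hne hH0 hHrec n
    have hPne : P ≠ 0 := by
      rw [hPdef]
      exact (Polynomial.map_ne_zero_iff (algebraMap ℝ ℂ).injective).mpr hHnne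
    have hPdeg : P.natDegree = n := by rw [hPdef, natDegree_map]; exact HnatDeg hH0 hHrec n
    have hsplits : P.Splits := IsAlgClosed.splits _
    have hcard : P.roots.card = n := by
      rw [← hPdeg, ← splits_iff_card_roots]; exact hsplits
    have hrootsIm : ∀ r ∈ P.roots, r.im = 0 := by
      intro r hr
      by_contra h
      have h1 : aeval r (H n) = 0 := by
        have := isRoot_of_mem_roots hr
        rw [hPdef, IsRoot, eval_map, ← aeval_def] at this
        exact this
      exact root_real hH0 hHrec n r h h1
    have hrootsEval : ∀ r ∈ P.roots, eval r.re (H n) = 0 := by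
      intro r hr
      have := isRoot_of_mem_roots hr
      rw [hPdef, IsRoot, evalP' _ _ (hrootsIm r hr)] at this
      exact_mod_cast this
    have hrootsUB : ∀ r ∈ P.roots, r.re ≤ Mv := fun r hr => hroot _ (hrootsEval r hr)
    have hnodup : P.roots.Nodup := by
      rw [Multiset.nodup_iff_count_le_one]
      intro r
      rw [count_roots]
      by_contra hcnt
      push_neg at hcnt
      have hmem : r ∈ P.roots := by
        rw [mem_roots hPne, IsRoot]
        have h1 : (X - C r) ^ 1 ∣ P := (pow_dvd_pow _ (by omega)).trans (pow_rootMultiplicity_dvd P r)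
        obtain ⟨q, hq⟩ := h1
        rw [hq]; simp
      -- derivative vanishes at r
      have h2 : (X - C r) ^ 2 ∣ P := (pow_dvd_pow _ (by omega)).trans (pow_rootMultiplicity_dvd P r)
      obtain ⟨q, hq⟩ := h2
      have hdev : eval r (derivative P) = 0 := by
        rw [hq, derivative_mul, derivative_pow]
        simp
      have hdevR : eval r.re (derivative (H n)) = 0 := by
        have : derivative P = (derivative (H n)).map (algebraMap ℝ ℂ) := by
          rw [hPdef, derivative_map]
        rw [this, evalP' _ _ (hrootsIm r hmem)] at hdev
        exact_mod_cast hdev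
      have hTzero : eval r.re (T H k) = 0 := by
        rw [wronskian hH0 hHrec k]
        simp only [eval_sub, eval_mul]
        rw [show (k + 1) = n from rfl, hdevR, hrootsEval r hmem]
        simp
      exact absurd hTzero (Tpos hH0 hHrec k r.re).ne'
    -- the finset of roots
    set R : Finset ℂ := P.roots.toFinset with hRdef
    have hRval : R.val = P.roots := by
      rw [hRdef, Multiset.toFinset_val, Multiset.dedup_eq_self.mpr hnodup]
    have hRcard : R.card = n := by
      rw [Finset.card, hRval, hcard]
    have hRmem : ∀ r, r ∈ R ↔ r ∈ P.roots := by
      intro r; rw [hRdef, Multiset.mem_toFinset]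
    have hRne : R.Nonempty := by
      rw [← Finset.card_pos, hRcard]; omega
    -- factorization
    have hfac : P = C P.leadingCoeff * ∏ r ∈ R, (X - C r) := by
      have h1 := hsplits.eq_prod_roots
      rw [Finset.prod_eq_multiset_prod, hRval]
      exact h1
    have hlcne : P.leadingCoeff ≠ 0 := leadingCoeff_ne_zero.mpr hPne
    set Qp : ℂ → ℂ[X] := fun r => C P.leadingCoeff * ∏ s ∈ R.erase r, (X - C s) with hQpdef
    have hPQ : ∀ r ∈ R, P = (X - C r) * Qp r := by
      intro r hr
      rw [hfac, hQpdef]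
      simp only
      rw [← Finset.mul_prod_erase R _ hr]
      ring
    have hQdeg : ∀ r ∈ R, (Qp r).degree < (R.card : WithBot ℕ) := by
      intro r hr
      have h1 : (Qp r).natDegree < R.card := by
        calc (Qp r).natDegree ≤ (C P.leadingCoeff).natDegree + (∏ s ∈ R.erase r, (X - C s)).natDegree :=
              natDegree_mul_le
        _ ≤ 0 + (R.erase r).card := by
              gcongr
              · exact natDegree_C _ |>.le
              · refine natDegree_prod_le _ _ |>.trans ?_
                apply le_of_eq
                rw [Finset.sum_congr rfl fun s _ => natDegree_X_sub_C s]
                simp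
        _ < R.card := by
              simpa using Finset.card_erase_lt_of_mem hr
      calc (Qp r).degree ≤ ((Qp r).natDegree : WithBot ℕ) := degree_le_natDegree
      _ < (R.card : WithBot ℕ) := by exact_mod_cast h1
    -- evaluation of Qp r at r equals derivative of P at r
    have hQreval : ∀ r ∈ R, eval r (Qp r) = eval r (derivative P) := by
      intro r hr
      conv_rhs => rw [hPQ r hr]
      rw [derivative_mul]
      simp
    -- gamma
    set γ : ℂ → ℝ := fun r => eval r.re (H k) / eval r.re (derivative (H n)) with hγdef
    have hTw : ∀ r ∈ R, eval r.re (derivative (H n)) * eval r.re (H k) = eval r.re (T H k) := by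
      intro r hr
      rw [wronskian hH0 hHrec k]
      simp only [eval_sub, eval_mul]
      rw [show (k + 1) = n from rfl, hrootsEval r ((hRmem r).mp hr)]
      ring
    have hdHne : ∀ r ∈ R, eval r.re (derivative (H n)) ≠ 0 := by
      intro r hr h0
      have := hTw r hr
      rw [h0, zero_mul] at this
      exact absurd this.symm (Tpos hH0 hHrec k r.re).ne'
    have hγpos : ∀ r ∈ R, 0 < γ r := by
      intro r hr
      have h1 : γ r = eval r.re (T H k) / (eval r.re (derivative (H n))) ^ 2 := by
        rw [hγdef, ← hTw r hr]
        rw [div_eq_div_iff (hdHne r hr) (pow_ne_zero 2 (hdHne r hr))]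
        ring
      rw [h1]
      exact div_pos (Tpos hH0 hHrec k r.re) (pow_two_pos_of_ne_zero (hdHne r hr))
    have hsre : ∀ s ∈ R, s.im = 0 := fun s hs => hrootsIm s ((hRmem s).mp hs)
    have hdP : derivative P = (derivative (H n)).map (algebraMap ℝ ℂ) := by
      rw [hPdef, derivative_map]
    have hQself : ∀ s ∈ R, eval s (Qp s) = ((eval s.re (derivative (H n)) : ℝ) : ℂ) := by
      intro s hs
      rw [hQreval s hs, hdP, evalP' _ _ (hsre s hs)]
    have hPkdeg : Pk.natDegree = k := by rw [hPkdef, natDegree_map]; exact HnatDeg hH0 hHrec k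
    have hL1 : Pk = ∑ r ∈ R, C ((γ r : ℂ)) * Qp r := by
      apply eq_of_degrees_lt_of_eval_finset_eq R
      · calc Pk.degree ≤ (Pk.natDegree : WithBot ℕ) := degree_le_natDegree
        _ < (R.card : WithBot ℕ) := by
              rw [hPkdeg, hRcard]
              exact_mod_cast (by omega : k < n)
      · refine (degree_sum_le _ _).trans_lt ?_
        rw [Finset.sup_lt_iff (by exact_mod_cast WithBot.bot_lt_coe _)]
        intro r hr
        calc (C ((γ r : ℂ)) * Qp r).degree ≤ (C ((γ r : ℂ))).degree + (Qp r).degree :=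
              degree_mul_le _ _
        _ ≤ 0 + (Qp r).degree := by gcongr; exact degree_C_le
        _ = (Qp r).degree := zero_add _
        _ < _ := hQdeg r hr
      · intro s hs
        rw [hPkdef, evalP' _ _ (hsre s hs), eval_finset_sum]
        rw [Finset.sum_eq_single s]
        · rw [eval_mul, eval_C, hQself s hs, hγdef]
          rw [← Complex.ofReal_mul, div_mul_cancel₀ _ (hdHne s hs)]
        · intro r hr hne
          rw [eval_mul]
          have hz : eval s (Qp r) = 0 := by
            rw [hQpdef]
            simp only [eval_mul, eval_prod]
            apply mul_eq_zero_of_right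
            exact Finset.prod_eq_zero (Finset.mem_erase.mpr ⟨hne.symm, hs⟩) (by simp)
          rw [hz, mul_zero]
        · intro h; exact absurd hs h
    have hdPk : derivative Pk = (derivative (H k)).map (algebraMap ℝ ℂ) := by
      rw [hPkdef, derivative_map]
    have hL2 : (T H k).map (algebraMap ℝ ℂ) = ∑ r ∈ R, C ((γ r : ℂ)) * (Qp r) ^ 2 := by
      have hw : (T H k).map (algebraMap ℝ ℂ) = derivative P * Pk - derivative Pk * P := by
        rw [wronskian hH0 hHrec k, Polynomial.map_sub, Polynomial.map_mul, Polynomial.map_mul,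
          hdP, hdPk]
      rw [hw, hL1, derivative_sum, Finset.mul_sum, Finset.sum_mul, ← Finset.sum_sub_distrib]
      refine Finset.sum_congr rfl fun r hr => ?_
      simp only [derivative_mul, derivative_C, zero_mul, zero_add]
      conv_lhs => rw [hPQ r hr]
      simp only [derivative_mul, derivative_sub, derivative_X, derivative_C, sub_zero, one_mul]
      ring
    have hTx : aeval x (T H k) = ∑ r ∈ R, ((γ r : ℂ)) * (eval x (Qp r)) ^ 2 := by
      rw [aeval_def, ← eval_map, hL2, eval_finset_sum]
      exact Finset.sum_congr rfl fun r hr => by rw [eval_mul, eval_pow, eval_C]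
    have hxr : ∀ r ∈ R, x - r ≠ 0 := by
      intro r hr h0
      have h1 : x = r := sub_eq_zero.mp h0
      exact him (h1 ▸ hsre r hr)
    have hQx : ∀ r ∈ R, eval x (Qp r) ≠ 0 := by
      intro r hr
      rw [hQpdef]
      simp only [eval_mul, eval_prod, eval_sub, eval_X, eval_C]
      apply mul_ne_zero hlcne
      rw [Finset.prod_ne_zero_iff]
      exact fun s hsmem => hxr s (Finset.mem_of_mem_erase hsmem)
    set E : ℂ := eval x P with hEdef
    have hEfac : ∀ r ∈ R, E ^ 2 = (x - r) ^ 2 * (eval x (Qp r)) ^ 2 := by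
      intro r hr
      have : E = (x - r) * eval x (Qp r) := by
        rw [hEdef]
        conv_lhs => rw [hPQ r hr]
        rw [eval_mul, eval_sub, eval_X, eval_C]
      rw [this]; ring
    have him_eq : (aeval x (T H k) * conj (E ^ 2)).im
        = (∑ r ∈ R, γ r * Complex.normSq ((eval x (Qp r)) ^ 2) * (2 * (x.re - r.re))) * (-x.im) := by
      rw [hTx, Finset.sum_mul, Complex.im_sum, Finset.sum_mul]
      refine Finset.sum_congr rfl fun r hr => ?_
      rw [hEfac r hr, map_mul]
      have h2 : ((γ r : ℂ)) * (eval x (Qp r)) ^ 2 *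
            ((starRingEnd ℂ) ((x - r) ^ 2) * (starRingEnd ℂ) ((eval x (Qp r)) ^ 2))
          = ((γ r : ℂ)) * ((eval x (Qp r)) ^ 2 * (starRingEnd ℂ) ((eval x (Qp r)) ^ 2)) *
            (starRingEnd ℂ) ((x - r) ^ 2) := by ring
      rw [h2, Complex.mul_conj]
      have h3 : ((x - r) ^ 2).im = 2 * (x.re - r.re) * x.im := by
        have h4 : (x - r).im = x.im := by simp [Complex.sub_im, hsre r hr]
        rw [sq, Complex.mul_im, h4, Complex.sub_re]
        ring
      have h5 : (((γ r : ℝ) : ℂ) * ((Complex.normSq ((eval x (Qp r)) ^ 2) : ℝ) : ℂ) *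
            (starRingEnd ℂ) ((x - r) ^ 2)).im
          = γ r * Complex.normSq ((eval x (Qp r)) ^ 2) * (-(((x - r) ^ 2).im)) := by
        rw [← Complex.ofReal_mul, Complex.mul_im, Complex.ofReal_re, Complex.ofReal_im,
          Complex.conj_im, Complex.conj_re]
        ring
      rw [h5, h3]
      ring
    have hsum_pos : 0 < ∑ r ∈ R, γ r * Complex.normSq ((eval x (Qp r)) ^ 2) * (2 * (x.re - r.re)) := by
      apply Finset.sum_pos _ hRne
      intro r hr
      have h1 := hγpos r hr
      have h2 : 0 < Complex.normSq ((eval x (Qp r)) ^ 2) := by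
        rw [Complex.normSq_pos]
        exact pow_ne_zero 2 (hQx r hr)
      have h3 : 0 < x.re - r.re := by
        have := hrootsUB r ((hRmem r).mp hr)
        linarith
      positivity
    intro h0
    have hzero : (aeval x (T H k) * conj (E ^ 2)).im = 0 := by
      rw [h0, zero_mul, Complex.zero_im]
    rw [him_eq] at hzero
    rcases mul_eq_zero.mp hzero with h | h
    · exact absurd h hsum_pos.ne'
    · exact him (by linarith [neg_eq_zero.mp h])

lemma Taeval_neg (k : ℕ) (x : ℂ) : aeval (-x) (T H k) = aeval x (T H k) := by
  have hp : ∀ m : ℕ, aeval (-x) (H m) = (-1 : ℂ) ^ m * aeval x (H m) := by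
    intro m
    have h1 := congrArg (aeval x (A := ℂ)) (parity hH0 hHrec m)
    rw [aeval_comp] at h1
    simpa using h1
  simp only [T, map_sub, map_mul, map_pow]
  rw [hp (k + 1), hp (k + 2), hp k]
  have hu : ((-1 : ℂ) ^ (k + 1)) ^ 2 = 1 := by
    rw [← pow_mul, mul_comm (k + 1) 2, pow_mul]
    norm_num
  linear_combination ((aeval x (H (k + 1))) ^ 2 - aeval x (H (k + 2)) * aeval x (H k)) * hu

end Alg

end Stmt10

theorem stmt_10 (H : ℕ → ℝ[X]) (hH0 : H 0 = 1)
    (hHrec : ∀ k, H (k + 1) = 2 * X * H k - derivative (H k))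
    (M : ℕ → ℝ)
    (hM : ∀ k, 1 ≤ k → eval (M k) (H k) = 0 ∧ ∀ r : ℝ, eval r (H k) = 0 → r ≤ M k) :
    ∀ k : ℕ, ∀ x : ℂ, M (k + 1) < |x.re| →
      (aeval x (H (k + 1))) ^ 2 - aeval x (H (k + 2)) * aeval x (H k) ≠ 0 := by
  intro k x hx
  have hroot : ∀ t : ℝ, eval t (H (k + 1)) = 0 → t ≤ M (k + 1) :=
    (hM (k + 1) (Nat.le_add_left 1 k)).2
  have key : (aeval x (H (k + 1))) ^ 2 - aeval x (H (k + 2)) * aeval x (H k)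
      = aeval x (Stmt10.T H k) := by
    rw [Stmt10.T, map_sub, map_mul, map_pow]
  rw [key]
  rcases abs_cases x.re with ⟨he, _⟩ | ⟨he, _⟩
  · exact Stmt10.Tne hH0 hHrec k _ hroot x (he ▸ hx)
  · have hx2 : M (k + 1) < (-x).re := by
      rw [Complex.neg_re]
      linarith [he ▸ hx]
    rw [← Stmt10.Taeval_neg hH0 hHrec k x]
    exact Stmt10.Tne hH0 hHrec k _ hroot (-x) hx2
end

section
/- Let {P_k} be a sequence of real polynomials with deg P_k = k, each having only real non-positive zeros, satisfying x·P_k'(x) − k·P_k(x) = P_{k-1}(x) for all k ≥ 1. Then for every k ∈ ℕ, the Turán expression (P_{k+1}(x))² − P_{k+2}(x)·P_k(x) is weakly Hurwitz stable. -/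
open Polynomial

/-- value of `x·p'(x) − n·p(x)` for `p = ∏ (X − r)` over a multiset of roots. -/
private lemma keyD (x : ℂ) (s : Multiset ℂ) (hs : ∀ z ∈ s, x - z ≠ 0) :
    x * eval x (derivative ((s.map fun r => (X : ℂ[X]) - C r).prod))
      - (Multiset.card s : ℂ) * eval x ((s.map fun r => (X : ℂ[X]) - C r).prod)
    = eval x ((s.map fun r => (X : ℂ[X]) - C r).prod) * (s.map fun r => r / (x - r)).sum := by
  induction s using Multiset.induction_on with
  | empty => simp
  | cons r s ih =>
    have hr : x - r ≠ 0 := hs r (Multiset.mem_cons_self r s)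
    have ih' := ih (fun z hz => hs z (Multiset.mem_cons_of_mem hz))
    simp only [Multiset.map_cons, Multiset.prod_cons, Multiset.sum_cons, Multiset.card_cons]
    rw [derivative_mul]
    simp only [derivative_sub, derivative_X, derivative_C, sub_zero, one_mul, eval_add,
      eval_mul, eval_sub, eval_X, eval_C]
    push_cast
    have hu : (x - r) * (r / (x - r)) = r := mul_div_cancel₀ r hr
    have hinv : (x - r) * (x - r)⁻¹ = 1 := mul_inv_cancel₀ hr
    set A := eval x ((s.map fun r => (X : ℂ[X]) - C r).prod)
    set B := eval x (derivative ((s.map fun r => (X : ℂ[X]) - C r).prod))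
    linear_combination (x - r) * ih' + A * hu - 2*A*r*hinv

/-- value of the Turán combination for `p = ∏ (X − r)`. -/
private lemma keyE (x : ℂ) (s : Multiset ℂ) (hs : ∀ z ∈ s, x - z ≠ 0) :
    x ^ 2 * ((eval x (derivative ((s.map fun r => (X : ℂ[X]) - C r).prod))) ^ 2
        - eval x ((s.map fun r => (X : ℂ[X]) - C r).prod)
          * eval x (derivative (derivative ((s.map fun r => (X : ℂ[X]) - C r).prod))))
      - 2 * x * eval x ((s.map fun r => (X : ℂ[X]) - C r).prod)
          * eval x (derivative ((s.map fun r => (X : ℂ[X]) - C r).prod))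
      + (Multiset.card s : ℂ) * (eval x ((s.map fun r => (X : ℂ[X]) - C r).prod)) ^ 2
    = (eval x ((s.map fun r => (X : ℂ[X]) - C r).prod)) ^ 2
        * (s.map fun r => (r / (x - r)) ^ 2).sum := by
  induction s using Multiset.induction_on with
  | empty => simp
  | cons r s ih =>
    have hr : x - r ≠ 0 := hs r (Multiset.mem_cons_self r s)
    have ih' := ih (fun z hz => hs z (Multiset.mem_cons_of_mem hz))
    simp only [Multiset.map_cons, Multiset.prod_cons, Multiset.sum_cons, Multiset.card_cons]
    simp only [derivative_mul, derivative_add, derivative_sub, derivative_X, derivative_C,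
      sub_zero, one_mul, zero_mul, zero_add, add_zero, eval_add, eval_mul, eval_sub,
      eval_X, eval_C]
    push_cast
    have hu : (x - r) * (r / (x - r)) = r := mul_div_cancel₀ r hr
    have hinv : (x - r) * (x - r)⁻¹ = 1 := mul_inv_cancel₀ hr
    set A := eval x ((s.map fun r => (X : ℂ[X]) - C r).prod)
    set B := eval x (derivative ((s.map fun r => (X : ℂ[X]) - C r).prod))
    set D := eval x (derivative (derivative ((s.map fun r => (X : ℂ[X]) - C r).prod)))
    linear_combination (x - r) ^ 2 * ih' + A ^ 2 * ((x - r) * (r / (x - r)) + r) * hu - 2*A^2*r^2*((x - r)*(x - r)⁻¹ + 1)*hinv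


private lemma sign_re (x : ℂ) (hx : 0 < x.re) (him : x.im = 0) (ρ : ℝ) (hρ : ρ ≤ 0) :
    0 ≤ (((ρ : ℂ) / (x - (ρ:ℂ))) ^ 2).re ∧
      ((((ρ : ℂ) / (x - (ρ:ℂ))) ^ 2).re = 0 → ρ = 0) := by
  have hxeq : x = ((x.re : ℝ) : ℂ) := Complex.ext rfl (by simp [him])
  have hd : x.re - ρ ≠ 0 := by intro h; linarith
  have hcast : ((ρ : ℂ) / (x - (ρ:ℂ))) ^ 2 = (((ρ / (x.re - ρ)) ^ 2 : ℝ) : ℂ) := by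
    rw [hxeq]; norm_cast
  rw [hcast, Complex.ofReal_re]
  refine ⟨by positivity, ?_⟩
  intro h
  have h2 : ρ / (x.re - ρ) = 0 := by
    have := pow_eq_zero_iff (n := 2) (by norm_num) |>.1 h
    exact this
  rw [_root_.div_eq_zero_iff] at h2
  rcases h2 with h2 | h2
  · exact h2
  · exact absurd h2 hd

private lemma sign_im (x : ℂ) (hx : 0 < x.re) (ρ : ℝ) (hρ : ρ ≤ 0) :
    0 ≤ -x.im * ((((ρ:ℂ) / (x - (ρ:ℂ))) ^ 2).im) ∧
      (x.im ≠ 0 → -x.im * ((((ρ:ℂ) / (x - (ρ:ℂ))) ^ 2).im) = 0 → ρ = 0) := by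
  have haρ : 0 < x.re - ρ := by linarith
  set a := x.re with ha
  set b := x.im with hb
  set w : ℂ := x - (ρ:ℂ) with hw
  have hwre : w.re = a - ρ := by simp [hw]; rfl
  have hwim : w.im = b := by simp [hw]; rfl
  have hN : 0 < Complex.normSq w := by
    refine Complex.normSq_pos.2 fun h0 => ?_
    have h1 : w.re = 0 := by rw [h0]; simp
    rw [hwre] at h1
    linarith
  set N := Complex.normSq w with hNdef
  have hure : ((ρ:ℂ)/w).re = ρ * (a - ρ) / N := by
    rw [Complex.div_re, hwre, hwim]
    simp
    try ring
  have huim : ((ρ:ℂ)/w).im = -(ρ * b) / N := by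
    rw [Complex.div_im, hwre, hwim]
    simp
    try ring
  have hterm : (((ρ:ℂ)/w)^2).im = 2 * (ρ*(a-ρ)/N) * (-(ρ*b)/N) := by
    rw [sq, Complex.mul_im, hure, huim]
    ring
  have key : -b * (((ρ:ℂ)/w)^2).im = 2 * b^2 * ρ^2 * (a-ρ) / N^2 := by
    rw [hterm]
    field_simp
  rw [key]
  constructor
  · apply div_nonneg _ (by positivity)
    nlinarith [mul_nonneg (sq_nonneg (b*ρ)) haρ.le]
  · intro hbne h0
    by_contra hρ0
    have h1 : 0 < 2*b^2*ρ^2*(a-ρ)/N^2 := by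
      apply div_pos _ (by positivity)
      have hb2 : 0 < b^2 := by positivity
      have hρ2 : 0 < ρ^2 := by positivity
      nlinarith [mul_pos (mul_pos hb2 hρ2) haρ]
    linarith

theorem stmt_12 (P : ℕ → ℝ[X])
    (hdeg : ∀ k, (P k).natDegree = k)
    -- each P k has only real non-positive zeros
    (hzeros : ∀ k, ∀ z : ℂ, aeval z (P k) = 0 → ∃ r : ℝ, r ≤ 0 ∧ z = (r : ℂ))
    (hrec : ∀ k : ℕ, 1 ≤ k → X * derivative (P k) - (k : ℝ[X]) * P k = P (k - 1)) :
    ∀ k : ℕ, ∀ x : ℂ, 0 < x.re →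
      (aeval x (P (k + 1))) ^ 2 - aeval x (P (k + 2)) * aeval x (P k) ≠ 0 := by
  intro k x hx
  -- set up q := P (k+2) mapped to ℂ
  set f := algebraMap ℝ ℂ
  set q : ℂ[X] := (P (k + 2)).map f with hq
  have hq0 : P (k + 2) ≠ 0 := by
    intro h
    have := hdeg (k + 2)
    rw [h] at this
    simp at this
  have hqne : q ≠ 0 := by
    simpa [hq, Polynomial.map_eq_zero] using hq0
  have hsplit : Splits q := IsAlgClosed.splits q
  have hdq : q.natDegree = k + 2 := by
    rw [hq, natDegree_map_eq_of_injective (algebraMap ℝ ℂ).injective, hdeg]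
  set s : Multiset ℂ := q.roots with hsdef
  have hcard : Multiset.card s = k + 2 := by
    rw [hsdef, ← hdq, ← splits_iff_card_roots]
    exact hsplit
  -- all roots are real and nonpositive
  have hroots : ∀ z ∈ s, ∃ ρ : ℝ, ρ ≤ 0 ∧ z = (ρ : ℂ) := by
    intro z hz
    have hz0 : eval z q = 0 := (mem_roots hqne).1 hz
    have : aeval z (P (k + 2)) = 0 := by
      rwa [aeval_def, ← eval_map]
    exact hzeros (k + 2) z this
  have hxz : ∀ z ∈ s, x - z ≠ 0 := by
    intro z hz h0
    obtain ⟨ρ, hρ, rfl⟩ := hroots z hz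
    have : x.re - ρ = 0 := by
      have := congrArg Complex.re h0
      simpa using this
    linarith
  -- factorization
  set pp : ℂ[X] := (s.map fun r => (X : ℂ[X]) - C r).prod with hpp
  set c : ℂ := q.leadingCoeff with hcdef
  have hc0 : c ≠ 0 := leadingCoeff_ne_zero.2 hqne
  have hfact : q = C c * pp := (C_leadingCoeff_mul_prod_multiset_X_sub_C (splits_iff_card_roots.1 hsplit)).symm
  set A : ℂ := eval x pp with hA
  set B : ℂ := eval x (derivative pp) with hB
  set D : ℂ := eval x (derivative (derivative pp)) with hD
  have hA0 : A ≠ 0 := by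
    rw [hA, hpp, eval_multiset_prod]
    refine Multiset.prod_ne_zero ?_
    intro h0
    rw [Multiset.map_map] at h0
    obtain ⟨z, hz, hz0⟩ := Multiset.mem_map.1 h0
    exact hxz z hz (by simpa using hz0)
  -- evals of q and derivatives
  have hevq : eval x q = c * A := by rw [hfact]; simp [hA]
  have hevq' : eval x (derivative q) = c * B := by
    rw [hfact, derivative_mul]; simp [hB]
  have hevq'' : eval x (derivative (derivative q)) = c * D := by
    rw [hfact, derivative_mul, derivative_C, zero_mul, zero_add, derivative_mul,
      derivative_C, zero_mul, zero_add]
    simp [hD]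
  -- the recurrences, mapped to ℂ
  have h1 : X * derivative (P (k + 2)) - ((k + 2 : ℕ) : ℝ[X]) * P (k + 2) = P (k + 1) :=
    hrec (k + 2) (by omega)
  have h0 : X * derivative (P (k + 1)) - ((k + 1 : ℕ) : ℝ[X]) * P (k + 1) = P k :=
    hrec (k + 1) (by omega)
  have e1 : aeval x (P (k + 1)) = x * (c * B) - (k + 2 : ℂ) * (c * A) := by
    rw [aeval_def, ← eval_map, ← h1]
    simp only [Polynomial.map_sub, Polynomial.map_mul, Polynomial.map_X,
      Polynomial.map_natCast, ← derivative_map, ← hq]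
    rw [eval_sub, eval_mul, eval_mul, eval_X, eval_natCast, hevq, hevq']
    push_cast; ring
  have e2 : aeval x (P (k + 2)) = c * A := by
    rw [aeval_def, ← eval_map, ← hq, hevq]
  have e0 : aeval x (P k) =
      x * (c * B + x * (c * D) - (k + 2 : ℂ) * (c * B))
        - (k + 1 : ℂ) * (x * (c * B) - (k + 2 : ℂ) * (c * A)) := by
    have hPk1 : (P (k + 1)).map f =
        X * derivative q - ((k + 2 : ℕ) : ℂ[X]) * q := by
      rw [← h1]
      simp only [Polynomial.map_sub, Polynomial.map_mul, Polynomial.map_X,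
        Polynomial.map_natCast, ← derivative_map, ← hq]
    rw [aeval_def, ← eval_map, ← h0]
    simp only [Polynomial.map_sub, Polynomial.map_mul, Polynomial.map_X,
      Polynomial.map_natCast, ← derivative_map, show (P (k + 1)).map (algebraMap ℝ ℂ) = _ from hPk1]
    simp only [derivative_sub, derivative_mul, derivative_X, derivative_natCast,
      eval_sub, eval_mul, eval_add, eval_X, eval_natCast, one_mul, zero_mul,
      zero_add, hevq, hevq', hevq'']
    push_cast; ring
  -- the Turán value
  set S : ℂ := (s.map fun r => (r / (x - r)) ^ 2).sum with hS
  have hE := keyE x s hxz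
  rw [← hpp, ← hA, ← hB, ← hD, hcard, ← hS] at hE
  have hT : (aeval x (P (k + 1))) ^ 2 - aeval x (P (k + 2)) * aeval x (P k)
      = c ^ 2 * (A ^ 2 * S) := by
    rw [e1, e2, e0, ← hE]
    push_cast; ring
  rw [hT]
  -- suffices S ≠ 0 or contradiction
  by_cases hS0 : S = 0
  · exfalso
    -- sign argument: S = 0 forces all roots to be 0
    have hterm : ∀ z ∈ s, ∃ ρ : ℝ, ρ ≤ 0 ∧ z = (ρ : ℂ) ∧
        (x - z) ≠ 0 := fun z hz => by
      obtain ⟨ρ, h1', h2'⟩ := hroots z hz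
      exact ⟨ρ, h1', h2', hxz z hz⟩
    have hsum0' : (s.map fun r => ((r / (x - r)) ^ 2 : ℂ)).sum = 0 := by
      rw [← hS]; exact hS0
    have hallzero : ∀ z ∈ s, z = 0 := by
      by_cases him : x.im = 0
      · -- real-part argument
        have hre0 : (s.map fun r : ℂ => (((r / (x - r)) ^ 2 : ℂ)).re).sum = 0 := by
          have h1 : Complex.reAddGroupHom ((s.map fun r : ℂ => ((r / (x - r)) ^ 2 : ℂ)).sum)
              = 0 := by rw [hsum0']; simp
          rw [AddMonoidHom.map_multiset_sum, Multiset.map_map] at h1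
          simpa [Function.comp, Complex.coe_reAddGroupHom] using h1
        have hnn : ∀ t ∈ s.map fun r : ℂ => (((r / (x - r)) ^ 2 : ℂ)).re, 0 ≤ t := by
          intro t ht
          obtain ⟨z, hz, rfl⟩ := Multiset.mem_map.1 ht
          obtain ⟨ρ, hρ, rfl, -⟩ := hterm z hz
          exact (sign_re x hx him ρ hρ).1
        have hz0 := Multiset.all_zero_of_le_zero_le_of_sum_eq_zero hnn hre0
        intro z hz
        obtain ⟨ρ, hρ, rfl, -⟩ := hterm z hz
        have := hz0 _ (Multiset.mem_map_of_mem (fun r : ℂ => (((r / (x - r)) ^ 2 : ℂ)).re) hz)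
        have hρ0 := (sign_re x hx him ρ hρ).2 this
        rw [hρ0]; simp
      · -- imaginary-part argument
        have him0 : (s.map fun r : ℂ => -x.im * (((r / (x - r)) ^ 2 : ℂ)).im).sum = 0 := by
          rw [Multiset.sum_map_mul_left]
          have h2 : (s.map fun r : ℂ => (((r / (x - r)) ^ 2 : ℂ)).im).sum = 0 := by
            have h1 : Complex.imAddGroupHom ((s.map fun r : ℂ => ((r / (x - r)) ^ 2 : ℂ)).sum)
                = 0 := by rw [hsum0']; simp
            rw [AddMonoidHom.map_multiset_sum, Multiset.map_map] at h1
            simpa [Function.comp, Complex.coe_imAddGroupHom] using h1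
          rw [h2, mul_zero]
        have hnn : ∀ t ∈ s.map fun r : ℂ => -x.im * (((r / (x - r)) ^ 2 : ℂ)).im, 0 ≤ t := by
          intro t ht
          obtain ⟨z, hz, rfl⟩ := Multiset.mem_map.1 ht
          obtain ⟨ρ, hρ, rfl, -⟩ := hterm z hz
          exact (sign_im x hx ρ hρ).1
        have hz0 := Multiset.all_zero_of_le_zero_le_of_sum_eq_zero hnn him0
        intro z hz
        obtain ⟨ρ, hρ, rfl, -⟩ := hterm z hz
        have := hz0 _ (Multiset.mem_map_of_mem
          (fun r : ℂ => -x.im * (((r / (x - r)) ^ 2 : ℂ)).im) hz)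
        have hρ0 := (sign_im x hx ρ hρ).2 him this
        rw [hρ0]; simp
    -- then P (k+1) vanishes at x, contradicting hzeros
    have hsum0 : (s.map fun r => r / (x - r)).sum = 0 := by
      refine Multiset.sum_eq_zero ?_
      intro t ht
      obtain ⟨z, hz, rfl⟩ := Multiset.mem_map.1 ht
      rw [hallzero z hz]
      simp
    have hDval := keyD x s hxz
    rw [← hpp, ← hA, ← hB, hcard, hsum0, mul_zero] at hDval
    have : aeval x (P (k + 1)) = 0 := by
      rw [e1]
      push_cast at hDval ⊢
      linear_combination c * hDval
    obtain ⟨ρ, hρ, hxρ⟩ := hzeros (k + 1) x this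
    rw [hxρ, Complex.ofReal_re] at hx
    linarith
  · intro h
    rcases mul_eq_zero.1 h with h' | h'
    · exact (pow_ne_zero 2 hc0) h'
    · rcases mul_eq_zero.1 h' with h'' | h''
      · exact (pow_ne_zero 2 hA0) h''
      · exact hS0 h''
end
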